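/- arXiv:2408.00134 — 10 statements merged into one kernel-verified Lean document; each statement's English description precedes it below -/
import Mathlib

section
/- Let p ≥ 1 and l ≥ 1 be natural numbers. For each i ∈ {1,…,p} let U_i : ℕ → ℝ be a kernel with U_i(0) = 0 and ∑_{n=0}^∞ |U_i(n) − U_i(n+1)| < ∞, and let G_i : ℝ^p → ℝ be continuous. Suppose x : ℕ → ℝ^p satisfies the generalized fractional map recurrence x_i(n) = x_i(0) − ∑_{k=0}^{n−1} G_i(x(k)) · U_i(n−k) for all n ≥ 1 and all i, and that for each m ∈ {1,…,l} the subsequence limits ξ_m = lim_{N→∞} x(Nl+m) exist in ℝ^p. Define S_{i,j+1,l} = ∑_{k=0}^∞ [U_i(lk+j) − U_i(lk+j+1)] for 0 ≤ j < l. Then for every i ∈ {1,…,p} and every m with 0 < m < l: ξ_{m+1,i} − ξ_{m,i} = ∑_{j=0}^{m−1} S_{i,j+1,l} · G_i(ξ_{m−j}) + ∑_{j=m}^{l−1} S_{i,j+1,l} · G_i(ξ_{m−j+l}). -/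
open Filter Finset

/-- The difference equations satisfied by the points of an asymptotic `l`-cycle of a
generalized fractional `p`-dimensional map: for `0 < m < l` and each coordinate `i`,
`ξ_{m+1,i} − ξ_{m,i} = ∑_{j=0}^{m−1} S_{i,j+1,l} G_i(ξ_{m−j}) + ∑_{j=m}^{l−1} S_{i,j+1,l} G_i(ξ_{m−j+l})`,
where `S_{i,j+1,l} = ∑_{k=0}^∞ [U_i(lk+j) − U_i(lk+j+1)]`. -/
theorem generalized_fractional_map_cycle_differences
    (p l : ℕ) (hp : 1 ≤ p) (hl : 1 ≤ l)
    (U : Fin p → ℕ → ℝ)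
    (hU0 : ∀ i, U i 0 = 0)
    (hUdiff : ∀ i, Summable fun n => |U i n - U i (n + 1)|)
    (G : Fin p → (Fin p → ℝ) → ℝ)
    (hG : ∀ i, Continuous (G i))
    (x : ℕ → Fin p → ℝ)
    (hrec : ∀ i, ∀ n, 1 ≤ n →
      x n i = x 0 i - ∑ k ∈ Finset.range n, G i (x k) * U i (n - k))
    (ξ : ℕ → Fin p → ℝ)
    (hξ : ∀ m, 1 ≤ m → m ≤ l →
      Tendsto (fun N => x (N * l + m)) atTop (nhds (ξ m))) :
    ∀ i, ∀ m, 0 < m → m < l →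
      ξ (m + 1) i - ξ m i =
        (∑ j ∈ Finset.range m,
          (∑' k : ℕ, (U i (l * k + j) - U i (l * k + j + 1))) * G i (ξ (m - j)))
        + ∑ j ∈ Finset.Ico m l,
          (∑' k : ℕ, (U i (l * k + j) - U i (l * k + j + 1))) * G i (ξ (m + l - j)) := by
  intro i m hm0 hml
  set d : ℕ → ℝ := fun j => U i j - U i (j + 1) with hd
  -- the recurrence holds for `n = 0` as well
  have hrec0 : ∀ n, x n i = x 0 i - ∑ k ∈ Finset.range n, G i (x k) * U i (n - k) := by
    intro n
    rcases Nat.eq_zero_or_pos n with h | h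
    · subst h; simp
    · exact hrec i n h
  -- difference formula
  have hA : ∀ n, x (n + 1) i - x n i = ∑ j ∈ Finset.range (n + 1), G i (x (n - j)) * d j := by
    intro n
    have h1 : ∑ j ∈ Finset.range (n + 1), G i (x (n - j)) * U i (j + 1)
        = ∑ k ∈ Finset.range (n + 1), G i (x k) * U i (n + 1 - k) := by
      rw [← Finset.sum_range_reflect]
      refine Finset.sum_congr rfl fun k hk => ?_
      rw [Finset.mem_range] at hk
      have e1 : n - (n + 1 - 1 - k) = k := by omega
      have e2 : (n + 1 - 1 - k) + 1 = n + 1 - k := by omega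
      rw [e1, e2]
    have h2 : ∑ j ∈ Finset.range (n + 1), G i (x (n - j)) * U i j
        = ∑ k ∈ Finset.range n, G i (x k) * U i (n - k) := by
      rw [Finset.sum_range_succ']
      simp only [Nat.sub_zero, hU0 i, mul_zero, add_zero]
      rw [← Finset.sum_range_reflect]
      refine Finset.sum_congr rfl fun k hk => ?_
      rw [Finset.mem_range] at hk
      have e1 : n - (n - 1 - k + 1) = k := by omega
      have e2 : (n - 1 - k) + 1 = n - k := by omega
      rw [e1, e2]
    calc x (n + 1) i - x n i
        = (∑ k ∈ Finset.range n, G i (x k) * U i (n - k))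
            - ∑ k ∈ Finset.range (n + 1), G i (x k) * U i (n + 1 - k) := by
          rw [hrec0 (n + 1), hrec0 n]; ring
      _ = ∑ j ∈ Finset.range (n + 1), G i (x (n - j)) * d j := by
          rw [← h1, ← h2, ← Finset.sum_sub_distrib]
          exact Finset.sum_congr rfl fun j _ => by rw [hd]; ring
  -- a uniform bound for `|G i (x n)|`
  obtain ⟨C, hC0, hC⟩ : ∃ C, 0 ≤ C ∧ ∀ n, |G i (x n)| ≤ C := by
    have hb : ∀ r : Fin l, ∃ C, ∀ N, |G i (x (N * l + ((r : ℕ) + 1)))| ≤ C := by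
      intro r
      have ht : Tendsto (fun N => |G i (x (N * l + ((r : ℕ) + 1)))|) atTop
          (nhds |G i (ξ ((r : ℕ) + 1))|) :=
        (((hG i).tendsto _).comp (hξ ((r : ℕ) + 1) (by omega) (by have := r.2; omega))).abs
      obtain ⟨C, hC⟩ := ht.bddAbove_range
      exact ⟨C, fun N => hC (Set.mem_range_self N)⟩
    choose Cf hCf using hb
    haveI : Nonempty (Fin l) := ⟨⟨0, by omega⟩⟩
    refine ⟨max |G i (x 0)| (Finset.univ.sup' Finset.univ_nonempty Cf),
      le_trans (abs_nonneg _) (le_max_left _ _), fun n => ?_⟩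
    rcases Nat.eq_zero_or_pos n with h | h
    · subst h; exact le_max_left _ _
    · have hmod := Nat.div_add_mod (n - 1) l
      have hcomm : ((n - 1) / l) * l = l * ((n - 1) / l) := Nat.mul_comm _ _
      have hlt : (n - 1) % l < l := Nat.mod_lt _ (by omega)
      have hn : n = ((n - 1) / l) * l + ((n - 1) % l + 1) := by omega
      rw [hn]
      refine le_trans (hCf ⟨(n - 1) % l, hlt⟩ ((n - 1) / l)) (le_trans ?_ (le_max_right _ _))
      exact Finset.le_sup' _ (Finset.mem_univ _)
  -- the bound on `|G i (ξ s)|`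
  have hCξ : ∀ s, 1 ≤ s → s ≤ l → |G i (ξ s)| ≤ C := by
    intro s h1 h2
    exact le_of_tendsto ((((hG i).tendsto _).comp (hξ s h1 h2)).abs)
      (Eventually.of_forall fun N => hC _)
  have hBsum : Summable fun j => C * |d j| := (hUdiff i).mul_left C
  set F : ℕ → ℕ → ℝ :=
    fun N j => if j < N * l + m + 1 then G i (x (N * l + m - j)) * d j else 0 with hF
  set g : ℕ → ℝ := fun j =>
    (if j % l < m then G i (ξ (m - j % l)) else G i (ξ (m + l - j % l))) * d j with hg
  -- pointwise convergence
  have hlim : ∀ j, Tendsto (fun N => F N j) atTop (nhds (g j)) := by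
    intro j
    obtain ⟨q, r, hrl, hj, hqr⟩ : ∃ q r, r < l ∧ j = q * l + r ∧ j % l = r :=
      ⟨j / l, j % l, Nat.mod_lt _ (by omega), (Nat.div_add_mod' j l).symm, rfl⟩
    by_cases hcase : r < m
    · have heq : ∀ᶠ N in atTop, G i (x ((N - q) * l + (m - r))) * d j = F N j := by
        filter_upwards [eventually_ge_atTop q] with N hN
        have hql : q * l ≤ N * l := Nat.mul_le_mul_right _ hN
        have hsub : (N - q) * l = N * l - q * l := Nat.sub_mul _ _ _
        have hjlt : j < N * l + m + 1 := by omega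
        have harg : N * l + m - j = (N - q) * l + (m - r) := by omega
        simp only [hF]
        rw [if_pos hjlt, harg]
      have h1 : Tendsto (fun N => x ((N - q) * l + (m - r))) atTop (nhds (ξ (m - r))) :=
        (hξ (m - r) (by omega) (by omega)).comp (tendsto_sub_atTop_nat q)
      have h2 := (((hG i).tendsto _).comp h1).mul_const (d j)
      refine Tendsto.congr' heq ?_
      simp only [hg]
      rw [hqr, if_pos hcase]
      exact h2
    · have heq : ∀ᶠ N in atTop, G i (x ((N - (q + 1)) * l + (m + l - r))) * d j = F N j := by
        filter_upwards [eventually_ge_atTop (q + 1)] with N hN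
        have hql : (q + 1) * l ≤ N * l := Nat.mul_le_mul_right _ hN
        have hsm : (q + 1) * l = q * l + l := by ring
        have hsub : (N - (q + 1)) * l = N * l - (q + 1) * l := Nat.sub_mul _ _ _
        have hjlt : j < N * l + m + 1 := by omega
        have harg : N * l + m - j = (N - (q + 1)) * l + (m + l - r) := by omega
        simp only [hF]
        rw [if_pos hjlt, harg]
      have h1 : Tendsto (fun N => x ((N - (q + 1)) * l + (m + l - r))) atTop
          (nhds (ξ (m + l - r))) :=
        (hξ (m + l - r) (by omega) (by omega)).comp (tendsto_sub_atTop_nat (q + 1))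
      have h2 := (((hG i).tendsto _).comp h1).mul_const (d j)
      refine Tendsto.congr' heq ?_
      simp only [hg]
      rw [hqr, if_neg hcase]
      exact h2
  -- uniform bound
  have hboundF : ∀ N j, ‖F N j‖ ≤ C * |d j| := by
    intro N j
    simp only [hF, Real.norm_eq_abs]
    split_ifs with h
    · rw [abs_mul]
      exact mul_le_mul_of_nonneg_right (hC _) (abs_nonneg _)
    · simpa using mul_nonneg hC0 (abs_nonneg (d j))
  have hmain : Tendsto (fun N => ∑' j, F N j) atTop (nhds (∑' j, g j)) :=
    tendsto_tsum_of_dominated_convergence hBsum hlim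
      (Eventually.of_forall fun N => hboundF N)
  -- identify the partial sums
  have hts : ∀ N, ∑' j, F N j = x (N * l + m + 1) i - x (N * l + m) i := by
    intro N
    have hz : ∀ j ∉ Finset.range (N * l + m + 1), F N j = 0 := by
      intro j hj
      rw [Finset.mem_range] at hj
      simp only [hF]
      rw [if_neg hj]
    rw [tsum_eq_sum hz, hA (N * l + m)]
    refine Finset.sum_congr rfl fun j hj => ?_
    rw [Finset.mem_range] at hj
    simp only [hF]
    rw [if_pos hj]
  have hL : Tendsto (fun N => x (N * l + m + 1) i - x (N * l + m) i) atTop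
      (nhds (ξ (m + 1) i - ξ m i)) := by
    have h1 := tendsto_pi_nhds.mp (hξ (m + 1) (by omega) (by omega)) i
    have h2 := tendsto_pi_nhds.mp (hξ m (by omega) (by omega)) i
    exact h1.sub h2
  have hkey : ξ (m + 1) i - ξ m i = ∑' j, g j :=
    tendsto_nhds_unique hL (hmain.congr hts)
  -- summability of `g`
  have hjl : ∀ j : ℕ, j % l < l := fun j => Nat.mod_lt _ (by omega)
  have hgb : ∀ j, |g j| ≤ C * |d j| := by
    intro j
    simp only [hg]
    rw [abs_mul]
    refine mul_le_mul_of_nonneg_right ?_ (abs_nonneg _)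
    have := hjl j
    split_ifs with h
    · exact hCξ _ (by omega) (by omega)
    · exact hCξ _ (by omega) (by omega)
  have hg_sum : Summable g :=
    (Summable.of_nonneg_of_le (fun j => abs_nonneg _) hgb hBsum).of_abs
  have hcol : ∀ r : Fin l, Summable fun q : ℕ => g (q * l + (r : ℕ)) := by
    intro r
    refine hg_sum.comp_injective fun a b hab => ?_
    have hab' : a * l + (r : ℕ) = b * l + (r : ℕ) := hab
    have h2 : a * l = b * l := by omega
    exact Nat.eq_of_mul_eq_mul_right (by omega) h2
  haveI : NeZero l := ⟨by omega⟩
  have h0 : ∑' j, g j = ∑' q : ℕ × Fin l, g (q.1 * l + (q.2 : ℕ)) := by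
    rw [← Equiv.tsum_eq (Nat.divModEquiv l).symm g]
    exact tsum_congr fun q => by rw [Nat.divModEquiv_symm_apply]
  have hps : Summable fun q : ℕ × Fin l => g (q.1 * l + (q.2 : ℕ)) :=
    (Nat.divModEquiv l).symm.summable_iff.mpr hg_sum
  have h1 : ∑' q : ℕ × Fin l, g (q.1 * l + (q.2 : ℕ))
      = ∑' (q : ℕ) (r : Fin l), g (q * l + (r : ℕ)) :=
    Summable.tsum_prod' hps fun q => (hasSum_fintype _).summable
  have h2 : ∑' (q : ℕ) (r : Fin l), g (q * l + (r : ℕ))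
      = ∑' q : ℕ, ∑ r : Fin l, g (q * l + (r : ℕ)) :=
    tsum_congr fun q => tsum_fintype _
  have h3 : ∑' q : ℕ, ∑ r : Fin l, g (q * l + (r : ℕ))
      = ∑ r : Fin l, ∑' q : ℕ, g (q * l + (r : ℕ)) :=
    Summable.tsum_finsetSum fun r _ => hcol r
  have hcolval : ∀ r : Fin l, ∑' q : ℕ, g (q * l + (r : ℕ))
      = (∑' k : ℕ, (U i (l * k + (r : ℕ)) - U i (l * k + (r : ℕ) + 1))) *
        (if (r : ℕ) < m then G i (ξ (m - (r : ℕ))) else G i (ξ (m + l - (r : ℕ)))) := by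
    intro r
    have hval : ∀ q : ℕ, g (q * l + (r : ℕ))
        = (U i (l * q + (r : ℕ)) - U i (l * q + (r : ℕ) + 1)) *
          (if (r : ℕ) < m then G i (ξ (m - (r : ℕ))) else G i (ξ (m + l - (r : ℕ)))) := by
      intro q
      simp only [hg, hd]
      rw [Nat.mul_add_mod_of_lt r.2, mul_comm, Nat.mul_comm q l]
    rw [tsum_congr hval, tsum_mul_right]
  rw [hkey, h0, h1, h2, h3]
  have h4 : ∑ r : Fin l, ∑' q : ℕ, g (q * l + (r : ℕ))
      = ∑ k ∈ Finset.range l,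
        (∑' q : ℕ, (U i (l * q + k) - U i (l * q + k + 1))) *
          (if k < m then G i (ξ (m - k)) else G i (ξ (m + l - k))) := by
    rw [← Fin.sum_univ_eq_sum_range]
    exact Finset.sum_congr rfl fun r _ => hcolval r
  rw [h4, Finset.range_eq_Ico, ← Finset.sum_Ico_consecutive _ (Nat.zero_le m) (le_of_lt hml),
    ← Finset.range_eq_Ico]
  congr 1
  · exact Finset.sum_congr rfl fun k hk => by
      rw [Finset.mem_range] at hk
      rw [if_pos hk]
  · exact Finset.sum_congr rfl fun k hk => by
      rw [Finset.mem_Ico] at hk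
      rw [if_neg (by omega)]
end

section
/- Let p ≥ 1 and l ≥ 1 be natural numbers. For each i ∈ {1,…,p} let U_i : ℕ → ℝ be a kernel with U_i(0) = 0, U_i(n) ≥ 0 for all n, ∑_{n=0}^∞ |U_i(n) − U_i(n+1)| < ∞, and partial sums ∑_{n=1}^N U_i(n) → +∞ as N → ∞, and let G_i : ℝ^p → ℝ be continuous. Suppose x : ℕ → ℝ^p satisfies the generalized fractional map recurrence x_i(n) = x_i(0) − ∑_{k=0}^{n−1} G_i(x(k)) · U_i(n−k) for all n ≥ 1 and all i, and that for each m ∈ {1,…,l} the subsequence limits ξ_m = lim_{N→∞} x(Nl+m) exist in ℝ^p. Then for every i ∈ {1,…,p}: ∑_{j=1}^{l} G_i(ξ_j) = 0. -/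
open Filter Finset

private lemma Icc_one_sum' (g : ℕ → ℝ) : ∀ l : ℕ, ∑ m ∈ Finset.Icc 1 l, g m = ∑ k ∈ Finset.range l, g (k+1) := by
  intro l
  induction l with
  | zero => simp
  | succ l ih => rw [Finset.sum_Icc_succ_top (by omega : 1 ≤ l+1), ih, Finset.sum_range_succ]

private lemma sum_blocks' (l : ℕ) (f : ℕ → ℝ) :
    ∀ Q : ℕ, ∑ k ∈ Finset.range (Q*l+1), f k
      = f 0 + ∑ j ∈ Finset.range Q, ∑ m ∈ Finset.Icc 1 l, f (j*l+m) := by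
  intro Q
  induction Q with
  | zero => simp
  | succ Q ih =>
    have h1 : (Q+1)*l+1 = (Q*l+1) + l := by ring
    have h2 : ∑ k ∈ Finset.range l, f (Q*l+1+k) = ∑ m ∈ Finset.Icc 1 l, f (Q*l+m) := by
      rw [Icc_one_sum']
      apply Finset.sum_congr rfl
      intro k _
      congr 1
      omega
    rw [h1, Finset.sum_range_add, ih, Finset.sum_range_succ, h2]
    ring

private lemma swap_sum' (a U : ℕ → ℝ) :
    ∀ N : ℕ, ∑ n ∈ Finset.Icc 1 N, (∑ k ∈ Finset.range n, a k * U (n - k))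
      = ∑ k ∈ Finset.range N, a k * (∑ j ∈ Finset.Icc 1 (N - k), U j) := by
  intro N
  induction N with
  | zero => simp
  | succ N ih =>
    have h1 : ∀ k ∈ Finset.range N, a k * (∑ j ∈ Finset.Icc 1 (N+1-k), U j)
        = a k * (∑ j ∈ Finset.Icc 1 (N-k), U j) + a k * U (N+1-k) := by
      intro k hk
      have hk' : k < N := Finset.mem_range.mp hk
      have h2 : N + 1 - k = (N - k) + 1 := by omega
      rw [h2, Finset.sum_Icc_succ_top (by omega : 1 ≤ N - k + 1), mul_add]
    have h3 : N + 1 - N = 1 := by omega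
    calc ∑ n ∈ Finset.Icc 1 (N+1), (∑ k ∈ Finset.range n, a k * U (n - k))
        = (∑ n ∈ Finset.Icc 1 N, ∑ k ∈ Finset.range n, a k * U (n - k))
          + ∑ k ∈ Finset.range (N+1), a k * U (N+1-k) :=
          Finset.sum_Icc_succ_top (by omega) _
      _ = (∑ k ∈ Finset.range N, a k * (∑ j ∈ Finset.Icc 1 (N-k), U j))
          + (∑ k ∈ Finset.range N, a k * U (N+1-k) + a N * U (N+1-N)) := by
          rw [ih, Finset.sum_range_succ]
      _ = ∑ k ∈ Finset.range N, (a k * (∑ j ∈ Finset.Icc 1 (N-k), U j) + a k * U (N+1-k))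
          + a N * (∑ j ∈ Finset.Icc 1 1, U j) := by
          rw [Finset.sum_add_distrib, h3]; simp; ring
      _ = ∑ k ∈ Finset.range N, a k * (∑ j ∈ Finset.Icc 1 (N+1-k), U j)
          + a N * (∑ j ∈ Finset.Icc 1 (N+1-N), U j) := by
          rw [Finset.sum_congr rfl h1, h3]
      _ = ∑ k ∈ Finset.range (N+1), a k * (∑ j ∈ Finset.Icc 1 (N+1-k), U j) :=
          (Finset.sum_range_succ _ _).symm

private lemma bound_of_tendsto' (f : ℕ → ℝ) (L : ℝ) (h : Tendsto f atTop (nhds L)) :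
    ∃ C, ∀ N, |f N| ≤ C := by
  obtain ⟨C, hC⟩ := (h.abs.bddAbove_range)
  exact ⟨C, fun N => hC (Set.mem_range_self N)⟩

private lemma bounded_of_residues' (l : ℕ) (hl : 1 ≤ l) (f : ℕ → ℝ)
    (h : ∀ m, 1 ≤ m → m ≤ l → ∃ C, ∀ N, |f (N * l + m)| ≤ C) :
    ∃ C, ∀ n, |f n| ≤ C := by
  have h' : ∀ m : ℕ, ∃ C, 1 ≤ m → m ≤ l → ∀ N, |f (N*l+m)| ≤ C := by
    intro m
    by_cases hm : 1 ≤ m ∧ m ≤ l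
    · obtain ⟨C, hC⟩ := h m hm.1 hm.2
      exact ⟨C, fun _ _ => hC⟩
    · exact ⟨0, fun h1 h2 => absurd ⟨h1, h2⟩ hm⟩
  choose Cf hCf using h'
  have hne : (Finset.Icc 1 l).Nonempty := Finset.nonempty_Icc.mpr hl
  refine ⟨max |f 0| ((Finset.Icc 1 l).sup' hne Cf), fun n => ?_⟩
  rcases Nat.eq_zero_or_pos n with rfl | hn
  · exact le_max_left _ _
  · have hdecomp : ∃ N m, 1 ≤ m ∧ m ≤ l ∧ N * l + m = n := by
      refine ⟨(n-1)/l, (n-1) % l + 1, by omega, ?_, ?_⟩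
      · have h3 : (n-1) % l < l := Nat.mod_lt _ (by omega)
        omega
      · have h1 := Nat.div_add_mod (n-1) l
        have h2 : (n-1)/l*l = l*((n-1)/l) := Nat.mul_comm _ _
        omega
    obtain ⟨N, m, hm1, hm2, rfl⟩ := hdecomp
    have hb := hCf m hm1 hm2 N
    have hle : Cf m ≤ (Finset.Icc 1 l).sup' hne Cf :=
      Finset.le_sup' Cf (Finset.mem_Icc.mpr ⟨hm1, hm2⟩)
    exact le_trans hb (le_trans hle (le_max_right _ _))


set_option maxHeartbeats 1000000 in
private lemma core_lemma (l : ℕ) (hl : 1 ≤ l) (a U : ℕ → ℝ) (M B C S : ℝ)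
    (hM : ∀ k, |a k| ≤ M)
    (hC : 0 ≤ C)
    (hU : ∀ n, 0 ≤ U n) (hB : ∀ n, U n ≤ B)
    (hdiv : Tendsto (fun N => ∑ j ∈ Finset.Icc 1 N, U j) atTop atTop)
    (hsig : Tendsto (fun N => ∑ m ∈ Finset.Icc 1 l, a (N * l + m)) atTop (nhds S))
    (hS : 0 < S)
    (hT : ∀ N : ℕ, |∑ k ∈ Finset.range N, a k * (∑ j ∈ Finset.Icc 1 (N - k), U j)| ≤ C * N)
    (sum_blocks : ∀ (f : ℕ → ℝ) (Q : ℕ), ∑ k ∈ Finset.range (Q*l+1), f k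
      = f 0 + ∑ j ∈ Finset.range Q, ∑ m ∈ Finset.Icc 1 l, f (j*l+m)) :
    False := by
  classical
  set V : ℕ → ℝ := fun N => ∑ j ∈ Finset.Icc 1 N, U j with hVdef
  have hM0 : 0 ≤ M := le_trans (abs_nonneg _) (hM 0)
  have hB0 : 0 ≤ B := le_trans (hU 0) (hB 0)
  have hl0 : (0:ℝ) ≤ (l:ℝ) := Nat.cast_nonneg l
  have hl1 : (1:ℝ) ≤ (l:ℝ) := by exact_mod_cast hl
  have hVnn : ∀ N, 0 ≤ V N := fun N => Finset.sum_nonneg fun j _ => hU j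
  have hVmono : ∀ {M' N : ℕ}, M' ≤ N → V M' ≤ V N := by
    intro M' N h
    exact Finset.sum_le_sum_of_subset_of_nonneg
      (Finset.Icc_subset_Icc_right h) (fun j _ _ => hU j)
  have hVgap : ∀ M' N : ℕ, M' ≤ N → V N ≤ V M' + ((N - M' : ℕ) : ℝ) * B := by
    intro M' N h
    have hsplit : V M' + ∑ j ∈ Finset.Ioc M' N, U j = V N := by
      simp only [hVdef]
      rw [show Finset.Icc 1 M' = Finset.Ioc 0 M' from by rw [← Finset.Icc_add_one_left_eq_Ioc]; rfl,
          show Finset.Icc 1 N = Finset.Ioc 0 N from by rw [← Finset.Icc_add_one_left_eq_Ioc]; rfl]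
      exact Finset.sum_Ioc_consecutive U (Nat.zero_le M') h
    have hbound : ∑ j ∈ Finset.Ioc M' N, U j ≤ ((N - M' : ℕ) : ℝ) * B := by
      calc ∑ j ∈ Finset.Ioc M' N, U j ≤ (Finset.Ioc M' N).card • B :=
            Finset.sum_le_card_nsmul _ _ _ (fun j _ => hB j)
        _ = ((N - M' : ℕ) : ℝ) * B := by rw [Nat.card_Ioc, nsmul_eq_mul]
    linarith
  have hVle : ∀ N : ℕ, V N ≤ (N : ℝ) * B := by
    intro N
    have h0 : V 0 = 0 := by simp [hVdef]
    have := hVgap 0 N (Nat.zero_le N)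
    simpa [h0] using this
  -- threshold J for block sums
  have hhalf : ∀ᶠ j in atTop, S / 2 ≤ ∑ m ∈ Finset.Icc 1 l, a (j * l + m) :=
    hsig.eventually (eventually_ge_nhds (by linarith))
  obtain ⟨J, hJ⟩ := eventually_atTop.mp hhalf
  have hJ0 : (0:ℝ) ≤ (J:ℝ) := Nat.cast_nonneg J
  -- constants
  set K1 : ℝ := 2*C*l + 2*(1+(J:ℝ)*l)*M*B*l + M*l*l*B with hK1def
  have hK1 : 0 ≤ K1 := by
    have t1 : (0:ℝ) ≤ 2*C*l := by positivity
    have t2 : (0:ℝ) ≤ 2*(1+(J:ℝ)*l)*M*B*l := by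
      apply mul_nonneg (mul_nonneg (mul_nonneg (by nlinarith) hM0) hB0) hl0
    have t3 : (0:ℝ) ≤ M*l*l*B := by
      exact mul_nonneg (mul_nonneg (mul_nonneg hM0 hl0) hl0) hB0
    rw [hK1def]; linarith
  set A : ℝ := (2*K1+1) * 2 / S with hAdef
  have hA : S/2 * A = 2*K1+1 := by
    rw [hAdef]; field_simp
  -- threshold t0 for V (t*l+1) ≥ A
  have hmono : Tendsto (fun t : ℕ => t * l + 1) atTop atTop := by
    apply tendsto_atTop_atTop.mpr
    intro b
    refine ⟨b, fun t ht => ?_⟩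
    have : t ≤ t * l := Nat.le_mul_of_pos_right t (by omega)
    omega
  have hVt : Tendsto (fun t : ℕ => V (t * l + 1)) atTop atTop := hdiv.comp hmono
  obtain ⟨t0, ht0⟩ := eventually_atTop.mp (hVt.eventually_ge_atTop A)
  have ht00 : (0:ℝ) ≤ (t0:ℝ) := Nat.cast_nonneg t0
  obtain ⟨Q, hQdef⟩ : ∃ Q : ℕ, Q = 2*(J + t0) + 1 := ⟨_, rfl⟩
  obtain ⟨P, hPdef⟩ : ∃ P : ℕ, P = Q*l + 1 := ⟨_, rfl⟩
  have hJQ : J < Q := by omega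
  have hQ1 : 1 ≤ Q := by omega
  -- decomposition
  have hdecomp : ∑ k ∈ Finset.range P, a k * V (P - k)
      = a 0 * V P + ∑ t ∈ Finset.range Q, ∑ m ∈ Finset.Icc 1 l,
          a ((Q-1-t)*l+m) * V (P - ((Q-1-t)*l+m)) := by
    have h1 := sum_blocks (fun k => a k * V (P - k)) Q
    rw [← hPdef] at h1
    rw [h1, Nat.sub_zero]
    congr 1
    exact (Finset.sum_range_reflect
        (fun j => ∑ m ∈ Finset.Icc 1 l, a (j*l+m) * V (P - (j*l+m))) Q).symm
  -- index identities
  have hkey : ∀ t m : ℕ, t < Q → 1 ≤ m → m ≤ l →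
      P - ((Q-1-t)*l + m) = t*l + (l+1-m) := by
    intro t m ht hm1 hm2
    have h1 : Q = (Q-1-t) + t + 1 := by omega
    have h2 : Q*l = (Q-1-t)*l + t*l + l := by
      calc Q*l = ((Q-1-t)+t+1)*l := by rw [← h1]
        _ = (Q-1-t)*l + t*l + l := by ring
    rw [hPdef]
    omega
  have hidx2 : ∀ t m : ℕ, t < Q → 1 ≤ m → m ≤ l → t*l + (l+1-m) ≤ P := by
    intro t m ht hm1 hm2
    have h1 : (t+1)*l ≤ Q*l := Nat.mul_le_mul_right l ht
    have h2 : (t+1)*l = t*l + l := by ring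
    rw [hPdef]
    omega
  have hDform : ∀ t ∈ Finset.range Q,
      (∑ m ∈ Finset.Icc 1 l, a ((Q-1-t)*l+m) * V (P - ((Q-1-t)*l+m)))
      = ∑ m ∈ Finset.Icc 1 l, a ((Q-1-t)*l+m) * V (t*l + (l+1-m)) := by
    intro t ht
    apply Finset.sum_congr rfl
    intro m hm
    obtain ⟨hm1, hm2⟩ := Finset.mem_Icc.mp hm
    rw [hkey t m (Finset.mem_range.mp ht) hm1 hm2]
  -- crude bound on blocks
  have hcrude : ∀ t, t < Q → -((l:ℝ) * (M * V P)) ≤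
      ∑ m ∈ Finset.Icc 1 l, a ((Q-1-t)*l+m) * V (t*l + (l+1-m)) := by
    intro t ht
    have hterm : ∀ m ∈ Finset.Icc 1 l,
        -(M * V P) ≤ a ((Q-1-t)*l+m) * V (t*l + (l+1-m)) := by
      intro m hm
      obtain ⟨hm1, hm2⟩ := Finset.mem_Icc.mp hm
      have hv : V (t*l + (l+1-m)) ≤ V P := hVmono (hidx2 t m ht hm1 hm2)
      have habs : |a ((Q-1-t)*l+m) * V (t*l + (l+1-m))| ≤ M * V P := by
        rw [abs_mul, abs_of_nonneg (hVnn _)]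
        exact mul_le_mul (hM _) hv (hVnn _) hM0
      linarith [neg_abs_le (a ((Q-1-t)*l+m) * V (t*l + (l+1-m)))]
    calc -((l:ℝ) * (M * V P)) = ∑ _m ∈ Finset.Icc 1 l, -(M * V P) := by
          rw [Finset.sum_const, Nat.card_Icc, nsmul_eq_mul]
          simp only [Nat.add_sub_cancel]
          ring
      _ ≤ _ := Finset.sum_le_sum hterm
  -- good bound on blocks with index < Q - J
  have hgood : ∀ t, t < Q - J → S/2 * V (t*l+1) - M*l*l*B ≤
      ∑ m ∈ Finset.Icc 1 l, a ((Q-1-t)*l+m) * V (t*l + (l+1-m)) := by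
    intro t ht
    have htQ : t < Q := by omega
    have hjJ : J ≤ Q-1-t := by omega
    have hterm : ∀ m ∈ Finset.Icc 1 l,
        a ((Q-1-t)*l+m) * V (t*l+1) - M*((l:ℝ)*B)
          ≤ a ((Q-1-t)*l+m) * V (t*l + (l+1-m)) := by
      intro m hm
      obtain ⟨hm1, hm2⟩ := Finset.mem_Icc.mp hm
      have hle1 : t*l+1 ≤ t*l + (l+1-m) := by omega
      have hd1 : V (t*l+1) ≤ V (t*l + (l+1-m)) := hVmono hle1
      have hd2 : V (t*l + (l+1-m)) ≤ V (t*l+1) + ((l:ℝ))*B := by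
        have h3 := hVgap (t*l+1) (t*l + (l+1-m)) hle1
        have h4 : ((t*l + (l+1-m)) - (t*l+1) : ℕ) ≤ l := by omega
        have h5 : (((t*l + (l+1-m)) - (t*l+1) : ℕ) : ℝ) ≤ (l:ℝ) := by exact_mod_cast h4
        nlinarith
      have habs : |a ((Q-1-t)*l+m) * (V (t*l + (l+1-m)) - V (t*l+1))| ≤ M * ((l:ℝ)*B) := by
        rw [abs_mul]
        apply mul_le_mul (hM _) _ (abs_nonneg _) hM0
        rw [abs_of_nonneg (by linarith)]
        linarith
      have hring : a ((Q-1-t)*l+m) * V (t*l + (l+1-m)) - a ((Q-1-t)*l+m) * V (t*l+1)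
          = a ((Q-1-t)*l+m) * (V (t*l + (l+1-m)) - V (t*l+1)) := by ring
      have := neg_abs_le (a ((Q-1-t)*l+m) * (V (t*l + (l+1-m)) - V (t*l+1)))
      linarith
    have hsum := Finset.sum_le_sum hterm
    rw [Finset.sum_sub_distrib, ← Finset.sum_mul, Finset.sum_const, Nat.card_Icc,
        nsmul_eq_mul] at hsum
    simp only [Nat.add_sub_cancel] at hsum
    have hσt : S/2 * V (t*l+1) ≤ (∑ m ∈ Finset.Icc 1 l, a ((Q-1-t)*l+m)) * V (t*l+1) :=
      mul_le_mul_of_nonneg_right (hJ _ hjJ) (hVnn _)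
    nlinarith
  -- split main sum
  have hsplitQ : ∑ t ∈ Finset.range Q, (∑ m ∈ Finset.Icc 1 l, a ((Q-1-t)*l+m) * V (t*l + (l+1-m)))
      = (∑ t ∈ Finset.range (Q-J), ∑ m ∈ Finset.Icc 1 l, a ((Q-1-t)*l+m) * V (t*l + (l+1-m)))
      + ∑ k ∈ Finset.range J, ∑ m ∈ Finset.Icc 1 l, a ((Q-1-((Q-J)+k))*l+m) * V (((Q-J)+k)*l + (l+1-m)) := by
    have h0 := Finset.sum_range_add
      (fun t => ∑ m ∈ Finset.Icc 1 l, a ((Q-1-t)*l+m) * V (t*l + (l+1-m))) (Q-J) J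
    rw [show (Q-J)+J = Q from by omega] at h0
    exact h0
  -- lower bounds
  set Sg : ℝ := ∑ t ∈ Finset.range (Q-J), V (t*l+1) with hSgdef
  have hmain : S/2 * Sg - ((Q-J : ℕ):ℝ) * (M*l*l*B)
      ≤ ∑ t ∈ Finset.range (Q-J), ∑ m ∈ Finset.Icc 1 l, a ((Q-1-t)*l+m) * V (t*l + (l+1-m)) := by
    have h1 := Finset.sum_le_sum (fun t (ht : t ∈ Finset.range (Q-J)) =>
      hgood t (Finset.mem_range.mp ht))
    rw [Finset.sum_sub_distrib, ← Finset.mul_sum, Finset.sum_const, Finset.card_range,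
        nsmul_eq_mul] at h1
    rw [hSgdef]
    linarith
  have htail : -((J:ℝ) * ((l:ℝ) * (M * V P)))
      ≤ ∑ k ∈ Finset.range J, ∑ m ∈ Finset.Icc 1 l, a ((Q-1-((Q-J)+k))*l+m) * V (((Q-J)+k)*l + (l+1-m)) := by
    have h1 := Finset.sum_le_sum (fun k (hk : k ∈ Finset.range J) =>
      hcrude ((Q-J)+k) (by have := Finset.mem_range.mp hk; omega))
    rw [Finset.sum_const, Finset.card_range, nsmul_eq_mul] at h1
    linarith
  -- Sg lower bound
  have hSglow : ((J+t0+1 : ℕ):ℝ) * A ≤ Sg := by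
    have hsub : Finset.Ico t0 (Q-J) ⊆ Finset.range (Q-J) := by
      intro t ht
      rw [Finset.mem_range]
      exact (Finset.mem_Ico.mp ht).2
    calc ((J+t0+1 : ℕ):ℝ) * A = (Finset.Ico t0 (Q-J)).card • A := by
          rw [Nat.card_Ico, nsmul_eq_mul]
          congr 2
          omega
      _ ≤ ∑ t ∈ Finset.Ico t0 (Q-J), V (t*l+1) :=
          Finset.card_nsmul_le_sum _ _ _ (fun t ht => ht0 t (Finset.mem_Ico.mp ht).1)
      _ ≤ Sg := Finset.sum_le_sum_of_subset_of_nonneg hsub (fun t _ _ => hVnn _)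
  -- a0 term
  have ha0 : -(M * V P) ≤ a 0 * V P := by
    have habs : |a 0 * V P| ≤ M * V P := by
      rw [abs_mul, abs_of_nonneg (hVnn _)]
      exact mul_le_mul (hM _) le_rfl (hVnn _) hM0
    linarith [neg_abs_le (a 0 * V P)]
  -- T bound
  have hTP : ∑ k ∈ Finset.range P, a k * V (P - k) ≤ C * P := by
    have := hT P
    have h2 : |∑ k ∈ Finset.range P, a k * V (P - k)| ≤ C * P := by
      simp only [hVdef]
      exact this
    exact le_of_abs_le h2
  -- assemble master inequality
  have hQJcast : ((Q-J : ℕ):ℝ) ≤ (Q:ℝ) := by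
    exact_mod_cast Nat.sub_le Q J
  have hMllB : (0:ℝ) ≤ M*l*l*B := mul_nonneg (mul_nonneg (mul_nonneg hM0 hl0) hl0) hB0
  have hmaster : S/2 * Sg ≤ C*(P:ℝ) + (1+(J:ℝ)*(l:ℝ))*(M*V P) + (Q:ℝ)*(M*l*l*B) := by
    rw [Finset.sum_congr rfl hDform] at hdecomp
    rw [hsplitQ] at hdecomp
    have h1 : ((Q-J : ℕ):ℝ) * (M*l*l*B) ≤ (Q:ℝ) * (M*l*l*B) :=
      mul_le_mul_of_nonneg_right hQJcast hMllB
    linarith [hVnn P, hTP, ha0, hmain, htail, hdecomp]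
  -- final contradiction
  have hVPb : V P ≤ (P:ℝ) * B := hVle P
  have hPle : ((P:ℝ)) ≤ 2*(Q:ℝ)*(l:ℝ) := by
    rw [hPdef]
    push_cast
    have hQ1' : (1:ℝ) ≤ (Q:ℝ) := by exact_mod_cast hQ1
    nlinarith
  have hP0 : (0:ℝ) ≤ (P:ℝ) := Nat.cast_nonneg P
  have hineq2 : S/2 * Sg ≤ K1 * (Q:ℝ) := by
    have s1 : C*(P:ℝ) ≤ C*(2*(Q:ℝ)*(l:ℝ)) := mul_le_mul_of_nonneg_left hPle hC
    have s2 : V P ≤ 2*(Q:ℝ)*(l:ℝ)*B := by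
      have := mul_le_mul_of_nonneg_right hPle hB0
      linarith
    have s3 : (1+(J:ℝ)*(l:ℝ))*(M*V P) ≤ (1+(J:ℝ)*(l:ℝ))*(M*(2*(Q:ℝ)*(l:ℝ)*B)) := by
      apply mul_le_mul_of_nonneg_left (mul_le_mul_of_nonneg_left s2 hM0)
      positivity
    have heq : K1 * (Q:ℝ) = C*(2*(Q:ℝ)*(l:ℝ)) + (1+(J:ℝ)*(l:ℝ))*(M*(2*(Q:ℝ)*(l:ℝ)*B))
        + (Q:ℝ)*(M*(l:ℝ)*(l:ℝ)*B) := by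
      rw [hK1def]; ring
    linarith
  have hleft : (2*K1+1) * ((J:ℝ)+(t0:ℝ)+1) ≤ S/2 * Sg := by
    have h2 := mul_le_mul_of_nonneg_left hSglow (le_of_lt (half_pos hS))
    push_cast at h2
    calc (2*K1+1)*((J:ℝ)+(t0:ℝ)+1) = (S/2*A)*((J:ℝ)+(t0:ℝ)+1) := by rw [hA]
      _ = S/2 * (((J:ℝ)+(t0:ℝ)+1)*A) := by ring
      _ ≤ S/2 * Sg := h2
  have hQcast : ((Q:ℕ):ℝ) = 2*((J:ℝ)+(t0:ℝ))+1 := by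
    rw [hQdef]; push_cast; ring
  rw [hQcast] at hineq2
  linarith [hleft, hineq2, hK1, hJ0, ht00]

/-- The closing system of equations for an asymptotic `l`-cycle of a generalized
fractional `p`-dimensional map with kernels in the class `𝔻⁰(ℕ₁)`:
`∑_{j=1}^{l} G_i(ξ_j) = 0` for every coordinate `i`. -/
theorem generalized_fractional_map_cycle_closing
    (p l : ℕ) (hp : 1 ≤ p) (hl : 1 ≤ l)
    (U : Fin p → ℕ → ℝ)
    (hU0 : ∀ i, U i 0 = 0)
    (hUpos : ∀ i n, 0 ≤ U i n)
    (hUdiff : ∀ i, Summable fun n => |U i n - U i (n + 1)|)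
    (hUdiv : ∀ i, Tendsto (fun N => ∑ n ∈ Finset.Icc 1 N, U i n) atTop atTop)
    (G : Fin p → (Fin p → ℝ) → ℝ)
    (hG : ∀ i, Continuous (G i))
    (x : ℕ → Fin p → ℝ)
    (hrec : ∀ i, ∀ n, 1 ≤ n →
      x n i = x 0 i - ∑ k ∈ Finset.range n, G i (x k) * U i (n - k))
    (ξ : ℕ → Fin p → ℝ)
    (hξ : ∀ m, 1 ≤ m → m ≤ l →
      Tendsto (fun N => x (N * l + m)) atTop (nhds (ξ m))) :
    ∀ i, ∑ j ∈ Finset.Icc 1 l, G i (ξ j) = 0 := by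
  intro i
  -- limits of G i along residue classes
  have haB : ∀ m, 1 ≤ m → m ≤ l →
      Tendsto (fun N => G i (x (N * l + m))) atTop (nhds (G i (ξ m))) :=
    fun m h1 h2 => ((hG i).tendsto (ξ m)).comp (hξ m h1 h2)
  -- boundedness
  obtain ⟨M, hM⟩ := bounded_of_residues' l hl (fun n => G i (x n))
    (fun m h1 h2 => bound_of_tendsto' _ _ (haB m h1 h2))
  obtain ⟨R, hR⟩ := bounded_of_residues' l hl (fun n => x n i)
    (fun m h1 h2 => bound_of_tendsto' _ _ ((tendsto_pi_nhds.mp (hξ m h1 h2)) i))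
  have hR0 : (0:ℝ) ≤ R := le_trans (abs_nonneg _) (hR 0)
  have hC : (0:ℝ) ≤ |x 0 i| + R := add_nonneg (abs_nonneg _) hR0
  -- kernel bound
  have hUB : ∀ n, U i n ≤ ∑' t, |U i t - U i (t+1)| := by
    intro n
    have h1 : ∑ t ∈ Finset.range n, (U i (t+1) - U i t) = U i n - U i 0 :=
      Finset.sum_range_sub (U i) n
    rw [hU0 i, sub_zero] at h1
    calc U i n ≤ |U i n| := le_abs_self _
      _ = |∑ t ∈ Finset.range n, (U i (t+1) - U i t)| := by rw [h1]
      _ ≤ ∑ t ∈ Finset.range n, |U i (t+1) - U i t| := Finset.abs_sum_le_sum_abs _ _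
      _ = ∑ t ∈ Finset.range n, |U i t - U i (t+1)| := by
          apply Finset.sum_congr rfl; intro t _; rw [abs_sub_comm]
      _ ≤ ∑' t, |U i t - U i (t+1)| :=
          Summable.sum_le_tsum _ (fun t _ => abs_nonneg _) (hUdiff i)
  -- bound on the partial "energy" sums
  have hTb : ∀ N : ℕ, |∑ k ∈ Finset.range N, G i (x k) * (∑ j ∈ Finset.Icc 1 (N - k), U i j)|
      ≤ (|x 0 i| + R) * N := by
    intro N
    rw [← swap_sum' (fun n => G i (x n)) (U i) N]
    have hcong : ∀ n ∈ Finset.Icc 1 N,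
        (∑ k ∈ Finset.range n, G i (x k) * U i (n - k)) = x 0 i - x n i := by
      intro n hn
      have h1 := hrec i n (Finset.mem_Icc.mp hn).1
      linarith
    rw [Finset.sum_congr rfl hcong]
    calc |∑ n ∈ Finset.Icc 1 N, (x 0 i - x n i)|
        ≤ ∑ n ∈ Finset.Icc 1 N, |x 0 i - x n i| := Finset.abs_sum_le_sum_abs _ _
      _ ≤ ∑ n ∈ Finset.Icc 1 N, (|x 0 i| + R) := by
          apply Finset.sum_le_sum
          intro n _
          have h2 : |x 0 i - x n i| ≤ |x 0 i| + |x n i| := by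
            calc |x 0 i - x n i| = |x 0 i + -(x n i)| := by rw [sub_eq_add_neg]
              _ ≤ |x 0 i| + |-(x n i)| := abs_add_le _ _
              _ = |x 0 i| + |x n i| := by rw [abs_neg]
          linarith [hR n]
      _ = (|x 0 i| + R) * N := by
          rw [Finset.sum_const, Nat.card_Icc, nsmul_eq_mul]
          simp only [Nat.add_sub_cancel]
          ring
  -- limit of block sums
  have hsigS : Tendsto (fun N => ∑ m ∈ Finset.Icc 1 l, G i (x (N * l + m))) atTop
      (nhds (∑ j ∈ Finset.Icc 1 l, G i (ξ j))) := by
    apply tendsto_finset_sum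
    intro m hm
    exact haB m (Finset.mem_Icc.mp hm).1 (Finset.mem_Icc.mp hm).2
  by_contra hne
  rcases Ne.lt_or_gt hne with hneg | hpos
  · -- S < 0 : apply the core lemma to -G i ∘ x
    apply core_lemma l hl (fun n => -(G i (x n))) (U i) M
      (∑' t, |U i t - U i (t+1)|) (|x 0 i| + R) (-(∑ j ∈ Finset.Icc 1 l, G i (ξ j)))
      (fun k => by rw [abs_neg]; exact hM k) hC (hUpos i) hUB (hUdiv i)
      ?_ (by linarith) ?_ (fun f Q => sum_blocks' l f Q)
    · simpa only [Finset.sum_neg_distrib] using hsigS.neg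
    · intro N
      have h1 : (∑ k ∈ Finset.range N, (-(G i (x k))) * (∑ j ∈ Finset.Icc 1 (N-k), U i j))
          = -∑ k ∈ Finset.range N, G i (x k) * (∑ j ∈ Finset.Icc 1 (N-k), U i j) := by
        rw [← Finset.sum_neg_distrib]
        apply Finset.sum_congr rfl
        intro k _
        ring
      rw [h1, abs_neg]
      exact hTb N
  · -- S > 0 : apply the core lemma to G i ∘ x
    exact core_lemma l hl (fun n => G i (x n)) (U i) M
      (∑' t, |U i t - U i (t+1)|) (|x 0 i| + R) (∑ j ∈ Finset.Icc 1 l, G i (ξ j))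
      hM hC (hUpos i) hUB (hUdiv i) hsigS hpos hTb (fun f Q => sum_blocks' l f Q)
end

section
/- Let 0 < α < 1 and define the falling factorial kernel U_α : ℕ₁ → ℝ by U_α(n) = Γ(n+α−1)/Γ(n) (so that U_α(1) = Γ(α)). Then ∑_{k=0}^∞ [U_α(2k+1) − U_α(2k+2)] = Γ(α) · 2^{−α}; consequently, with the convention U_α(0) = 0, the period-2 coefficients satisfy S_{2,2} = ∑_{k=0}^∞ [U_α(2k+1) − U_α(2k+2)] = Γ(α) 2^{−α} and S_{1,2} = ∑_{k=0}^∞ [U_α(2k) − U_α(2k+1)] = −Γ(α) 2^{−α}. -/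
open Filter Finset Real MeasureTheory Set Topology



/-- Real Beta integral. -/
lemma realBeta {u v : ℝ} (hu : 0 < u) (hv : 0 < v) :
    ∫ t in Set.Ioo (0:ℝ) 1, t ^ (u - 1) * (1 - t) ^ (v - 1) =
      Real.Gamma u * Real.Gamma v / Real.Gamma (u + v) := by
  have h := Complex.Gamma_mul_Gamma_eq_betaIntegral (s := (u:ℂ)) (t := (v:ℂ))
    (by simpa using hu) (by simpa using hv)
  rw [Complex.betaIntegral] at h
  have hconv : ∫ (x : ℝ) in (0:ℝ)..1, (x:ℂ) ^ ((u:ℂ) - 1) * ((1:ℂ) - x) ^ ((v:ℂ) - 1)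
      = ((∫ t in Set.Ioo (0:ℝ) 1, t ^ (u - 1) * (1 - t) ^ (v - 1) : ℝ) : ℂ) := by
    rw [intervalIntegral.integral_of_le zero_le_one, MeasureTheory.integral_Ioc_eq_integral_Ioo]
    rw [show ((∫ t in Set.Ioo (0:ℝ) 1, t ^ (u - 1) * (1 - t) ^ (v - 1) : ℝ) : ℂ)
        = ∫ t in Set.Ioo (0:ℝ) 1, ((t ^ (u - 1) * (1 - t) ^ (v - 1) : ℝ) : ℂ)
      from (integral_ofReal).symm]
    refine setIntegral_congr_fun measurableSet_Ioo (fun x hx => ?_)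
    rw [Complex.ofReal_mul, Complex.ofReal_cpow hx.1.le, Complex.ofReal_cpow (by linarith [hx.2])]
    push_cast
    ring_nf
  rw [hconv] at h
  have hG : Real.Gamma (u + v) ≠ 0 := (Real.Gamma_pos_of_pos (by linarith)).ne'
  have h' : Real.Gamma u * Real.Gamma v
      = Real.Gamma (u + v) * ∫ t in Set.Ioo (0:ℝ) 1, t ^ (u - 1) * (1 - t) ^ (v - 1) := by
    have : ((Real.Gamma u * Real.Gamma v : ℝ) : ℂ)
        = ((Real.Gamma (u + v) * ∫ t in Set.Ioo (0:ℝ) 1, t ^ (u - 1) * (1 - t) ^ (v - 1) : ℝ) : ℂ) := by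
      push_cast [← Complex.Gamma_ofReal]
      exact h
    exact_mod_cast this
  field_simp [h']
  rw [h']; ring


lemma realBeta_integrable {u v : ℝ} (hu : 0 < u) (hv : 0 < v) :
    IntegrableOn (fun t : ℝ => t ^ (u - 1) * (1 - t) ^ (v - 1)) (Set.Ioo 0 1) := by
  have h := (Complex.betaIntegral_convergent (u := (u:ℂ)) (v := (v:ℂ))
    (by simpa using hu) (by simpa using hv)).norm
  rw [intervalIntegrable_iff_integrableOn_Ioc_of_le zero_le_one] at h
  refine (h.mono_set Set.Ioo_subset_Ioc_self).congr_fun (fun x hx => ?_) measurableSet_Ioo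
  have hx0 : (0:ℝ) < x := hx.1
  have hx1 : (0:ℝ) < 1 - x := by linarith [hx.2]
  beta_reduce
  rw [norm_mul,
    show ((1:ℂ) - x) = ((1 - x : ℝ) : ℂ) by push_cast; ring,
    Complex.norm_cpow_eq_rpow_re_of_pos hx0, Complex.norm_cpow_eq_rpow_re_of_pos hx1]
  norm_num


noncomputable def cg (α : ℝ) (m : ℕ) : ℝ := Real.Gamma (m + α) / Real.Gamma (m + 1)

lemma cg_pos {α : ℝ} (hα0 : 0 < α) (m : ℕ) : 0 < cg α m :=
  div_pos (Real.Gamma_pos_of_pos (by positivity)) (Real.Gamma_pos_of_pos (by positivity))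

lemma cg_succ {α : ℝ} (hα0 : 0 < α) (m : ℕ) :
    cg α (m + 1) = cg α m * ((m + α) / (m + 1)) := by
  have h1 : ((m:ℝ) + 1) + α = (m + α) + 1 := by ring
  have h2 : Real.Gamma (((m:ℝ) + α) + 1) = (m + α) * Real.Gamma (m + α) :=
    Real.Gamma_add_one (by positivity)
  have h3 : Real.Gamma (((m:ℝ) + 1) + 1) = ((m:ℝ) + 1) * Real.Gamma (m + 1) :=
    Real.Gamma_add_one (by positivity)
  have hm1 : (0:ℝ) < (m:ℝ) + 1 := by positivity
  have hg : (0:ℝ) < Real.Gamma ((m:ℝ) + 1) := Real.Gamma_pos_of_pos hm1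
  rw [cg, cg]
  push_cast
  rw [h1, h2, h3]
  field_simp

lemma cg_step {α : ℝ} (hα0 : 0 < α) (m : ℕ) :
    cg α m - cg α (m + 1) = (1 - α) * (Real.Gamma (m + α) / Real.Gamma (m + 2)) := by
  have h3 : Real.Gamma ((m:ℝ) + 2) = ((m:ℝ) + 1) * Real.Gamma (m + 1) := by
    rw [show ((m:ℝ) + 2) = ((m:ℝ) + 1) + 1 by ring]
    exact Real.Gamma_add_one (by positivity)
  have hm1 : (0:ℝ) < (m:ℝ) + 1 := by positivity
  have hg : (0:ℝ) < Real.Gamma ((m:ℝ) + 1) := Real.Gamma_pos_of_pos hm1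
  rw [cg_succ hα0, cg, h3]
  field_simp
  ring

lemma cg_step_nonneg {α : ℝ} (hα0 : 0 < α) (hα1 : α < 1) (m : ℕ) :
    0 ≤ cg α m - cg α (m + 1) := by
  rw [cg_step hα0]
  have := Real.Gamma_pos_of_pos (show (0:ℝ) < m + α by positivity)
  have := Real.Gamma_pos_of_pos (show (0:ℝ) < m + 2 by positivity)
  have h1 : (0:ℝ) ≤ 1 - α := by linarith
  positivity

lemma cg_tendsto {α : ℝ} (hα0 : 0 < α) (hα1 : α < 1) :
    Tendsto (cg α) atTop (𝓝 0) := by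
  have hb : ∀ m : ℕ, cg α m ≤ cg α 0 * Real.exp ((α - 1) * ∑ i ∈ range m, (1:ℝ)/(i+1)) := by
    intro m
    induction m with
    | zero => simp
    | succ n ih =>
      rw [cg_succ hα0, Finset.sum_range_succ, mul_add, Real.exp_add, ← mul_assoc]
      have h1 : ((n:ℝ) + α) / (n + 1) ≤ Real.exp ((α - 1) * (1/(n+1))) := by
        have : ((n:ℝ) + α) / (n + 1) = 1 + (α - 1) * (1/(n+1)) := by
          field_simp
          ring
        rw [this]
        have := Real.add_one_le_exp ((α - 1) * (1/((n:ℝ)+1)))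
        linarith
      calc cg α n * ((n + α) / (n + 1))
          ≤ (cg α 0 * Real.exp ((α - 1) * ∑ i ∈ range n, (1:ℝ)/(i+1))) * (((n:ℝ) + α) / (n + 1)) := by
            apply mul_le_mul_of_nonneg_right ih
            positivity
        _ ≤ (cg α 0 * Real.exp ((α - 1) * ∑ i ∈ range n, (1:ℝ)/(i+1))) * Real.exp ((α - 1) * (1/(n+1))) := by
            apply mul_le_mul_of_nonneg_left h1
            have := cg_pos hα0 0
            positivity
  have hlim : Tendsto (fun m : ℕ => cg α 0 * Real.exp ((α - 1) * ∑ i ∈ range m, (1:ℝ)/(i+1)))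
      atTop (𝓝 0) := by
    have hH : Tendsto (fun m : ℕ => ∑ i ∈ range m, (1:ℝ)/(i+1)) atTop atTop := by
      simpa using tendsto_sum_range_one_div_nat_succ_atTop
    have : Tendsto (fun m : ℕ => (α - 1) * ∑ i ∈ range m, (1:ℝ)/(i+1)) atTop atBot :=
      hH.const_mul_atTop_of_neg (by linarith)
    have := (Real.tendsto_exp_atBot.comp this).const_mul (cg α 0)
    simpa using this
  refine tendsto_of_tendsto_of_tendsto_of_le_of_le tendsto_const_nhds hlim
    (fun m => (cg_pos hα0 m).le) hb


lemma phi_image : (fun t : ℝ => 2*t/(1+t)) '' Set.Ioo 0 1 = Set.Ioo 0 1 := by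
  ext s
  constructor
  · rintro ⟨t, ⟨ht0, ht1⟩, rfl⟩
    have hA : (0:ℝ) < 1 + t := by linarith
    constructor
    · positivity
    · rw [div_lt_one hA]; linarith
  · rintro ⟨hs0, hs1⟩
    have h2s : (0:ℝ) < 2 - s := by linarith
    refine ⟨s/(2-s), ⟨by positivity, ?_⟩, ?_⟩
    · rw [div_lt_one h2s]; linarith
    · have hne : (2:ℝ) - s ≠ 0 := h2s.ne'
      show 2 * (s / (2 - s)) / (1 + s / (2 - s)) = s
      have hpos : (0:ℝ) < 1 + s / (2 - s) := by positivity
      rw [div_eq_iff hpos.ne']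
      field_simp
      ring

lemma phi_inj : Set.InjOn (fun t : ℝ => 2*t/(1+t)) (Set.Ioo 0 1) := by
  rintro a ⟨ha0, ha1⟩ b ⟨hb0, hb1⟩ h
  have hA : (0:ℝ) < 1 + a := by linarith
  have hB : (0:ℝ) < 1 + b := by linarith
  field_simp at h
  linarith

lemma phi_deriv : ∀ t ∈ Set.Ioo (0:ℝ) 1,
    HasDerivWithinAt (fun t : ℝ => 2*t/(1+t)) (2/(1+t)^2) (Set.Ioo 0 1) t := by
  intro t ⟨ht0, ht1⟩
  have hA : (1:ℝ) + t ≠ 0 := by linarith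
  have : HasDerivAt (fun t : ℝ => 2*t/(1+t)) (2/(1+t)^2) t := by
    have h1 : HasDerivAt (fun t : ℝ => 2*t) 2 t := by
      simpa using (hasDerivAt_id t).const_mul (2:ℝ)
    have h2 : HasDerivAt (fun t : ℝ => 1+t) 1 t := by
      simpa using (hasDerivAt_id t).const_add (1:ℝ)
    have := h1.div h2 hA
    rw [show (2:ℝ)/(1+t)^2 = (2 * (1 + t) - 2 * t * 1) / (1 + t) ^ 2 by ring]
    exact this
  exact this.hasDerivWithinAt


lemma key_hasSum {α : ℝ} (hα0 : 0 < α) (hα1 : α < 1) :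
    HasSum (fun k : ℕ => cg α (2*k) - cg α (2*k+1)) (Real.Gamma α * (2:ℝ) ^ (-α)) := by
  set V : ℕ → ℝ := fun k => cg α (2*k) - cg α (2*k+1) with hV
  -- nonnegativity and summability
  have hVnn : ∀ k, 0 ≤ V k := fun k => cg_step_nonneg hα0 hα1 (2*k)
  have hVsum : Summable V := by
    apply summable_of_sum_range_le hVnn (c := cg α 0)
    intro n
    have h1 : ∀ k ∈ range n, V k ≤ cg α (2*k) - cg α (2*(k+1)) := by
      intro k _
      have h2 := cg_step_nonneg hα0 hα1 (2*k+1)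
      have : 2*(k+1) = (2*k+1)+1 := by ring
      rw [this]
      simp only [hV]
      linarith
    calc ∑ k ∈ range n, V k ≤ ∑ k ∈ range n, (cg α (2*k) - cg α (2*(k+1))) :=
          Finset.sum_le_sum h1
      _ = cg α 0 - cg α (2*n) := by
          rw [Finset.sum_range_sub' (fun k => cg α (2*k))]
      _ ≤ cg α 0 := by linarith [cg_pos hα0 (2*n)]
  -- the integrand family
  set f : ℕ → ℝ → ℝ := fun k t => t ^ (2*(k:ℝ) + α - 1) * (1-t) ^ (1-α) with hf
  have hexp : ∀ k : ℕ, (2*(k:ℝ) + α) - 1 = 2*(k:ℝ) + α - 1 := fun k => by ring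
  have hbeta : ∀ k : ℕ, ∫ t in Set.Ioo (0:ℝ) 1, f k t
      = Real.Gamma (2*(k:ℝ) + α) * Real.Gamma (2 - α) / Real.Gamma (2*(k:ℝ) + 2) := by
    intro k
    have hu : (0:ℝ) < 2*(k:ℝ) + α := by positivity
    have hv : (0:ℝ) < 2 - α := by linarith
    have := realBeta hu hv
    rw [show (2*(k:ℝ) + α) + (2 - α) = 2*(k:ℝ) + 2 by ring] at this
    rw [← this]
    refine setIntegral_congr_fun measurableSet_Ioo (fun t ht => ?_)
    simp only [hf]
    rw [show (2*(k:ℝ) + α) - 1 = 2*(k:ℝ) + α - 1 by ring,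
      show (2:ℝ) - α - 1 = 1 - α by ring]
  have hG1α : (0:ℝ) < Real.Gamma (1 - α) := Real.Gamma_pos_of_pos (by linarith)
  have hG2α : Real.Gamma (2 - α) = (1 - α) * Real.Gamma (1 - α) := by
    rw [show (2:ℝ) - α = (1 - α) + 1 by ring]
    exact Real.Gamma_add_one (by linarith)
  -- each integral equals Γ(1-α) * V k
  have hIV : ∀ k : ℕ, ∫ t in Set.Ioo (0:ℝ) 1, f k t = Real.Gamma (1 - α) * V k := by
    intro k
    rw [hbeta k, hG2α]
    have hstep := cg_step hα0 (2*k)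
    have hc1 : ((2*k : ℕ) : ℝ) + α = 2*(k:ℝ) + α := by push_cast; ring
    have hc2 : ((2*k : ℕ) : ℝ) + 2 = 2*(k:ℝ) + 2 := by push_cast; ring
    rw [hc1, hc2] at hstep
    simp only [hV]
    rw [hstep]
    ring
  -- integrability of each f k
  have hInt : ∀ k : ℕ, IntegrableOn (f k) (Set.Ioo 0 1) := by
    intro k
    have hu : (0:ℝ) < 2*(k:ℝ) + α := by positivity
    have hv : (0:ℝ) < 2 - α := by linarith
    have := realBeta_integrable hu hv
    refine this.congr_fun (fun t ht => ?_) measurableSet_Ioo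
    simp only [hf]
    rw [show (2*(k:ℝ) + α) - 1 = 2*(k:ℝ) + α - 1 by ring,
      show (2:ℝ) - α - 1 = 1 - α by ring]
  -- nonnegativity of f k on Ioo
  have hfnn : ∀ k : ℕ, ∀ t ∈ Set.Ioo (0:ℝ) 1, 0 ≤ f k t := by
    intro k t ht
    have ht0 := ht.1
    have ht1 : (0:ℝ) < 1 - t := by linarith [ht.2]
    simp only [hf]
    positivity
  -- measurability
  have hmeas : ∀ k : ℕ, AEStronglyMeasurable (f k)
      ((volume : Measure ℝ).restrict (Set.Ioo 0 1)) := by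
    intro k
    refine ContinuousOn.aestronglyMeasurable ?_ measurableSet_Ioo
    refine ContinuousOn.mul ?_ ?_
    · exact continuousOn_id.rpow_const (fun x hx => Or.inl (ne_of_gt hx.1))
    · refine (continuousOn_const.sub continuousOn_id).rpow_const (fun x hx => Or.inl ?_)
      have := hx.2
      intro h
      have : (1:ℝ) - x = 0 := h
      linarith [hx.2]
  -- summability of the integrals
  have hIsum : Summable (fun k : ℕ => ∫ t in Set.Ioo (0:ℝ) 1, f k t) := by
    simp only [hIV]
    exact hVsum.mul_left _
  have hInn : ∀ k : ℕ, 0 ≤ ∫ t in Set.Ioo (0:ℝ) 1, f k t := by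
    intro k
    rw [hIV k]
    exact mul_nonneg hG1α.le (hVnn k)
  -- lintegral bound for integral_tsum
  have hlin : ∑' k : ℕ, ∫⁻ t, ‖f k t‖₊ ∂((volume : Measure ℝ).restrict (Set.Ioo 0 1)) ≠ ⊤ := by
    have heq : ∀ k : ℕ, ∫⁻ t, ‖f k t‖₊ ∂((volume : Measure ℝ).restrict (Set.Ioo 0 1))
        = ENNReal.ofReal (∫ t in Set.Ioo (0:ℝ) 1, f k t) := by
      intro k
      rw [MeasureTheory.ofReal_integral_eq_lintegral_ofReal (hInt k)
        ((ae_restrict_iff' measurableSet_Ioo).2 (Filter.Eventually.of_forall (hfnn k)))]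
      refine lintegral_congr_ae ?_
      refine ((ae_restrict_iff' measurableSet_Ioo).2 (Filter.Eventually.of_forall ?_))
      intro t ht
      exact (Real.enorm_eq_ofReal (hfnn k t ht))
    simp only [heq]
    rw [← ENNReal.ofReal_tsum_of_nonneg hInn hIsum]
    exact ENNReal.ofReal_ne_top
  -- swap sum and integral
  have hswap := MeasureTheory.integral_tsum hmeas hlin
  -- pointwise evaluation of the series
  have hpt : ∀ t ∈ Set.Ioo (0:ℝ) 1,
      (∑' k : ℕ, f k t) = t ^ (α - 1) * (1-t) ^ (-α) / (1+t) := by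
    intro t ht
    have ht0 := ht.1
    have ht1 : (0:ℝ) < 1 - t := by linarith [ht.2]
    have htA : (0:ℝ) < 1 + t := by linarith
    have hterm : ∀ k : ℕ, f k t = (t^2)^k * (t ^ (α-1) * (1-t) ^ (1-α)) := by
      intro k
      simp only [hf]
      rw [show 2*(k:ℝ) + α - 1 = ((2*k : ℕ) : ℝ) + (α - 1) by push_cast; ring,
        Real.rpow_add ht0, Real.rpow_natCast, pow_mul]
      ring
    simp only [hterm]
    rw [tsum_mul_right, tsum_geometric_of_lt_one (by positivity)
      (by nlinarith [ht.2, ht0] : t^2 < 1)]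
    have h1mα : (1-t) ^ (1-α) = (1-t) * (1-t) ^ (-α) := by
      rw [show (1:ℝ) - α = 1 + (-α) by ring, Real.rpow_add ht1, Real.rpow_one]
    have hsq : 1 - t^2 = (1-t)*(1+t) := by ring
    rw [h1mα, hsq]
    field_simp
  -- hence the sum equals the target integral
  have hJ : (∑' k : ℕ, ∫ t in Set.Ioo (0:ℝ) 1, f k t)
      = ∫ t in Set.Ioo (0:ℝ) 1, t ^ (α - 1) * (1-t) ^ (-α) / (1+t) := by
    rw [← hswap]
    exact setIntegral_congr_fun measurableSet_Ioo hpt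
  -- change of variables to evaluate the integral
  have hcov : Real.Gamma α * Real.Gamma (1 - α)
      = (2:ℝ)^α * ∫ t in Set.Ioo (0:ℝ) 1, t ^ (α - 1) * (1-t) ^ (-α) / (1+t) := by
    have hlhs : ∫ s in Set.Ioo (0:ℝ) 1, s ^ (α - 1) * (1-s) ^ (-α)
        = Real.Gamma α * Real.Gamma (1 - α) := by
      have := realBeta hα0 (by linarith : (0:ℝ) < 1 - α)
      rw [show α + (1 - α) = 1 by ring, Real.Gamma_one, div_one] at this
      rw [← this]
      refine setIntegral_congr_fun measurableSet_Ioo (fun t ht => ?_)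
      rw [show (1:ℝ) - α - 1 = -α by ring]
    have hchg := integral_image_eq_integral_abs_deriv_smul measurableSet_Ioo
      phi_deriv phi_inj (fun s : ℝ => s ^ (α - 1) * (1-s) ^ (-α))
    rw [phi_image, hlhs] at hchg
    rw [hchg]
    rw [← MeasureTheory.integral_const_mul]
    refine setIntegral_congr_fun measurableSet_Ioo (fun t ht => ?_)
    have ht0 := ht.1
    have ht1 : (0:ℝ) < 1 - t := by linarith [ht.2]
    have htA : (0:ℝ) < 1 + t := by linarith
    have h2t : (0:ℝ) < 2*t := by linarith
    rw [smul_eq_mul, abs_of_pos (by positivity : (0:ℝ) < 2/(1+t)^2)]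
    rw [show 1 - 2*t/(1+t) = (1-t)/(1+t) by field_simp; ring]
    rw [Real.div_rpow h2t.le htA.le, Real.div_rpow ht1.le htA.le,
      Real.mul_rpow (by norm_num : (0:ℝ) ≤ 2) ht0.le]
    have hA1 : (1+t) ^ (α-1) = (1+t)^α / (1+t) := by
      rw [show α - 1 = α - (1:ℝ) by ring, Real.rpow_sub htA, Real.rpow_one]
    have hAn : (1+t) ^ (-α) = ((1+t)^α)⁻¹ := Real.rpow_neg htA.le α
    have h2a : (2:ℝ)^α = 2^(α-1) * 2 := by
      have := Real.rpow_add_one (two_ne_zero) (α - 1)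
      rw [show α - 1 + 1 = α by ring] at this
      exact this
    rw [hA1, hAn, h2a]
    have hApos : (0:ℝ) < (1+t)^α := Real.rpow_pos_of_pos htA α
    field_simp
  -- conclude
  have h2apos : (0:ℝ) < (2:ℝ)^α := Real.rpow_pos_of_pos two_pos α
  have htsum : ∑' k, V k = Real.Gamma α * (2:ℝ) ^ (-α) := by
    have h1 : Real.Gamma (1 - α) * ∑' k, V k = ∑' k, ∫ t in Set.Ioo (0:ℝ) 1, f k t := by
      rw [← tsum_mul_left]
      exact (tsum_congr (fun k => (hIV k).symm))
    have h2 : Real.Gamma (1 - α) * ∑' k, V k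
        = Real.Gamma α * Real.Gamma (1 - α) / (2:ℝ)^α := by
      rw [h1, hJ]
      rw [hcov]
      field_simp
    have h3 : ∑' k, V k = Real.Gamma α / (2:ℝ)^α := by
      refine mul_left_cancel₀ hG1α.ne' ?_
      rw [h2]
      field_simp
    rw [h3, Real.rpow_neg (by norm_num : (0:ℝ) ≤ 2), div_eq_mul_inv]
  rw [← htsum]
  exact hVsum.hasSum

/-- For the falling factorial kernel `U_α(n) = Γ(n+α−1)/Γ(n)` (with `U_α(0) = 0`),
the period-2 weights are `S_{2,2} = ∑_{k=0}^∞ [U_α(2k+1) − U_α(2k+2)] = Γ(α) 2^{−α}`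
and `S_{1,2} = ∑_{k=0}^∞ [U_α(2k) − U_α(2k+1)] = −Γ(α) 2^{−α}`. -/
theorem fallingFactorial_period_two_weights
    (α : ℝ) (hα0 : 0 < α) (hα1 : α < 1)
    (U : ℕ → ℝ)
    (hU0 : U 0 = 0)
    (hU : ∀ n : ℕ, 1 ≤ n → U n = Real.Gamma (n + α - 1) / Real.Gamma n) :
    (∑' k : ℕ, (U (2 * k + 1) - U (2 * k + 2)) = Real.Gamma α * (2 : ℝ) ^ (-α)) ∧
    (∑' k : ℕ, (U (2 * k) - U (2 * k + 1)) = -(Real.Gamma α * (2 : ℝ) ^ (-α))) := by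
  have hUc : ∀ n : ℕ, U (n + 1) = cg α n := by
    intro n
    rw [hU (n + 1) (by omega), cg,
      show ((n + 1 : ℕ) : ℝ) + α - 1 = (n : ℝ) + α by push_cast; ring,
      show ((n + 1 : ℕ) : ℝ) = (n : ℝ) + 1 by push_cast; ring]
  have key := key_hasSum hα0 hα1
  have h1 : ∑' k : ℕ, (U (2 * k + 1) - U (2 * k + 2)) = Real.Gamma α * (2 : ℝ) ^ (-α) := by
    have heq : (fun k : ℕ => U (2 * k + 1) - U (2 * k + 2))
        = fun k : ℕ => cg α (2 * k) - cg α (2 * k + 1) := by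
      funext k
      rw [show U (2 * k + 1) = cg α (2 * k) from hUc (2 * k),
        show U (2 * k + 2) = cg α (2 * k + 1) from hUc (2 * k + 1)]
    rw [heq]
    exact key.tsum_eq
  refine ⟨h1, ?_⟩
  set F : ℕ → ℝ := fun n => U n - U (n + 1) with hF
  have hFs1 : ∀ n : ℕ, F (n + 1) = cg α n - cg α (n + 1) := by
    intro n
    show U (n + 1) - U (n + 1 + 1) = _
    rw [hUc n, hUc (n + 1)]
  have hsum1 : Summable (fun n : ℕ => F (n + 1)) := by
    apply summable_of_sum_range_le (c := cg α 0)
    · intro n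
      rw [hFs1]
      exact cg_step_nonneg hα0 hα1 n
    · intro n
      have : ∑ i ∈ range n, F (i + 1) = ∑ i ∈ range n, (cg α i - cg α (i + 1)) :=
        Finset.sum_congr rfl (fun i _ => hFs1 i)
      rw [this, Finset.sum_range_sub' (fun i => cg α i)]
      linarith [cg_pos hα0 n]
  have hFsum : Summable F := (summable_nat_add_iff 1).mp hsum1
  have hUlim : Tendsto U atTop (𝓝 0) := by
    rw [← Filter.tendsto_add_atTop_iff_nat 1]
    have : (fun n : ℕ => U (n + 1)) = cg α := funext hUc
    rw [this]
    exact cg_tendsto hα0 hα1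
  have hF0 : HasSum F 0 := by
    rw [hFsum.hasSum_iff_tendsto_nat]
    have hps : ∀ n : ℕ, ∑ i ∈ range n, F i = -(U n) := by
      intro n
      have h := Finset.sum_range_sub' U n
      simp only [hF]
      rw [h, hU0]
      ring
    simp only [hps]
    simpa using hUlim.neg
  have heven : Summable (fun k : ℕ => F (2 * k)) :=
    hFsum.comp_injective (fun a b h => by omega)
  have hodd : Summable (fun k : ℕ => F (2 * k + 1)) :=
    hFsum.comp_injective (fun a b h => by omega)
  have hsplit : (∑' k : ℕ, F (2 * k)) + ∑' k : ℕ, F (2 * k + 1) = ∑' n, F n :=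
    tsum_even_add_odd heven hodd
  rw [hF0.tsum_eq] at hsplit
  have hoddval : ∑' k : ℕ, F (2 * k + 1) = Real.Gamma α * (2 : ℝ) ^ (-α) := by
    have heq : (fun k : ℕ => F (2 * k + 1)) = fun k : ℕ => U (2 * k + 1) - U (2 * k + 2) := by
      funext k
      rfl
    rw [heq, h1]
  have : ∑' k : ℕ, F (2 * k) = -(Real.Gamma α * (2 : ℝ) ^ (-α)) := by
    rw [hoddval] at hsplit
    linarith
  rw [← this]
end

section
/- Let a, b, h ∈ ℝ with h > 0, and let U₁, U₂ : ℕ → ℝ be kernels with U_i(0) = 0, U_i(n) ≥ 0 for all n, ∑_{n=0}^∞ |U_i(n) − U_i(n+1)| < ∞, and ∑_{n=1}^N U_i(n) → +∞ as N → ∞. Suppose (x₁(n), x₂(n)) satisfies the generalized fractional Hénon recurrence x₁(n) = x₁(0) − ∑_{k=0}^{n−1} G₁(x₁(k), x₂(k)) U₁(n−k) and x₂(n) = x₂(0) − ∑_{k=0}^{n−1} G₂(x₁(k), x₂(k)) U₂(n−k), where G₁(x,y) = −c₁(1 − x − a x² + y) and G₂(x,y) = −c₂(b x − y) for some constants c₁,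 c₂ > 0. If (x₁(n), x₂(n)) converges to a limit (x*, y*) as n → ∞, then 1 − x* − a (x*)² + y* = 0 and b x* − y* = 0; i.e., (x*, y*) is a fixed point of the classical Hénon map H_{a,b}(x,y) = (1 − a x² + y, b x). -/
open Filter Finset

lemma U_converges (U : ℕ → ℝ) (hdiff : Summable fun n => |U n - U (n + 1)|) :
    ∃ l, Tendsto U atTop (nhds l) := by
  have h1 : Summable (fun n => U (n + 1) - U n) := by
    apply Summable.of_abs
    simpa [abs_sub_comm] using hdiff
  obtain ⟨t, ht⟩ := h1
  have h2 := ht.tendsto_sum_nat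
  have h3 : ∀ n, ∑ i ∈ range n, (U (i + 1) - U i) = U n - U 0 :=
    fun n => Finset.sum_range_sub U n
  refine ⟨t + U 0, ?_⟩
  have h4 : Tendsto (fun n => U n - U 0) atTop (nhds t) := by
    simpa [h3] using h2
  simpa using h4.add (tendsto_const_nhds (x := U 0))

lemma pos_case (U : ℕ → ℝ) (hUpos : ∀ n, 0 ≤ U n)
    (Ul : ℝ) (hUlim : Tendsto U atTop (nhds Ul))
    (hUdiv : Tendsto (fun N => ∑ n ∈ Finset.Icc 1 N, U n) atTop atTop)
    (g : ℕ → ℝ) (L : ℝ) (hL : 0 < L) (hg : Tendsto g atTop (nhds L))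
    (s : ℝ) (hS : Tendsto (fun n => ∑ k ∈ range n, g k * U (n - k)) atTop (nhds s)) :
    False := by
  obtain ⟨K, hK⟩ := (eventually_atTop).1 (hg.eventually (eventually_ge_nhds (by linarith : L / 2 < L)))
  set A := fun n => ∑ k ∈ range K, g k * U (n - k) with hAdef
  have hA : Tendsto A atTop (nhds (∑ k ∈ range K, g k * Ul)) := by
    apply tendsto_finset_sum
    intro k _
    exact Tendsto.const_mul _ (hUlim.comp (tendsto_sub_atTop_nat k))
  set B := fun n => ∑ j ∈ Finset.Icc 1 (n - K), U j with hBdef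
  have hB : Tendsto B atTop atTop := hUdiv.comp (tendsto_sub_atTop_nat K)
  have hB2 : Tendsto (fun n => (L / 2) * B n) atTop atTop :=
    hB.const_mul_atTop (by linarith)
  have hAB : Tendsto (fun n => A n + (L / 2) * B n) atTop atTop := hA.add_atTop hB2
  have hbound : ∀ᶠ n in atTop, A n + (L / 2) * B n ≤ ∑ k ∈ range n, g k * U (n - k) := by
    filter_upwards [eventually_ge_atTop K] with n hn
    have hsplit : ∑ k ∈ range n, g k * U (n - k)
        = ∑ k ∈ Finset.Ico 0 K, g k * U (n - k) + ∑ k ∈ Finset.Ico K n, g k * U (n - k) := by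
      rw [Finset.sum_Ico_consecutive _ (Nat.zero_le K) hn, Finset.range_eq_Ico]
    have hreindex : ∑ k ∈ Finset.Ico K n, U (n - k) = ∑ j ∈ Finset.Icc 1 (n - K), U j := by
      apply Finset.sum_nbij' (fun k => n - k) (fun j => n - j)
      · intro k hk
        simp only [Finset.mem_Ico] at hk
        simp only [Finset.mem_Icc]
        omega
      · intro j hj
        simp only [Finset.mem_Icc] at hj
        simp only [Finset.mem_Ico]
        omega
      · intro k hk
        simp only [Finset.mem_Ico] at hk
        omega
      · intro j hj
        simp only [Finset.mem_Icc] at hj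
        omega
      · intro k _
        rfl
    have hlow : (L / 2) * B n ≤ ∑ k ∈ Finset.Ico K n, g k * U (n - k) := by
      have : ∑ k ∈ Finset.Ico K n, (L / 2) * U (n - k)
          ≤ ∑ k ∈ Finset.Ico K n, g k * U (n - k) := by
        apply Finset.sum_le_sum
        intro k hk
        have hk' : K ≤ k := (Finset.mem_Ico.1 hk).1
        exact mul_le_mul_of_nonneg_right (hK k hk') (hUpos _)
      calc (L / 2) * B n = ∑ k ∈ Finset.Ico K n, (L / 2) * U (n - k) := by
            rw [← Finset.mul_sum, hreindex]
        _ ≤ _ := this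
    have hAeq : A n = ∑ k ∈ Finset.Ico 0 K, g k * U (n - k) := by
      rw [hAdef]; rw [Finset.range_eq_Ico]
    rw [hsplit, hAeq]
    linarith
  exact not_tendsto_atTop_of_tendsto_nhds hS (tendsto_atTop_mono' _ hbound hAB)

lemma limit_zero (U : ℕ → ℝ) (hUpos : ∀ n, 0 ≤ U n)
    (hdiff : Summable fun n => |U n - U (n + 1)|)
    (hUdiv : Tendsto (fun N => ∑ n ∈ Finset.Icc 1 N, U n) atTop atTop)
    (g : ℕ → ℝ) (L : ℝ) (hg : Tendsto g atTop (nhds L))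
    (s : ℝ) (hS : Tendsto (fun n => ∑ k ∈ range n, g k * U (n - k)) atTop (nhds s)) :
    L = 0 := by
  obtain ⟨Ul, hUlim⟩ := U_converges U hdiff
  by_contra hL
  rcases (lt_or_gt_of_ne hL) with hneg | hpos
  · refine pos_case U hUpos Ul hUlim hUdiv (fun n => -g n) (-L) (by linarith) hg.neg (-s) ?_
    have := hS.neg
    simp only [← Finset.sum_neg_distrib, neg_mul] at this ⊢
    exact this
  · exact pos_case U hUpos Ul hUlim hUdiv g L hpos hg s hS

/-- If a trajectory of the generalized fractional Hénon map converges, then its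
limit is a fixed point of the classical Hénon map `H_{a,b}(x,y) = (1 − a x² + y, b x)`. -/
theorem generalized_fractional_henon_limit_is_fixed_point
    (a b h : ℝ) (hh : 0 < h)
    (c₁ c₂ : ℝ) (hc₁ : 0 < c₁) (hc₂ : 0 < c₂)
    (U₁ U₂ : ℕ → ℝ)
    (hU₁0 : U₁ 0 = 0) (hU₂0 : U₂ 0 = 0)
    (hU₁pos : ∀ n, 0 ≤ U₁ n) (hU₂pos : ∀ n, 0 ≤ U₂ n)
    (hU₁diff : Summable fun n => |U₁ n - U₁ (n + 1)|)
    (hU₂diff : Summable fun n => |U₂ n - U₂ (n + 1)|)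
    (hU₁div : Tendsto (fun N => ∑ n ∈ Finset.Icc 1 N, U₁ n) atTop atTop)
    (hU₂div : Tendsto (fun N => ∑ n ∈ Finset.Icc 1 N, U₂ n) atTop atTop)
    (x₁ x₂ : ℕ → ℝ)
    (hrec₁ : ∀ n, 1 ≤ n → x₁ n = x₁ 0 -
      ∑ k ∈ Finset.range n, (-c₁ * (1 - x₁ k - a * (x₁ k) ^ 2 + x₂ k)) * U₁ (n - k))
    (hrec₂ : ∀ n, 1 ≤ n → x₂ n = x₂ 0 -
      ∑ k ∈ Finset.range n, (-c₂ * (b * x₁ k - x₂ k)) * U₂ (n - k))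
    (xs ys : ℝ)
    (hlim : Tendsto (fun n => (x₁ n, x₂ n)) atTop (nhds (xs, ys))) :
    1 - xs - a * xs ^ 2 + ys = 0 ∧ b * xs - ys = 0 := by
  have hx1 : Tendsto x₁ atTop (nhds xs) := (continuous_fst.tendsto (xs, ys)).comp hlim
  have hx2 : Tendsto x₂ atTop (nhds ys) := (continuous_snd.tendsto (xs, ys)).comp hlim
  have hg1 : Tendsto (fun n => -c₁ * (1 - x₁ n - a * (x₁ n) ^ 2 + x₂ n)) atTop
      (nhds (-c₁ * (1 - xs - a * xs ^ 2 + ys))) :=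
    Tendsto.const_mul _ (((tendsto_const_nhds.sub hx1).sub
      (Tendsto.const_mul a (hx1.pow 2))).add hx2)
  have hg2 : Tendsto (fun n => -c₂ * (b * x₁ n - x₂ n)) atTop
      (nhds (-c₂ * (b * xs - ys))) :=
    Tendsto.const_mul _ ((Tendsto.const_mul b hx1).sub hx2)
  have hS1 : Tendsto (fun n => ∑ k ∈ range n,
      (-c₁ * (1 - x₁ k - a * (x₁ k) ^ 2 + x₂ k)) * U₁ (n - k)) atTop (nhds (x₁ 0 - xs)) := by
    apply Tendsto.congr' _ (tendsto_const_nhds.sub hx1)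
    filter_upwards [eventually_ge_atTop 1] with n hn
    linarith [hrec₁ n hn]
  have hS2 : Tendsto (fun n => ∑ k ∈ range n,
      (-c₂ * (b * x₁ k - x₂ k)) * U₂ (n - k)) atTop (nhds (x₂ 0 - ys)) := by
    apply Tendsto.congr' _ (tendsto_const_nhds.sub hx2)
    filter_upwards [eventually_ge_atTop 1] with n hn
    linarith [hrec₂ n hn]
  have h1 := limit_zero U₁ hU₁pos hU₁diff hU₁div _ _ hg1 _ hS1
  have h2 := limit_zero U₂ hU₂pos hU₂diff hU₂div _ _ hg2 _ hS2
  constructor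
  · have : c₁ * (1 - xs - a * xs ^ 2 + ys) = 0 := by linarith [h1]
    exact (mul_eq_zero.1 this).resolve_left (ne_of_gt hc₁)
  · have : c₂ * (b * xs - ys) = 0 := by linarith [h2]
    exact (mul_eq_zero.1 this).resolve_left (ne_of_gt hc₂)
end

section
/- Let a, b, h, α ∈ ℝ with a ≠ 0, h > 0, C₀ := 1 − (2/h)^α ≠ 0, and set C₁ := (b − C₀²)/(a C₀), C₂ := (1/a)(2 + (b−1) C₁). Assume 2C₂ − C₁² ≥ 0. Define x₁ := (C₁ + √(2C₂ − C₁²))/2, x₂ := C₁ − x₁, y₁ := (b/2)C₁ + (b/C₀)(x₁ − C₁/2), and y₂ := b C₁ − y₁. Then these points satisfy the period-2 system of the fractional difference Hénon map: (i) x₂ − x₁ = (h/2)^α [ (x₂ − x₁)(1 + a(x₂ + x₁)) − (y₂ − y₁) ]; (ii) y₂ − y₁ = (h/2)^α [ (y₂ − y₁) − b (x₂ − x₁) ]; (iii) 2 − (x₂ + x₁) − a(x₂² + x₁²) + (y₂ + y₁) = 0; (iv) b(x₁ + x₂) − (y₁ + y₂) = 0. -/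
open Real

/-- The explicit formulas for the period-2 points of the fractional difference
Hénon map satisfy the period-2 system (i)–(iv). -/
theorem fractional_henon_period_two_formulas
    (a b h α : ℝ) (ha : a ≠ 0) (hh : 0 < h)
    (C₀ C₁ C₂ : ℝ)
    (hC₀ : C₀ = 1 - (2 / h) ^ α) (hC₀ne : C₀ ≠ 0)
    (hC₁ : C₁ = (b - C₀ ^ 2) / (a * C₀))
    (hC₂ : C₂ = (1 / a) * (2 + (b - 1) * C₁))
    (hD : 0 ≤ 2 * C₂ - C₁ ^ 2)
    (x₁ x₂ y₁ y₂ : ℝ)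
    (hx₁ : x₁ = (C₁ + Real.sqrt (2 * C₂ - C₁ ^ 2)) / 2)
    (hx₂ : x₂ = C₁ - x₁)
    (hy₁ : y₁ = (b / 2) * C₁ + (b / C₀) * (x₁ - C₁ / 2))
    (hy₂ : y₂ = b * C₁ - y₁) :
    (x₂ - x₁ = (h / 2) ^ α * ((x₂ - x₁) * (1 + a * (x₂ + x₁)) - (y₂ - y₁))) ∧
    (y₂ - y₁ = (h / 2) ^ α * ((y₂ - y₁) - b * (x₂ - x₁))) ∧
    (2 - (x₂ + x₁) - a * (x₂ ^ 2 + x₁ ^ 2) + (y₂ + y₁) = 0) ∧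
    (b * (x₁ + x₂) - (y₁ + y₂) = 0) := by
  set P := (h / 2) ^ α with hP
  set s := Real.sqrt (2 * C₂ - C₁ ^ 2) with hs
  have hs2 : s ^ 2 = 2 * C₂ - C₁ ^ 2 := Real.sq_sqrt hD
  have hmul : (2 / h) ^ α * P = 1 := by
    rw [hP, ← Real.mul_rpow (by positivity) (by positivity)]
    rw [div_mul_div_comm]
    rw [show (2 : ℝ) * h / (h * 2) = 1 by field_simp]
    exact Real.one_rpow α
  have h1C₀ : (1 - C₀) * P = 1 := by
    have e : 1 - C₀ = (2 / h) ^ α := by rw [hC₀]; ring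
    rw [e]; exact hmul
  have hC1 : a * C₀ * C₁ = b - C₀ ^ 2 := by
    rw [hC₁]; field_simp
  have hC2 : a * C₂ = 2 + (b - 1) * C₁ := by
    rw [hC₂]; field_simp
  subst hy₂ hx₂ hx₁
  have hyd : C₀ * ((b * C₁ - y₁) - y₁) = -(b * s) := by
    rw [hy₁]; field_simp; ring
  refine ⟨?_, ?_, ?_, ?_⟩
  · -- (i)
    apply mul_left_cancel₀ hC₀ne
    linear_combination P * hyd + P * s * hC1 + s * C₀ * h1C₀
  · -- (ii)
    apply mul_left_cancel₀ hC₀ne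
    linear_combination (1 - P) * hyd + b * s * h1C₀
  · -- (iii)
    linear_combination (-(a / 2)) * hs2 - hC2
  · -- (iv)
    ring
end

section
/- Let a, b, h, α ∈ ℝ with a ≠ 0, h > 0, and C₀ := 1 − (2/h)^α ≠ 0, and set C₁ := (b − C₀²)/(a C₀), C₂ := (1/a)(2 + (b−1) C₁). Suppose (x₁, y₁, x₂, y₂) ∈ ℝ⁴ with x₁ ≠ x₂ satisfies: (i) x₂ − x₁ = (h/2)^α [ (x₂ − x₁)(1 + a(x₂ + x₁)) − (y₂ − y₁) ]; (ii) y₂ − y₁ = (h/2)^α [ (y₂ − y₁) − b (x₂ − x₁) ]; (iii) 2 − (x₂ + x₁) − a(x₂² + x₁²) + (y₂ + y₁) = 0; (iv) b(x₁ + x₂) − (y₁ + y₂) = 0. Then x₁ + x₂ = C₁, x₁² + x₂² = C₂, y₂ − y₁ = (b/C₀)(x₂ − x₁), and 2C₂ − C₁² > 0 with {x₁, x₂} = {(C₁ + √(2C₂ − C₁²))/2, (C₁ − √(2C₂ − C₁²))/2}. -/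
open Real

/-- Any solution of the period-2 system of the fractional difference Hénon map
with `x₁ ≠ x₂` is given by the explicit formulas: `x₁ + x₂ = C₁`,
`x₁² + x₂² = C₂`, `y₂ − y₁ = (b/C₀)(x₂ − x₁)`, the discriminant `2C₂ − C₁²` is
positive, and `{x₁, x₂} = {(C₁ ± √(2C₂ − C₁²))/2}`. -/
theorem fractional_henon_period_two_solution
    (a b h α : ℝ) (ha : a ≠ 0) (hh : 0 < h)
    (C₀ C₁ C₂ : ℝ)
    (hC₀ : C₀ = 1 - (2 / h) ^ α) (hC₀ne : C₀ ≠ 0)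
    (hC₁ : C₁ = (b - C₀ ^ 2) / (a * C₀))
    (hC₂ : C₂ = (1 / a) * (2 + (b - 1) * C₁))
    (x₁ x₂ y₁ y₂ : ℝ) (hne : x₁ ≠ x₂)
    (h1 : x₂ - x₁ = (h / 2) ^ α * ((x₂ - x₁) * (1 + a * (x₂ + x₁)) - (y₂ - y₁)))
    (h2 : y₂ - y₁ = (h / 2) ^ α * ((y₂ - y₁) - b * (x₂ - x₁)))
    (h3 : 2 - (x₂ + x₁) - a * (x₂ ^ 2 + x₁ ^ 2) + (y₂ + y₁) = 0)
    (h4 : b * (x₁ + x₂) - (y₁ + y₂) = 0) :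
    x₁ + x₂ = C₁ ∧
    x₁ ^ 2 + x₂ ^ 2 = C₂ ∧
    y₂ - y₁ = (b / C₀) * (x₂ - x₁) ∧
    0 < 2 * C₂ - C₁ ^ 2 ∧
    ({x₁, x₂} : Set ℝ) =
      {(C₁ + Real.sqrt (2 * C₂ - C₁ ^ 2)) / 2,
       (C₁ - Real.sqrt (2 * C₂ - C₁ ^ 2)) / 2} := by
  have hh2 : (0:ℝ) < h / 2 := by linarith
  set K := (h / 2) ^ α with hKdef
  have hK : 0 < K := Real.rpow_pos_of_pos hh2 α
  have hKne : K ≠ 0 := ne_of_gt hK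
  have hinv : (2 / h) ^ α = K⁻¹ := by
    rw [hKdef, ← Real.inv_rpow (le_of_lt hh2), inv_div]
  have hC0K : K * C₀ = K - 1 := by
    rw [hC₀, hinv]; field_simp
  have hdx : x₂ - x₁ ≠ 0 := sub_ne_zero.mpr (Ne.symm hne)
  -- dy relation
  have hdy0 : K * ((y₂ - y₁) * C₀ - b * (x₂ - x₁)) = 0 := by
    linear_combination (y₂ - y₁) * hC0K - h2
  have hdy : (y₂ - y₁) * C₀ = b * (x₂ - x₁) := by
    rcases mul_eq_zero.mp hdy0 with h | h
    · exact absurd h hKne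
    · linarith
  have hdyfin : y₂ - y₁ = (b / C₀) * (x₂ - x₁) := by
    field_simp
    linear_combination hdy
  -- sum relation
  have hS0 : K * ((x₂ - x₁) * (a * C₀ * (x₁ + x₂) - (b - C₀ ^ 2))) = 0 := by
    linear_combination (x₂ - x₁) * C₀ * hC0K - C₀ * h1 + K * hdy
  have hS1 : (x₂ - x₁) * (a * C₀ * (x₁ + x₂) - (b - C₀ ^ 2)) = 0 := by
    rcases mul_eq_zero.mp hS0 with h | h
    · exact absurd h hKne
    · exact h
  have hS : a * C₀ * (x₁ + x₂) = b - C₀ ^ 2 := by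
    rcases mul_eq_zero.mp hS1 with h | h
    · exact absurd h hdx
    · linarith
  have hSC : x₁ + x₂ = C₁ := by
    rw [hC₁]; field_simp; linear_combination hS
  -- sum of squares
  have hQ' : a * (x₁ ^ 2 + x₂ ^ 2) = 2 + (b - 1) * (x₁ + x₂) := by
    linear_combination -h3 - h4
  have hQ : x₁ ^ 2 + x₂ ^ 2 = C₂ := by
    rw [hC₂, ← hSC]; field_simp; linear_combination hQ'
  -- discriminant
  have hdisc : 2 * C₂ - C₁ ^ 2 = (x₂ - x₁) ^ 2 := by
    rw [← hSC, ← hQ]; ring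
  have hdpos : 0 < 2 * C₂ - C₁ ^ 2 := by
    rw [hdisc]; positivity
  refine ⟨hSC, hQ, hdyfin, hdpos, ?_⟩
  rcases lt_or_gt_of_ne hne with hlt | hgt
  · have hs : Real.sqrt (2 * C₂ - C₁ ^ 2) = x₂ - x₁ := by
      rw [hdisc]; exact Real.sqrt_sq (by linarith)
    rw [hs, ← hSC, Set.pair_comm]
    congr 1 <;> ring_nf
  · have hs : Real.sqrt (2 * C₂ - C₁ ^ 2) = x₁ - x₂ := by
      rw [hdisc, show (x₂ - x₁)^2 = (x₁ - x₂)^2 by ring]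
      exact Real.sqrt_sq (by linarith)
    rw [hs, ← hSC]
    congr 1 <;> ring_nf
end

section
/- Let b, h, α ∈ ℝ with h > 0, C₀ := 1 − (2/h)^α ≠ 0, and suppose a_bif := ((b − C₀²)/(4 C₀)) · ( b/C₀ − C₀ − 2(b − 1) ) ≠ 0. Define x* := (b − C₀²)/(2 a_bif C₀) and y* := b x*. Then (x*, y*) is a fixed point of the classical Hénon map with parameters a_bif, b; that is, 1 − a_bif (x*)² + y* = x* and b x* = y*. -/
open Real

/-- At the bifurcation parameter value `a_bif`, the coincident period-2 point
`x* = (b − C₀²)/(2 a_bif C₀)`, `y* = b x*` is a fixed point of the classical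
Hénon map with parameters `a_bif, b`. -/
theorem fractional_henon_bifurcation_point_is_fixed
    (b h α : ℝ) (hh : 0 < h)
    (C₀ : ℝ) (hC₀ : C₀ = 1 - (2 / h) ^ α) (hC₀ne : C₀ ≠ 0)
    (abif : ℝ)
    (habif : abif = ((b - C₀ ^ 2) / (4 * C₀)) * (b / C₀ - C₀ - 2 * (b - 1)))
    (habifne : abif ≠ 0)
    (xs ys : ℝ)
    (hxs : xs = (b - C₀ ^ 2) / (2 * abif * C₀))
    (hys : ys = b * xs) :
    1 - abif * xs ^ 2 + ys = xs ∧ b * xs = ys := by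
  subst hys hxs
  refine ⟨?_, rfl⟩
  have key : 4 * abif * C₀ ^ 2 = (b - C₀ ^ 2) ^ 2 - 2 * C₀ * (b - 1) * (b - C₀ ^ 2) := by
    rw [habif]; field_simp
  field_simp
  linear_combination key
end

section
/- Let 0 < α < 1, h > 0, a, b ∈ ℝ, and let U_α(n) = Γ(n+α−1)/Γ(n) for n ≥ 1 with U_α(0) = 0 be the falling factorial kernel. Suppose (x₁(n), x₂(n)) satisfies the fractional difference Hénon recurrence x_i(n) = x_i(0) − ∑_{k=0}^{n−1} G_i(x₁(k), x₂(k)) U_α(n−k), i = 1,2, with G₁(x,y) = −(h^α/Γ(α))(1 − x − a x² + y) and G₂(x,y) = −(h^α/Γ(α))(b x − y), and that the limits (x₁, y₁) = lim_{N→∞} (x₁(2N+1), x₂(2N+1)) and (x₂, y₂) = lim_{N→∞} (x₁(2N+2), x₂(2N+2)) exist. Then: (i) x₂ − x₁ = (h/2)^α [ (x₂ − x₁)(1 + a(x₂ + x₁)) − (y₂ − y₁) ]; (ii) y₂ − y₁ = (h/2)^α [ (y₂ − y₁) − b (x₂ − x₁) ]; (iii) 2 − (x₂ + x₁) − a(x₂²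 + x₁²) + (y₂ + y₁) = 0; (iv) b(x₁ + x₂) − (y₁ + y₂) = 0. -/
open Filter Finset Real Topology

noncomputable def henonU (α : ℝ) (n : ℕ) : ℝ := Real.Gamma (n + α - 1) / Real.Gamma n

lemma henonU_one (α : ℝ) : henonU α 1 = Real.Gamma α := by
  simp [henonU]

lemma henonU_pos {α : ℝ} (hα0 : 0 < α) {n : ℕ} (hn : 1 ≤ n) : 0 < henonU α n := by
  have h1 : (1:ℝ) ≤ (n:ℝ) := by exact_mod_cast hn
  exact div_pos (Real.Gamma_pos_of_pos (by linarith)) (Real.Gamma_pos_of_pos (by linarith))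

lemma henonU_succ {α : ℝ} (hα0 : 0 < α) {n : ℕ} (hn : 1 ≤ n) :
    henonU α (n+1) = henonU α n * (((n:ℝ) + α - 1)/n) := by
  have h1 : (1:ℝ) ≤ (n:ℝ) := by exact_mod_cast hn
  have hx : (n:ℝ) + α - 1 ≠ 0 := by linarith
  have hn0 : (n:ℝ) ≠ 0 := by linarith
  have hΓn : Real.Gamma (n:ℝ) ≠ 0 := (Real.Gamma_pos_of_pos (by linarith)).ne'
  have e1 : Real.Gamma ((n:ℕ)+1 + α - 1) = ((n:ℝ) + α - 1) * Real.Gamma ((n:ℝ) + α - 1) := by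
    have := Real.Gamma_add_one hx
    rw [← this]; ring_nf
  have e2 : Real.Gamma (((n:ℕ)+1 : ℕ) : ℝ) = (n:ℝ) * Real.Gamma (n:ℝ) := by
    push_cast
    rw [← Real.Gamma_add_one hn0]
  unfold henonU
  push_cast at e1 e2 ⊢
  rw [e1, e2]
  field_simp

lemma henonU_succ_lt {α : ℝ} (hα0 : 0 < α) (hα1 : α < 1) {n : ℕ} (hn : 1 ≤ n) :
    henonU α (n+1) < henonU α n := by
  rw [henonU_succ hα0 hn]
  have h1 : (1:ℝ) ≤ (n:ℝ) := by exact_mod_cast hn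
  have hpos := henonU_pos hα0 hn
  have : ((n:ℝ) + α - 1)/n < 1 := by
    rw [div_lt_one (by linarith)]; linarith
  nlinarith

lemma henonU_le_Gamma {α : ℝ} (hα0 : 0 < α) (hα1 : α < 1) {n : ℕ} (hn : 1 ≤ n) :
    henonU α n ≤ Real.Gamma α := by
  induction n with
  | zero => omega
  | succ m ih =>
    rcases Nat.eq_zero_or_pos m with h | h
    · subst h; rw [henonU_one α]
    · exact le_trans (henonU_succ_lt hα0 hα1 h).le (ih h)

lemma henonU_sum_D (α : ℝ) (m : ℕ) :
    ∑ j ∈ Finset.range m, (henonU α (j+1) - henonU α (j+2)) = henonU α 1 - henonU α (m+1) := by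
  have := Finset.sum_range_sub' (fun i => henonU α (i+1)) m
  simpa using this

lemma henonU_summable_D {α : ℝ} (hα0 : 0 < α) (hα1 : α < 1) :
    Summable (fun j => henonU α (j+1) - henonU α (j+2)) := by
  apply summable_of_sum_range_le (c := Real.Gamma α)
  · intro j
    have := henonU_succ_lt hα0 hα1 (n := j+1) (by omega)
    linarith
  · intro m
    rw [henonU_sum_D]
    have := henonU_pos hα0 (n := m+1) (by omega)
    rw [henonU_one]
    linarith

lemma henonU_summable_absK {α : ℝ} (hα0 : 0 < α) (hα1 : α < 1) :
    Summable (fun j => |henonU α (j+2) - henonU α (j+1)|) := by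
  have := henonU_summable_D hα0 hα1
  apply this.congr
  intro j
  rw [abs_sub_comm, abs_of_nonneg]
  have := henonU_succ_lt hα0 hα1 (n := j+1) (by omega)
  linarith

lemma summable_geom_deriv (c : ℝ) {r : ℝ} (hr0 : 0 ≤ r) (hr : r < 1) :
    Summable (fun n : ℕ => c * ((n:ℝ) * r^(n-1))) := by
  apply Summable.mul_left
  rw [← summable_nat_add_iff 1]
  have h1 : Summable (fun n : ℕ => ((n:ℝ)+1) * r^n) := by
    have h2 : Summable (fun n : ℕ => (n:ℝ)^1 * r^n) :=
      summable_pow_mul_geometric_of_norm_lt_one 1 (by rwa [Real.norm_eq_abs, abs_of_nonneg hr0])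
    have h3 : Summable (fun n : ℕ => r^n) := summable_geometric_of_lt_one hr0 hr
    simpa [add_mul, pow_one] using h2.add h3
  apply h1.congr
  intro n
  rw [show n + 1 - 1 = n from rfl]
  push_cast; ring

lemma henonU_bound_deriv {α : ℝ} (hα0 : 0 < α) (hα1 : α < 1) {z r : ℝ} (hz : |z| ≤ r) (n : ℕ) :
    ‖henonU α (n+1) * ((n:ℝ) * z^(n-1))‖ ≤ Real.Gamma α * ((n:ℝ) * r^(n-1)) := by
  rw [Real.norm_eq_abs, abs_mul, abs_mul, abs_of_pos (henonU_pos hα0 (by omega)), Nat.abs_cast,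
    abs_pow]
  have h1 : |z|^(n-1) ≤ r^(n-1) := pow_le_pow_left₀ (abs_nonneg z) hz _
  have h2 := henonU_le_Gamma hα0 hα1 (n := n+1) (by omega)
  have hΓ : (0:ℝ) ≤ Real.Gamma α := (Real.Gamma_pos_of_pos hα0).le
  apply mul_le_mul h2 (by gcongr) (by positivity) hΓ

lemma henonU_summable_pow {α : ℝ} (hα0 : 0 < α) (hα1 : α < 1) {x : ℝ} (hx : |x| < 1) :
    Summable (fun n => henonU α (n+1) * x^n) := by
  apply Summable.of_norm_bounded (g := fun n => Real.Gamma α * |x|^n)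
  · exact (summable_geometric_of_lt_one (abs_nonneg x) hx).mul_left _
  · intro n
    rw [norm_mul, norm_pow, Real.norm_eq_abs, Real.norm_eq_abs,
      abs_of_pos (henonU_pos hα0 (by omega))]
    exact mul_le_mul_of_nonneg_right (henonU_le_Gamma hα0 hα1 (by omega)) (by positivity)

lemma henonU_summable_deriv {α : ℝ} (hα0 : 0 < α) (hα1 : α < 1) {x : ℝ} (hx : |x| < 1) :
    Summable (fun n : ℕ => henonU α (n+1) * ((n:ℝ) * x^(n-1))) := by
  set r : ℝ := (1 + |x|)/2 with hr
  have h0 : (0:ℝ) ≤ |x| := abs_nonneg x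
  have hxr : |x| ≤ r := by rw [hr]; linarith
  have hr1 : r < 1 := by rw [hr]; linarith
  have hr0 : (0:ℝ) ≤ r := le_trans h0 hxr
  exact Summable.of_norm_bounded (summable_geom_deriv (Real.Gamma α) hr0 hr1)
    (fun n => henonU_bound_deriv hα0 hα1 hxr n)

/-- The binomial series: `∑ U(n+1) xⁿ = Γ(α) (1-x)^(-α)` for `|x| < 1`. -/
lemma henonU_hasSum_pow {α : ℝ} (hα0 : 0 < α) (hα1 : α < 1) {x : ℝ} (hx : |x| < 1) :
    HasSum (fun n => henonU α (n+1) * x^n) (Real.Gamma α * (1-x)^(-α)) := by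
  classical
  set f : ℝ → ℝ := fun y => ∑' n, henonU α (n+1) * y^n with hfdef
  set T : ℝ → ℝ := fun y => ∑' n : ℕ, henonU α (n+1) * ((n:ℝ) * y^(n-1)) with hTdef
  -- f is differentiable with derivative T on (-1,1)
  have hderiv : ∀ y : ℝ, |y| < 1 → HasDerivAt f (T y) y := by
    intro y hy
    set r : ℝ := (1 + |y|)/2 with hr
    have h0 : (0:ℝ) ≤ |y| := abs_nonneg y
    have hyr : |y| < r := by rw [hr]; linarith
    have hr1 : r < 1 := by rw [hr]; linarith
    have hr0 : (0:ℝ) < r := lt_of_le_of_lt h0 hyr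
    exact hasDerivAt_tsum_of_isPreconnected
      (g := fun n z => henonU α (n+1) * z^n)
      (g' := fun n z => henonU α (n+1) * ((n:ℝ) * z^(n-1)))
      (summable_geom_deriv (Real.Gamma α) hr0.le hr1)
      Metric.isOpen_ball (convex_ball (0:ℝ) r).isPreconnected
      (fun n z _ => by simpa using (hasDerivAt_pow n z).const_mul (henonU α (n+1)))
      (fun n z hz => henonU_bound_deriv hα0 hα1
        (by rw [Metric.mem_ball, Real.dist_eq, sub_zero] at hz; exact hz.le) n)
      (Metric.mem_ball_self hr0)
      (henonU_summable_pow hα0 hα1 (by simpa using one_pos : |(0:ℝ)| < 1))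
      (by simpa [Real.dist_eq] using hyr)
  -- the ODE : (1-y) * T y = α * f y
  have hODE : ∀ y : ℝ, |y| < 1 → (1 - y) * T y = α * f y := by
    intro y hy
    have hT : HasSum (fun n : ℕ => henonU α (n+1) * ((n:ℝ) * y^(n-1))) (T y) :=
      (henonU_summable_deriv hα0 hα1 hy).hasSum
    have hf : HasSum (fun n : ℕ => henonU α (n+1) * y^n) (f y) :=
      (henonU_summable_pow hα0 hα1 hy).hasSum
    have hT1 : HasSum (fun n : ℕ => henonU α (n+2) * (((n:ℝ)+1) * y^n)) (T y) := by
      have h1 : HasSum (fun n : ℕ =>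
          (fun m : ℕ => henonU α (m+1) * ((m:ℝ) * y^(m-1))) (n+1)) (T y) := by
        refine (hasSum_nat_add_iff (f := fun m : ℕ => henonU α (m+1) * ((m:ℝ) * y^(m-1))) 1).2 ?_
        simpa using hT
      have e : (fun n : ℕ => henonU α (n+2) * (((n:ℝ)+1) * y^n))
          = (fun n : ℕ => henonU α ((n+1)+1) * (((n+1:ℕ):ℝ) * y^((n+1)-1))) := by
        funext n
        push_cast
        norm_num
      rw [e]
      exact h1
    have hT2 : HasSum (fun n : ℕ => henonU α (n+1) * ((n:ℝ) * y^n)) (y * T y) := by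
      have h1 := hT.mul_left y
      have e : (fun n : ℕ => y * (henonU α (n+1) * ((n:ℝ) * y^(n-1))))
          = (fun n : ℕ => henonU α (n+1) * ((n:ℝ) * y^n)) := by
        funext n
        cases n with
        | zero => simp
        | succ m =>
          rw [show m + 1 - 1 = m from rfl]
          rw [pow_succ]
          ring
      rw [e] at h1
      exact h1
    have hsub : HasSum (fun n : ℕ => henonU α (n+2) * (((n:ℝ)+1) * y^n)
        - henonU α (n+1) * ((n:ℝ) * y^n)) (T y - y * T y) := hT1.sub hT2
    have hterm : ∀ n : ℕ, henonU α (n+2) * (((n:ℝ)+1) * y^n) - henonU α (n+1) * ((n:ℝ) * y^n)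
        = α * (henonU α (n+1) * y^n) := by
      intro n
      have h1 : henonU α (n+2) = henonU α (n+1) * ((((n+1:ℕ):ℝ) + α - 1)/((n+1:ℕ):ℝ)) :=
        henonU_succ hα0 (by omega)
      have hn0 : ((n:ℝ)+1) ≠ 0 := by positivity
      rw [h1]
      push_cast
      field_simp
      ring
    have hαf : HasSum (fun n : ℕ => α * (henonU α (n+1) * y^n)) (α * f y) := hf.mul_left α
    have efun : (fun n : ℕ => henonU α (n+2) * (((n:ℝ)+1) * y^n)
        - henonU α (n+1) * ((n:ℝ) * y^n))
        = (fun n : ℕ => α * (henonU α (n+1) * y^n)) := funext hterm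
    rw [efun] at hsub
    have := hsub.unique hαf
    linarith [this]
  -- constancy of (1-y)^α * f y
  have hx1 : (0:ℝ) < 1 - x := by
    have := abs_lt.1 hx
    linarith [this.2]
  have hconst : (1-x)^α * f x = Real.Gamma α := by
    set r : ℝ := (1 + |x|)/2 with hr
    have h0 : (0:ℝ) ≤ |x| := abs_nonneg x
    have hxr : |x| < r := by rw [hr]; linarith
    have hr1 : r < 1 := by rw [hr]; linarith
    have hr0 : (0:ℝ) < r := lt_of_le_of_lt h0 hxr
    set F : ℝ → ℝ := fun y => (1-y)^α * f y with hF
    have hFd : ∀ y ∈ Metric.ball (0:ℝ) r, HasFDerivAt F (0 : ℝ →L[ℝ] ℝ) y := by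
      intro y hy
      have hy1 : |y| < 1 := by
        rw [Metric.mem_ball, Real.dist_eq, sub_zero] at hy
        exact lt_trans hy hr1
      have hy1' : (0:ℝ) < 1 - y := by
        have := abs_lt.1 hy1
        linarith [this.2]
      have h1 : HasDerivAt (fun y : ℝ => 1 - y) (-1) y := (hasDerivAt_id y).const_sub 1
      have h2 : HasDerivAt (fun t : ℝ => t^α) (α * (1-y)^(α-1)) (1-y) :=
        Real.hasDerivAt_rpow_const (Or.inl hy1'.ne')
      have h3 : HasDerivAt (fun z : ℝ => (1-z)^α) (α * (1-y)^(α-1) * (-1)) y := h2.comp y h1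
      have h4 : HasDerivAt F (α * (1-y)^(α-1) * (-1) * f y + (1-y)^α * T y) y :=
        h3.mul (hderiv y hy1)
      have h5 : α * (1-y)^(α-1) * (-1) * f y + (1-y)^α * T y = 0 := by
        have e1 : (1-y)^(α-1) = (1-y)^α / (1-y) := by
          rw [Real.rpow_sub hy1', Real.rpow_one]
        have hT' := hODE y hy1
        rw [e1]
        have hne : (1-y) ≠ 0 := hy1'.ne'
        field_simp
        linear_combination ((1-y)^α) * hT'
      rw [h5] at h4
      have := h4.hasFDerivAt
      have e0 : (ContinuousLinearMap.smulRight (1 : ℝ →L[ℝ] ℝ) (0:ℝ)) = (0 : ℝ →L[ℝ] ℝ) := by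
        ext z
        simp
      rw [← e0]
      exact this
    have hdiff : DifferentiableOn ℝ F (Metric.ball (0:ℝ) r) :=
      fun y hy => (hFd y hy).differentiableAt.differentiableWithinAt
    have hcst := (convex_ball (0:ℝ) r).is_const_of_fderivWithin_eq_zero hdiff
      (fun y hy => ((hFd y hy).hasFDerivWithinAt.fderivWithin
        (Metric.isOpen_ball.uniqueDiffWithinAt hy)))
      (by simpa [Real.dist_eq] using hxr) (Metric.mem_ball_self hr0)
    have hF0 : F 0 = Real.Gamma α := by
      have : f 0 = henonU α 1 := by
        rw [hfdef]
        simp only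
        rw [tsum_eq_single 0 (fun n hn => by simp [zero_pow hn])]
        simp
      rw [hF]
      simp only
      rw [this, henonU_one]
      simp
    rw [← hF0]
    exact hcst
  have hfx : f x = Real.Gamma α * (1-x)^(-α) := by
    have hpow : (0:ℝ) < (1-x)^α := Real.rpow_pos_of_pos hx1 α
    rw [Real.rpow_neg hx1.le]
    field_simp
    linarith [hconst]
  have := (henonU_summable_pow hα0 hα1 hx).hasSum
  rwa [show (∑' n, henonU α (n+1) * x^n) = f x from rfl, hfx] at this

lemma henonU_tsum_K_pow {α : ℝ} (hα0 : 0 < α) (hα1 : α < 1) {x : ℝ} (hx : |x| < 1) :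
    ∑' j : ℕ, (henonU α (j+2) - henonU α (j+1)) * x^(j+1)
      = Real.Gamma α * ((1-x)^(1-α) - 1) := by
  have hx1 : (0:ℝ) < 1 - x := by have := abs_lt.1 hx; linarith [this.2]
  have hf := henonU_hasSum_pow hα0 hα1 hx
  have h1 : HasSum (fun j : ℕ => henonU α (j+2) * x^(j+1))
      (Real.Gamma α * (1-x)^(-α) - Real.Gamma α) := by
    refine (hasSum_nat_add_iff (f := fun n : ℕ => henonU α (n+1) * x^n) 1).2 ?_
    simpa [henonU_one] using hf
  have h2 : HasSum (fun j : ℕ => henonU α (j+1) * x^(j+1))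
      (x * (Real.Gamma α * (1-x)^(-α))) := by
    have := hf.mul_left x
    have e : (fun j : ℕ => x * (henonU α (j+1) * x^j))
        = (fun j : ℕ => henonU α (j+1) * x^(j+1)) := by
      funext j; rw [pow_succ]; ring
    rwa [e] at this
  have hsub := h1.sub h2
  have e : (fun j : ℕ => henonU α (j+2) * x^(j+1) - henonU α (j+1) * x^(j+1))
      = (fun j : ℕ => (henonU α (j+2) - henonU α (j+1)) * x^(j+1)) := by
    funext j; ring
  rw [e] at hsub
  rw [hsub.tsum_eq]
  have e2 : (1-x)^(1-α) = (1-x)^(-α) * (1-x) := by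
    rw [show (1-α) = (-α) + 1 by ring, Real.rpow_add hx1, Real.rpow_one]
  rw [e2]
  ring

lemma henonU_Sigma {α : ℝ} (hα0 : 0 < α) (hα1 : α < 1) :
    ∑' j : ℕ, (-1:ℝ)^j * (henonU α (j+2) - henonU α (j+1))
      = Real.Gamma α * (1 - 2^(1-α)) := by
  set K : ℕ → ℝ := fun j => henonU α (j+2) - henonU α (j+1) with hK
  set t : ℕ → ℝ := fun m => -1 + 1/(m+2) with ht
  have ht1 : ∀ m : ℕ, |t m| < 1 := by
    intro m
    rw [ht]
    have h1 : (0:ℝ) < 1/((m:ℝ)+2) := by positivity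
    have h2 : 1/((m:ℝ)+2) ≤ 1/2 := by
      apply div_le_div_of_nonneg_left one_pos.le two_pos
      · push_cast; linarith
    simp only
    rw [abs_lt]
    constructor <;> push_cast <;> linarith
  have htlim : Tendsto t atTop (𝓝 (-1)) := by
    rw [ht]
    have h1 : Tendsto (fun m : ℕ => 1/((m:ℝ)+2)) atTop (𝓝 0) := by
      have h0 := (tendsto_one_div_add_atTop_nhds_zero_nat (𝕜 := ℝ)).comp (tendsto_add_atTop_nat 1)
      have e : ((fun n : ℕ => 1/((n:ℝ)+1)) ∘ (fun m : ℕ => m+1))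
          = fun m : ℕ => 1/((m:ℝ)+2) := by
        funext m
        simp [Function.comp]
        push_cast
        ring_nf
      rwa [e] at h0
    simpa using (tendsto_const_nhds (x := (-1:ℝ))).add h1
  -- Tannery's theorem
  have hT : Tendsto (fun m => ∑' j, K j * (t m)^(j+1)) atTop
      (𝓝 (∑' j, K j * (-1)^(j+1))) := by
    apply tendsto_tsum_of_dominated_convergence (bound := fun j => |K j|)
      (henonU_summable_absK hα0 hα1)
    · intro j
      have hc : Continuous (fun s : ℝ => K j * s^(j+1)) := by continuity
      exact (hc.tendsto (-1)).comp htlim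
    · filter_upwards with m
      intro j
      rw [norm_mul, Real.norm_eq_abs, Real.norm_eq_abs, abs_pow]
      have := (ht1 m).le
      calc |K j| * |t m|^(j+1) ≤ |K j| * 1 := by
            apply mul_le_mul_of_nonneg_left _ (abs_nonneg _)
            exact pow_le_one₀ (abs_nonneg _) this
        _ = |K j| := mul_one _
  -- the closed form limit
  have hT2 : Tendsto (fun m => ∑' j, K j * (t m)^(j+1)) atTop
      (𝓝 (Real.Gamma α * ((2:ℝ)^(1-α) - 1))) := by
    have he : ∀ m, ∑' j, K j * (t m)^(j+1) = Real.Gamma α * ((1 - t m)^(1-α) - 1) :=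
      fun m => henonU_tsum_K_pow hα0 hα1 (ht1 m)
    simp only [he]
    have h2 : Tendsto (fun m => 1 - t m) atTop (𝓝 2) := by
      have := (tendsto_const_nhds (x := (1:ℝ))).sub htlim
      norm_num at this
      exact this
    have h3 : ContinuousAt (fun s : ℝ => s^(1-α)) 2 :=
      Real.continuousAt_rpow_const 2 (1-α) (Or.inl two_ne_zero)
    have h4 : Tendsto (fun m => (1 - t m)^(1-α)) atTop (𝓝 ((2:ℝ)^(1-α))) :=
      h3.tendsto.comp h2
    exact ((h4.sub tendsto_const_nhds).const_mul _)
  have huniq := tendsto_nhds_unique hT hT2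
  have e : (fun j : ℕ => K j * (-1:ℝ)^(j+1)) = (fun j : ℕ => -((-1:ℝ)^j * K j)) := by
    funext j; rw [pow_succ]; ring
  rw [e, tsum_neg] at huniq
  have : ∑' j : ℕ, (-1:ℝ)^j * K j = -(Real.Gamma α * (2^(1-α) - 1)) := by linarith
  rw [hK] at this
  rw [this]
  ring

lemma henon_conv_lim {α : ℝ} (hα0 : 0 < α) (hα1 : α < 1) (g : ℕ → ℝ) (M : ℝ)
    (hM : ∀ k, |g k| ≤ M) (ge go : ℝ)
    (hge : Tendsto (fun N => g (2*N)) atTop (𝓝 ge))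
    (hgo : Tendsto (fun N => g (2*N+1)) atTop (𝓝 go)) :
    Tendsto (fun m => ∑ j ∈ Finset.range (2*m+1),
        g (2*m - j) * (henonU α (j+2) - henonU α (j+1))) atTop
      (𝓝 (∑' j : ℕ, (if Even j then ge else go) * (henonU α (j+2) - henonU α (j+1)))) := by
  classical
  set K : ℕ → ℝ := fun j => henonU α (j+2) - henonU α (j+1) with hKdef
  have hM0 : 0 ≤ M := le_trans (abs_nonneg _) (hM 0)
  set F : ℕ → ℕ → ℝ := fun m j => if j ≤ 2*m then g (2*m - j) * K j else 0 with hFdef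
  have hstep1 : ∀ m, ∑ j ∈ Finset.range (2*m+1), g (2*m - j) * K j = ∑' j, F m j := by
    intro m
    rw [tsum_eq_sum (s := Finset.range (2*m+1))
      (fun j hj => by
        rw [hFdef]
        simp only
        rw [if_neg]
        simp only [Finset.mem_range] at hj
        omega)]
    apply Finset.sum_congr rfl
    intro j hj
    simp only [Finset.mem_range] at hj
    rw [hFdef]
    simp only
    rw [if_pos (by omega)]
  have hmain : Tendsto (fun m => ∑' j, F m j) atTop
      (𝓝 (∑' j : ℕ, (if Even j then ge else go) * K j)) := by
    apply tendsto_tsum_of_dominated_convergence (bound := fun j => M * |K j|)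
      ((henonU_summable_absK hα0 hα1).mul_left M)
    · intro j
      rcases Nat.even_or_odd j with hj | hj
      · obtain ⟨t, ht⟩ := hj
        have h1 : Tendsto (fun m => g (2*(m - t))) atTop (𝓝 ge) :=
          hge.comp (tendsto_sub_atTop_nat t)
        rw [if_pos ⟨t, ht⟩]
        apply (h1.mul_const (K j)).congr'
        filter_upwards [eventually_ge_atTop t] with m hm
        rw [hFdef]
        simp only
        rw [if_pos (by omega)]
        congr 2
        omega
      · obtain ⟨t, ht⟩ := hj
        have h1 : Tendsto (fun m => g (2*(m - (t+1))+1)) atTop (𝓝 go) :=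
          hgo.comp (tendsto_sub_atTop_nat (t+1))
        rw [if_neg (by simp [ht, parity_simps])]
        apply (h1.mul_const (K j)).congr'
        filter_upwards [eventually_ge_atTop (t+1)] with m hm
        rw [hFdef]
        simp only
        rw [if_pos (by omega)]
        congr 2
        omega
    · filter_upwards with m
      intro j
      rw [hFdef]
      simp only
      split_ifs with h
      · rw [norm_mul, Real.norm_eq_abs, Real.norm_eq_abs]
        exact mul_le_mul_of_nonneg_right (hM _) (abs_nonneg _)
      · simp [mul_nonneg hM0 (abs_nonneg (K j))]
  apply hmain.congr
  intro m
  exact (hstep1 m).symm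

lemma exp_half_le {x : ℝ} (hx0 : 0 < x) (hx1 : x ≤ 1) : Real.exp (x/2) ≤ 1 + x := by
  have h1 : 1 - x/2 ≤ Real.exp (-(x/2)) := by
    have := Real.add_one_le_exp (-(x/2)); linarith
  have h2 : (0:ℝ) < 1 - x/2 := by linarith
  have h3 : Real.exp (x/2) * Real.exp (-(x/2)) = 1 := by
    rw [← Real.exp_add]; simp
  nlinarith [Real.exp_pos (x/2)]

lemma henonU_sum_eq {α : ℝ} (hα0 : 0 < α) (N : ℕ) :
    α * ∑ j ∈ Finset.range N, henonU α (j+1) = henonU α (N+1) * (N:ℝ) := by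
  induction N with
  | zero => simp
  | succ m ih =>
    rw [Finset.sum_range_succ, mul_add, ih]
    have h1 : henonU α (m+2) = henonU α (m+1) * ((((m+1:ℕ):ℝ) + α - 1)/((m+1:ℕ):ℝ)) :=
      henonU_succ hα0 (by omega)
    rw [h1]
    have hm0 : ((m:ℝ)+1) ≠ 0 := by positivity
    push_cast
    field_simp
    ring

lemma henonU_exp_lb {α : ℝ} (hα0 : 0 < α) (hα1 : α < 1) (N : ℕ) :
    α * Real.Gamma α * Real.exp ((α/2) * ∑ k ∈ Finset.range N, (1:ℝ)/(k+1))
      ≤ henonU α (N+1) * ((N:ℝ) + α) := by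
  induction N with
  | zero => simp [henonU_one]; ring_nf; rfl
  | succ m ih =>
    have hpos := henonU_pos hα0 (n := m+1) (by omega)
    have h1 : henonU α (m+2) = henonU α (m+1) * ((((m+1:ℕ):ℝ) + α - 1)/((m+1:ℕ):ℝ)) :=
      henonU_succ hα0 (by omega)
    have hm1 : (0:ℝ) < (m:ℝ) + 1 := by positivity
    have hx0 : 0 < α/((m:ℝ)+1) := by positivity
    have hx1 : α/((m:ℝ)+1) ≤ 1 := by
      rw [div_le_one hm1]; linarith
    have hexp := exp_half_le hx0 hx1
    have key : henonU α (m+2) * (((m+1:ℕ):ℝ) + α)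
        = henonU α (m+1) * ((m:ℝ) + α) * ((((m:ℝ)+1) + α)/((m:ℝ)+1)) := by
      rw [h1]; push_cast; ring
    have e2 : (((m:ℝ)+1) + α)/((m:ℝ)+1) = 1 + α/((m:ℝ)+1) := by field_simp
    have hElb : (0:ℝ) < Real.exp ((α/2) * ∑ k ∈ Finset.range m, (1:ℝ)/(k+1)) := Real.exp_pos _
    have hΓ : (0:ℝ) < Real.Gamma α := Real.Gamma_pos_of_pos hα0
    have hlhs : α * Real.Gamma α * (Real.exp ((α/2) * ∑ k ∈ Finset.range m, (1:ℝ)/(k+1))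
        * Real.exp ((α/((m:ℝ)+1))/2))
        ≤ henonU α (m+1) * ((m:ℝ) + α) * (1 + α/((m:ℝ)+1)) := by
      have hb : (0:ℝ) ≤ henonU α (m+1) * ((m:ℝ) + α) := by positivity
      have h4 : α * Real.Gamma α * Real.exp ((α/2) * ∑ k ∈ Finset.range m, (1:ℝ)/(k+1))
          * Real.exp ((α/((m:ℝ)+1))/2) ≤ henonU α (m+1) * ((m:ℝ) + α) * (1 + α/((m:ℝ)+1)) := by
        apply mul_le_mul ih hexp (Real.exp_pos _).le hb
      linarith [h4]
    rw [Finset.sum_range_succ]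
    rw [show (α/2) * (∑ k ∈ Finset.range m, (1:ℝ)/(k+1) + 1/((m:ℝ)+1))
        = (α/2) * (∑ k ∈ Finset.range m, (1:ℝ)/(k+1)) + (α/((m:ℝ)+1))/2 from by ring]
    rw [Real.exp_add, key, e2]
    exact hlhs

lemma henonU_sum_tendsto_atTop {α : ℝ} (hα0 : 0 < α) (hα1 : α < 1) :
    Tendsto (fun N => ∑ j ∈ Finset.range N, henonU α (j+1)) atTop atTop := by
  have hΓ : (0:ℝ) < Real.Gamma α := Real.Gamma_pos_of_pos hα0
  have hlow : ∀ N : ℕ, Real.Gamma α * Real.exp ((α/2) * ∑ k ∈ Finset.range N, (1:ℝ)/(k+1))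
      - Real.Gamma α ≤ ∑ j ∈ Finset.range N, henonU α (j+1) := by
    intro N
    have h1 := henonU_exp_lb hα0 hα1 N
    have h2 := henonU_sum_eq hα0 N
    have h3 := henonU_le_Gamma hα0 hα1 (n := N+1) (by omega)
    have h4 := (henonU_pos hα0 (n := N+1) (by omega)).le
    -- α * T N = henonU (N+1) * N = henonU (N+1)(N+α) - α henonU (N+1) ≥ αΓα e - α Γα
    nlinarith [h1, h2, h3]
  apply tendsto_atTop_mono hlow
  apply Tendsto.atTop_add _ tendsto_const_nhds
  apply Tendsto.const_mul_atTop hΓ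
  apply Real.tendsto_exp_atTop.comp
  apply Tendsto.const_mul_atTop (by linarith : (0:ℝ) < α/2)
  exact tendsto_sum_range_one_div_nat_succ_atTop

lemma sum_range_pair (f : ℕ → ℝ) (m : ℕ) :
    ∑ k ∈ Finset.range (2*m), f k = ∑ i ∈ Finset.range m, (f (2*i) + f (2*i+1)) := by
  induction m with
  | zero => simp
  | succ n ih =>
    rw [Finset.sum_range_succ, ← ih, show 2*(n+1) = (2*n+1)+1 from rfl,
      Finset.sum_range_succ, Finset.sum_range_succ]
    ring

lemma henon_div_lemma {α : ℝ} (hα0 : 0 < α) (hα1 : α < 1) (g : ℕ → ℝ) (M : ℝ)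
    (hM : ∀ k, |g k| ≤ M) (ge go : ℝ)
    (hge : Tendsto (fun N => g (2*N)) atTop (𝓝 ge))
    (hgo : Tendsto (fun N => g (2*N+1)) atTop (𝓝 go))
    (hc : 0 < ge + go) :
    Tendsto (fun m => ∑ k ∈ Finset.range (2*m), g k * henonU α (2*m - k)) atTop atTop := by
  classical
  have hM0 : 0 ≤ M := le_trans (abs_nonneg _) (hM 0)
  have hΓ : (0:ℝ) < Real.Gamma α := Real.Gamma_pos_of_pos hα0
  set c : ℝ := ge + go with hcdef
  set T : ℕ → ℝ := fun N => ∑ j ∈ Finset.range N, henonU α (j+1) with hTdef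
  set s : ℕ → ℝ := fun i => g (2*i) + g (2*i+1) with hsdef
  -- eventual pair bound
  have hs : ∀ᶠ N in atTop, c/2 < s N := by
    apply (hge.add hgo).eventually (eventually_gt_nhds (by linarith))
  obtain ⟨i₀, hi₀⟩ := eventually_atTop.1 hs
  -- telescoping decrement bound
  have hdec : ∀ m : ℕ, ∑ i ∈ Finset.range m,
      (henonU α (2*i+1) - henonU α (2*i+2)) ≤ Real.Gamma α := by
    intro m
    have h1 : ∑ i ∈ Finset.range m, (henonU α (2*i+1) - henonU α (2*i+2))
        = ∑ k ∈ (Finset.range m).image (fun i => 2*i),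
          (henonU α (k+1) - henonU α (k+2)) := by
      rw [Finset.sum_image (fun a _ b _ h => by omega)]
    rw [h1]
    have h2 : ∑ k ∈ (Finset.range m).image (fun i => 2*i),
        (henonU α (k+1) - henonU α (k+2))
        ≤ ∑ k ∈ Finset.range (2*m), (henonU α (k+1) - henonU α (k+2)) := by
      apply Finset.sum_le_sum_of_subset_of_nonneg
      · intro k hk
        simp only [Finset.mem_image, Finset.mem_range] at hk ⊢
        obtain ⟨i, hi, rfl⟩ := hk
        omega
      · intro k _ _
        have := henonU_succ_lt hα0 hα1 (n := k+1) (by omega)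
        linarith
    apply le_trans h2
    rw [henonU_sum_D, henonU_one]
    have := henonU_pos hα0 (n := 2*m+1) (by omega)
    linarith
  -- main lower bound
  have hmain : ∀ m : ℕ, i₀ ≤ m →
      (c/4) * T (2*(m - i₀)) - (2*M*Real.Gamma α*i₀ + M*Real.Gamma α)
        ≤ ∑ k ∈ Finset.range (2*m), g k * henonU α (2*m - k) := by
    intro m him
    rw [sum_range_pair]
    -- decompose each pair
    have hsplit : ∀ i ∈ Finset.range m,
        g (2*i) * henonU α (2*m - 2*i) + g (2*i+1) * henonU α (2*m - (2*i+1))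
        = s i * henonU α (2*m - 2*i - 1)
          + g (2*i) * (henonU α (2*m - 2*i) - henonU α (2*m - 2*i - 1)) := by
      intro i hi
      rw [hsdef]
      simp only
      rw [show 2*m - (2*i+1) = 2*m - 2*i - 1 from rfl]
      ring
    rw [Finset.sum_congr rfl hsplit, Finset.sum_add_distrib]
    -- bound the error part B
    have hB : -(M * Real.Gamma α) ≤ ∑ i ∈ Finset.range m,
        g (2*i) * (henonU α (2*m - 2*i) - henonU α (2*m - 2*i - 1)) := by
      have h1 : ∀ i ∈ Finset.range m,
          -(M * (henonU α (2*m - 2*i - 1) - henonU α (2*m - 2*i)))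
          ≤ g (2*i) * (henonU α (2*m - 2*i) - henonU α (2*m - 2*i - 1)) := by
        intro i hi
        simp only [Finset.mem_range] at hi
        have hd : 0 ≤ henonU α (2*m - 2*i - 1) - henonU α (2*m - 2*i) := by
          have h := henonU_succ_lt hα0 hα1 (n := 2*m - 2*i - 1) (by omega)
          rw [show 2*m - 2*i - 1 + 1 = 2*m - 2*i by omega] at h
          linarith
        have habs := abs_le.1 (hM (2*i))
        nlinarith [habs.1, habs.2]
      have h2 := Finset.sum_le_sum h1
      have h3 : ∑ i ∈ Finset.range m,
          -(M * (henonU α (2*m - 2*i - 1) - henonU α (2*m - 2*i)))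
          = -(M * ∑ i ∈ Finset.range m,
            (henonU α (2*m - 2*i - 1) - henonU α (2*m - 2*i))) := by
        rw [Finset.mul_sum]
        rw [Finset.sum_neg_distrib]
      have h4 : ∑ i ∈ Finset.range m,
          (henonU α (2*m - 2*i - 1) - henonU α (2*m - 2*i))
          = ∑ i ∈ Finset.range m, (henonU α (2*i+1) - henonU α (2*i+2)) := by
        rw [← Finset.sum_range_reflect]
        apply Finset.sum_congr rfl
        intro i hi
        simp only [Finset.mem_range] at hi
        congr 2 <;> omega
      have h5 : ∑ i ∈ Finset.range m,
          (henonU α (2*m - 2*i - 1) - henonU α (2*m - 2*i)) ≤ Real.Gamma α := by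
        rw [h4]; exact hdec m
      have h6 : -(M * Real.Gamma α) ≤ -(M * ∑ i ∈ Finset.range m,
          (henonU α (2*m - 2*i - 1) - henonU α (2*m - 2*i))) := by
        have := mul_le_mul_of_nonneg_left h5 hM0
        linarith
      linarith [h2, h3 ▸ h2]
    -- bound the main part A
    have hA : (c/4) * T (2*(m - i₀)) - 2*M*Real.Gamma α*i₀
        ≤ ∑ i ∈ Finset.range m, s i * henonU α (2*m - 2*i - 1) := by
      rw [← Finset.sum_range_add_sum_Ico _ him]
      -- part over range i₀
      have hp1 : (-(2*M*Real.Gamma α)) * i₀ ≤ ∑ i ∈ Finset.range i₀,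
          s i * henonU α (2*m - 2*i - 1) := by
        have h1 : ∀ i ∈ Finset.range i₀, -(2*M*Real.Gamma α)
            ≤ s i * henonU α (2*m - 2*i - 1) := by
          intro i hi
          simp only [Finset.mem_range] at hi
          have hiU0 : 0 < henonU α (2*m - 2*i - 1) := henonU_pos hα0 (by omega)
          have hiU1 : henonU α (2*m - 2*i - 1) ≤ Real.Gamma α :=
            henonU_le_Gamma hα0 hα1 (by omega)
          have hsb : |s i| ≤ 2*M := by
            rw [hsdef]
            simp only
            calc |g (2*i) + g (2*i+1)| ≤ |g (2*i)| + |g (2*i+1)| := abs_add_le _ _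
              _ ≤ 2*M := by linarith [hM (2*i), hM (2*i+1)]
          have habs := abs_le.1 hsb
          nlinarith [habs.1, habs.2]
        have h2 := Finset.sum_le_sum h1
        have h3 : ∑ _i ∈ Finset.range i₀, (-(2*M*Real.Gamma α)) = (-(2*M*Real.Gamma α)) * i₀ := by
          rw [Finset.sum_const, Finset.card_range, nsmul_eq_mul]
          ring
        linarith [h3 ▸ h2]
      -- part over Ico i₀ m
      have hp2 : (c/4) * T (2*(m - i₀)) ≤ ∑ i ∈ Finset.Ico i₀ m,
          s i * henonU α (2*m - 2*i - 1) := by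
        have h1 : ∀ i ∈ Finset.Ico i₀ m, (c/2) * henonU α (2*m - 2*i - 1)
            ≤ s i * henonU α (2*m - 2*i - 1) := by
          intro i hi
          simp only [Finset.mem_Ico] at hi
          have h2 := (hi₀ i hi.1).le
          have hiU0 : (0:ℝ) ≤ henonU α (2*m - 2*i - 1) := (henonU_pos hα0 (by omega)).le
          exact mul_le_mul_of_nonneg_right h2 hiU0
        have h2 := Finset.sum_le_sum h1
        have h3 : ∑ i ∈ Finset.Ico i₀ m, (c/2) * henonU α (2*m - 2*i - 1)
            = (c/2) * ∑ i ∈ Finset.range (m - i₀), henonU α (2*i+1) := by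
          rw [Finset.sum_Ico_eq_sum_range, ← Finset.mul_sum]
          congr 1
          rw [← Finset.sum_range_reflect]
          apply Finset.sum_congr rfl
          intro i hi
          simp only [Finset.mem_range] at hi
          congr 1
          omega
        have h4 : T (2*(m - i₀)) ≤ 2 * ∑ i ∈ Finset.range (m - i₀), henonU α (2*i+1) := by
          rw [hTdef]
          simp only
          rw [sum_range_pair (fun j => henonU α (j+1))]
          have h5 : ∀ i ∈ Finset.range (m - i₀),
              henonU α (2*i+1) + henonU α (2*i+1+1) ≤ 2 * henonU α (2*i+1) := by
            intro i _
            have := henonU_succ_lt hα0 hα1 (n := 2*i+1) (by omega)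
            linarith
          have h6 := Finset.sum_le_sum h5
          rw [Finset.mul_sum]
          exact h6
        have h7 := mul_le_mul_of_nonneg_left h4 (show (0:ℝ) ≤ c/4 by linarith)
        nlinarith [h2, h3 ▸ h2]
      nlinarith [hp1, hp2]
    linarith [hA, hB]
  -- conclude
  have hcomp : Tendsto (fun m => 2*(m - i₀)) atTop atTop := by
    apply tendsto_atTop_mono (fun m => by omega : ∀ m : ℕ, m - i₀ ≤ 2*(m - i₀))
      (tendsto_sub_atTop_nat i₀)
  have h1 : Tendsto (fun m => T (2*(m - i₀))) atTop atTop :=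
    (henonU_sum_tendsto_atTop hα0 hα1).comp hcomp
  have h2 : Tendsto (fun m => (c/4) * T (2*(m - i₀))
      - (2*M*Real.Gamma α*i₀ + M*Real.Gamma α)) atTop atTop := by
    simp only [sub_eq_add_neg]
    exact tendsto_atTop_add_const_right atTop _ (h1.const_mul_atTop (by linarith))
  exact tendsto_atTop_mono' atTop (eventually_atTop.2 ⟨i₀, hmain⟩) h2

lemma henon_master {α : ℝ} (hα0 : 0 < α) (hα1 : α < 1)
    (U : ℕ → ℝ)
    (hU : ∀ n : ℕ, 1 ≤ n → U n = Real.Gamma (n + α - 1) / Real.Gamma n)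
    (g z : ℕ → ℝ)
    (hrec : ∀ n, 1 ≤ n → z n = z 0 + ∑ k ∈ Finset.range n, g k * U (n - k))
    (zo ze ge go : ℝ)
    (hzo : Tendsto (fun N => z (2*N+1)) atTop (𝓝 zo))
    (hze : Tendsto (fun N => z (2*N+2)) atTop (𝓝 ze))
    (hge2 : Tendsto (fun N => g (2*N+2)) atTop (𝓝 ge))
    (hgo : Tendsto (fun N => g (2*N+1)) atTop (𝓝 go)) :
    ge + go = 0 ∧ ze - zo = go * (Real.Gamma α * 2^(1-α)) := by
  classical
  have hΓ : (0:ℝ) < Real.Gamma α := Real.Gamma_pos_of_pos hα0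
  have hUeq : ∀ n : ℕ, 1 ≤ n → U n = henonU α n := fun n hn => hU n hn
  -- limit of g along all even indices
  have hge : Tendsto (fun N => g (2*N)) atTop (𝓝 ge) := by
    apply (tendsto_add_atTop_iff_nat (f := fun N => g (2*N)) 1).1
    have e : (fun N => g (2*(N+1))) = (fun N => g (2*N+2)) := by
      funext N; congr 1
    rw [e]; exact hge2
  -- uniform bound on g
  obtain ⟨M, hM⟩ : ∃ M, ∀ k, |g k| ≤ M := by
    have h1 : BddAbove (Set.range fun N => |g (2*N)|) := (hge.abs).bddAbove_range
    have h2 : BddAbove (Set.range fun N => |g (2*N+1)|) := (hgo.abs).bddAbove_range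
    obtain ⟨M₁, hM₁⟩ := h1
    obtain ⟨M₂, hM₂⟩ := h2
    refine ⟨max M₁ M₂, fun k => ?_⟩
    rcases Nat.even_or_odd k with ⟨t, ht⟩ | ⟨t, ht⟩
    · have : |g (2*t)| ≤ M₁ := hM₁ (Set.mem_range_self t)
      have hk : k = 2*t := by omega
      rw [hk]; exact le_trans this (le_max_left _ _)
    · have : |g (2*t+1)| ≤ M₂ := hM₂ (Set.mem_range_self t)
      rw [ht]; exact le_trans this (le_max_right _ _)
  -- Part 1 : ge + go = 0
  have hE : ge + go = 0 := by
    set S2 : ℕ → ℝ := fun m => ∑ k ∈ Finset.range (2*m), g k * henonU α (2*m - k) with hS2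
    have hz2 : Tendsto (fun m => z (2*m)) atTop (𝓝 ze) := by
      apply (tendsto_add_atTop_iff_nat (f := fun N => z (2*N)) 1).1
      have e : (fun N => z (2*(N+1))) = (fun N => z (2*N+2)) := by
        funext N; congr 1
      rw [e]; exact hze
    have hS2lim : Tendsto S2 atTop (𝓝 (ze - z 0)) := by
      apply (hz2.sub_const (z 0)).congr'
      filter_upwards [eventually_ge_atTop 1] with m hm
      rw [hS2]
      simp only
      rw [hrec (2*m) (by omega)]
      have e : ∀ k ∈ Finset.range (2*m), g k * U (2*m - k) = g k * henonU α (2*m - k) := by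
        intro k hk
        simp only [Finset.mem_range] at hk
        rw [hUeq (2*m - k) (by omega)]
      rw [Finset.sum_congr rfl e]
      ring
    by_contra hne
    rcases lt_or_gt_of_ne hne with hlt | hgt
    · -- ge + go < 0 : use -g
      have hdiv := henon_div_lemma hα0 hα1 (fun k => -g k) M
        (fun k => by rw [abs_neg]; exact hM k) (-ge) (-go) hge.neg hgo.neg (by linarith)
      have e : (fun m => ∑ k ∈ Finset.range (2*m), (-g k) * henonU α (2*m - k))
          = fun m => -S2 m := by
        funext m
        rw [hS2]
        simp only
        rw [← Finset.sum_neg_distrib]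
        apply Finset.sum_congr rfl
        intro k _
        ring
      rw [e] at hdiv
      exact not_tendsto_atTop_of_tendsto_nhds hS2lim.neg hdiv
    · have hdiv := henon_div_lemma hα0 hα1 g M hM ge go hge hgo hgt
      exact not_tendsto_atTop_of_tendsto_nhds hS2lim hdiv
  refine ⟨hE, ?_⟩
  -- Part 2
  have key1 : ∀ m : ℕ, z (2*m+2) - z (2*m+1) = g (2*m+1) * Real.Gamma α
      + ∑ j ∈ Finset.range (2*m+1),
          g (2*m - j) * (henonU α (j+2) - henonU α (j+1)) := by
    intro m
    set n : ℕ := 2*m+1 with hn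
    have h1 := hrec (n+1) (by omega)
    have h2 := hrec n (by omega)
    have hU1 : U (n+1-n) = Real.Gamma α := by
      rw [show n+1-n = 1 by omega, hU 1 le_rfl]
      push_cast
      simp [Real.Gamma_one]
    have hsum : ∑ k ∈ Finset.range n, g k * U (n+1-k) - ∑ k ∈ Finset.range n, g k * U (n-k)
        = ∑ j ∈ Finset.range n, g (2*m - j) * (henonU α (j+2) - henonU α (j+1)) := by
      rw [← Finset.sum_sub_distrib]
      have e : ∀ k ∈ Finset.range n, g k * U (n+1-k) - g k * U (n-k)
          = (fun j => g (n-1-j) * (henonU α (j+2) - henonU α (j+1))) (n-1-k) := by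
        intro k hk
        simp only [Finset.mem_range] at hk
        simp only
        rw [show n-1-(n-1-k) = k by omega, show (n-1-k)+2 = n+1-k by omega,
          show (n-1-k)+1 = n-k by omega,
          hUeq (n+1-k) (by omega), hUeq (n-k) (by omega)]
        ring
      rw [Finset.sum_congr rfl e,
        Finset.sum_range_reflect (fun j => g (n-1-j) * (henonU α (j+2) - henonU α (j+1))) n]
      apply Finset.sum_congr rfl
      intro j hj
      have e3 : n-1-j = 2*m-j := by omega
      rw [e3]
    have e2 : z (n+1) = z 0 + (∑ k ∈ Finset.range n, g k * U (n+1-k) + g n * Real.Gamma α) := by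
      rw [h1, Finset.sum_range_succ, hU1]
    rw [show 2*m+2 = n+1 from rfl, e2, h2]
    have : g n = g (2*m+1) := rfl
    linarith [hsum]
  -- limits of both sides
  have hL : Tendsto (fun m => z (2*m+2) - z (2*m+1)) atTop (𝓝 (ze - zo)) := hze.sub hzo
  have hR : Tendsto (fun m => g (2*m+1) * Real.Gamma α
      + ∑ j ∈ Finset.range (2*m+1), g (2*m - j) * (henonU α (j+2) - henonU α (j+1)))
      atTop (𝓝 (go * Real.Gamma α
        + ∑' j : ℕ, (if Even j then ge else go) * (henonU α (j+2) - henonU α (j+1)))) :=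
    (hgo.mul_const _).add (henon_conv_lim hα0 hα1 g M hM ge go hge hgo)
  have heq := tendsto_nhds_unique (hL.congr (fun m => key1 m)) hR
  -- evaluate the tsum
  have etsum : ∑' j : ℕ, (if Even j then ge else go) * (henonU α (j+2) - henonU α (j+1))
      = -(go * (Real.Gamma α * (1 - 2^(1-α)))) := by
    have e : (fun j : ℕ => (if Even j then ge else go) * (henonU α (j+2) - henonU α (j+1)))
        = fun j : ℕ => -(go * ((-1:ℝ)^j * (henonU α (j+2) - henonU α (j+1)))) := by
      funext j
      rcases Nat.even_or_odd j with hj | hj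
      · rw [if_pos hj, hj.neg_one_pow]
        have : ge = -go := by linarith
        rw [this]; ring
      · rw [if_neg (Nat.not_even_iff_odd.2 hj), hj.neg_one_pow]
        ring
    rw [e, tsum_neg, tsum_mul_left, henonU_Sigma hα0 hα1]
  rw [etsum] at heq
  rw [heq]
  ring

set_option maxHeartbeats 1000000 in
/-- The asymptotic period-2 points of the fractional difference Hénon map of order
`α` with time step `h` satisfy the period-2 system (i)–(iv). -/
theorem fractional_difference_henon_period_two
    (α h a b : ℝ) (hα0 : 0 < α) (hα1 : α < 1) (hh : 0 < h)
    (U : ℕ → ℝ)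
    (hU0 : U 0 = 0)
    (hU : ∀ n : ℕ, 1 ≤ n → U n = Real.Gamma (n + α - 1) / Real.Gamma n)
    (x y : ℕ → ℝ)
    (hrecx : ∀ n, 1 ≤ n → x n = x 0 -
      ∑ k ∈ Finset.range n,
        (-(h ^ α / Real.Gamma α) * (1 - x k - a * (x k) ^ 2 + y k)) * U (n - k))
    (hrecy : ∀ n, 1 ≤ n → y n = y 0 -
      ∑ k ∈ Finset.range n,
        (-(h ^ α / Real.Gamma α) * (b * x k - y k)) * U (n - k))
    (x₁ y₁ x₂ y₂ : ℝ)
    (hodd : Tendsto (fun N => (x (2 * N + 1), y (2 * N + 1))) atTop (nhds (x₁, y₁)))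
    (heven : Tendsto (fun N => (x (2 * N + 2), y (2 * N + 2))) atTop (nhds (x₂, y₂))) :
    (x₂ - x₁ = (h / 2) ^ α * ((x₂ - x₁) * (1 + a * (x₂ + x₁)) - (y₂ - y₁))) ∧
    (y₂ - y₁ = (h / 2) ^ α * ((y₂ - y₁) - b * (x₂ - x₁))) ∧
    (2 - (x₂ + x₁) - a * (x₂ ^ 2 + x₁ ^ 2) + (y₂ + y₁) = 0) ∧
    (b * (x₁ + x₂) - (y₁ + y₂) = 0) := by
  have hΓ : (0:ℝ) < Real.Gamma α := Real.Gamma_pos_of_pos hα0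
  have hhα : (0:ℝ) < h ^ α := Real.rpow_pos_of_pos hh α
  have hcpos : (0:ℝ) < h ^ α / Real.Gamma α := div_pos hhα hΓ
  have hcne : (h ^ α / Real.Gamma α) ≠ 0 := ne_of_gt hcpos
  -- component limits
  have hx1 : Tendsto (fun N => x (2*N+1)) atTop (𝓝 x₁) :=
    (continuous_fst.tendsto (x₁, y₁)).comp hodd
  have hy1 : Tendsto (fun N => y (2*N+1)) atTop (𝓝 y₁) :=
    (continuous_snd.tendsto (x₁, y₁)).comp hodd
  have hx2 : Tendsto (fun N => x (2*N+2)) atTop (𝓝 x₂) :=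
    (continuous_fst.tendsto (x₂, y₂)).comp heven
  have hy2 : Tendsto (fun N => y (2*N+2)) atTop (𝓝 y₂) :=
    (continuous_snd.tendsto (x₂, y₂)).comp heven
  -- the x equation
  have hφ : Continuous (fun p : ℝ × ℝ => (h ^ α / Real.Gamma α) * (1 - p.1 - a*p.1^2 + p.2)) :=
    continuous_const.mul
      (((continuous_const.sub continuous_fst).sub
        (continuous_const.mul (continuous_fst.pow 2))).add continuous_snd)
  have hψ : Continuous (fun p : ℝ × ℝ => (h ^ α / Real.Gamma α) * (b*p.1 - p.2)) :=
    continuous_const.mul ((continuous_const.mul continuous_fst).sub continuous_snd)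
  have hrecx' : ∀ n, 1 ≤ n → x n = x 0 + ∑ k ∈ Finset.range n,
      ((h ^ α / Real.Gamma α) * (1 - x k - a*(x k)^2 + y k)) * U (n - k) := by
    intro n hn
    rw [hrecx n hn]
    have e : ∑ k ∈ Finset.range n,
        (-(h ^ α / Real.Gamma α) * (1 - x k - a * (x k) ^ 2 + y k)) * U (n - k)
        = -∑ k ∈ Finset.range n,
          ((h ^ α / Real.Gamma α) * (1 - x k - a*(x k)^2 + y k)) * U (n - k) := by
      rw [← Finset.sum_neg_distrib]
      apply Finset.sum_congr rfl
      intro k _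
      ring
    rw [e]
    ring
  have hrecy' : ∀ n, 1 ≤ n → y n = y 0 + ∑ k ∈ Finset.range n,
      ((h ^ α / Real.Gamma α) * (b * x k - y k)) * U (n - k) := by
    intro n hn
    rw [hrecy n hn]
    have e : ∑ k ∈ Finset.range n,
        (-(h ^ α / Real.Gamma α) * (b * x k - y k)) * U (n - k)
        = -∑ k ∈ Finset.range n,
          ((h ^ α / Real.Gamma α) * (b * x k - y k)) * U (n - k) := by
      rw [← Finset.sum_neg_distrib]
      apply Finset.sum_congr rfl
      intro k _
      ring
    rw [e]
    ring
  obtain ⟨hEx, hKx⟩ := henon_master hα0 hα1 U hU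
    (fun k => (h ^ α / Real.Gamma α) * (1 - x k - a*(x k)^2 + y k)) x hrecx'
    x₁ x₂ ((h ^ α / Real.Gamma α) * (1 - x₂ - a*x₂^2 + y₂))
    ((h ^ α / Real.Gamma α) * (1 - x₁ - a*x₁^2 + y₁))
    hx1 hx2
    ((hφ.tendsto (x₂, y₂)).comp heven)
    ((hφ.tendsto (x₁, y₁)).comp hodd)
  obtain ⟨hEy, hKy⟩ := henon_master hα0 hα1 U hU
    (fun k => (h ^ α / Real.Gamma α) * (b * x k - y k)) y hrecy'
    y₁ y₂ ((h ^ α / Real.Gamma α) * (b*x₂ - y₂))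
    ((h ^ α / Real.Gamma α) * (b*x₁ - y₁))
    hy1 hy2
    ((hψ.tendsto (x₂, y₂)).comp heven)
    ((hψ.tendsto (x₁, y₁)).comp hodd)
  -- (iii)
  have hiii : 2 - (x₂ + x₁) - a * (x₂ ^ 2 + x₁ ^ 2) + (y₂ + y₁) = 0 := by
    have h1 : (h ^ α / Real.Gamma α) * (2 - (x₂ + x₁) - a * (x₂ ^ 2 + x₁ ^ 2) + (y₂ + y₁)) = 0 := by
      linear_combination hEx
    exact (mul_eq_zero.mp h1).resolve_left hcne
  -- (iv)
  have hiv : b * (x₁ + x₂) - (y₁ + y₂) = 0 := by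
    have h1 : (h ^ α / Real.Gamma α) * (b * (x₁ + x₂) - (y₁ + y₂)) = 0 := by
      linear_combination hEy
    exact (mul_eq_zero.mp h1).resolve_left hcne
  -- rpow facts
  have h2pos : (0:ℝ) < (2:ℝ)^α := Real.rpow_pos_of_pos two_pos α
  have h2pow : (h/2) ^ α = h ^ α / (2:ℝ) ^ α := Real.div_rpow hh.le (by norm_num : (0:ℝ) ≤ 2) α
  have h21 : (2:ℝ)^(1-α) = 2 / (2:ℝ)^α := by
    rw [Real.rpow_sub two_pos, Real.rpow_one]
  -- simplify the key identities
  have hKx' : x₂ - x₁ = h ^ α * (2 / (2:ℝ)^α) * (1 - x₁ - a*x₁^2 + y₁) := by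
    rw [hKx, ← h21]
    field_simp
  have hKy' : y₂ - y₁ = h ^ α * (2 / (2:ℝ)^α) * (b*x₁ - y₁) := by
    rw [hKy, ← h21]
    field_simp
  refine ⟨?_, ?_, hiii, hiv⟩
  · rw [h2pow]
    linear_combination hKx' + (h ^ α / (2:ℝ)^α) * hiii
  · rw [h2pow]
    linear_combination hKy' + (h ^ α / (2:ℝ)^α) * hiv
end

section
/- Let 0 < α < 1, h > 0, a, b ∈ ℝ, and let U_α(n) = Γ(n+α−1)/Γ(n) for n ≥ 1 with U_α(0) = 0 be the falling factorial kernel. Suppose (x₁(n), x₂(n)) satisfies the fractional difference Lozi recurrence x_i(n) = x_i(0) − ∑_{k=0}^{n−1} G_i(x₁(k), x₂(k)) U_α(n−k), i = 1,2, with G₁(x,y) = −(h^α/Γ(α))(1 − x − a|x| + y) and G₂(x,y) = −(h^α/Γ(α))(b x − y), and that the limits (x₁, y₁) = lim_{N→∞} (x₁(2N+1), x₂(2N+1)) and (x₂, y₂) = lim_{N→∞} (x₁(2N+2), x₂(2N+2)) exist. Then: (i) x₂ − x₁ = (h/2)^α [ (x₂ − x₁) + a(|x₂| − |x₁|) − (y₂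 − y₁) ]; (ii) y₂ − y₁ = (h/2)^α [ (y₂ − y₁) − b (x₂ − x₁) ]; (iii) 2 − (x₂ + x₁) − a(|x₂| + |x₁|) + (y₂ + y₁) = 0; (iv) b(x₁ + x₂) − (y₁ + y₂) = 0. -/
open Filter Finset Real Topology

namespace LoziAux

noncomputable def cc (α : ℝ) (k : ℕ) : ℝ :=
  Real.Gamma (k + α) / (Real.Gamma α * (k.factorial : ℝ))

variable {α : ℝ}




lemma Gpos (hα0 : 0 < α) : 0 < Real.Gamma α := Real.Gamma_pos_of_pos hα0

lemma cc_zero (hα0 : 0 < α) : cc α 0 = 1 := by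
  have h := (Gpos hα0).ne'
  simp [cc]
  exact h

lemma cc_pos (hα0 : 0 < α) (k : ℕ) : 0 < cc α k := by
  apply div_pos (Real.Gamma_pos_of_pos (by positivity))
  positivity

lemma cc_succ (hα0 : 0 < α) (k : ℕ) :
    cc α (k + 1) = cc α k * (((k : ℝ) + α) / ((k : ℝ) + 1)) := by
  have h1 : ((k + 1 : ℕ) : ℝ) + α = ((k : ℝ) + α) + 1 := by push_cast; ring
  have h2 : Real.Gamma (((k : ℝ) + α) + 1) = ((k : ℝ) + α) * Real.Gamma ((k : ℝ) + α) :=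
    Real.Gamma_add_one (by positivity)
  have h3 : ((k + 1).factorial : ℝ) = ((k : ℝ) + 1) * (k.factorial : ℝ) := by
    rw [Nat.factorial_succ]; push_cast; ring
  have hG := (Gpos hα0).ne'
  have hf : (k.factorial : ℝ) ≠ 0 := by positivity
  have hk1 : ((k : ℝ) + 1) ≠ 0 := by positivity
  rw [cc, cc, h1, h2, h3]
  field_simp

lemma cc_succ' (hα0 : 0 < α) (k : ℕ) :
    cc α (k + 1) * ((k : ℝ) + 1) = cc α k * ((k : ℝ) + α) := by
  rw [cc_succ hα0 k]
  have hk1 : ((k : ℝ) + 1) ≠ 0 := by positivity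
  field_simp

lemma cc_succ_le (hα0 : 0 < α) (hα1 : α < 1) (k : ℕ) : cc α (k + 1) ≤ cc α k := by
  rw [cc_succ hα0 k]
  have h1 : ((k : ℝ) + α) / ((k : ℝ) + 1) ≤ 1 := by
    apply div_le_one_of_le₀ (by linarith [Nat.cast_nonneg (α := ℝ) k]) (by positivity)
  nlinarith [cc_pos hα0 k]

lemma cc_antitone (hα0 : 0 < α) (hα1 : α < 1) : Antitone (cc α) :=
  antitone_nat_of_succ_le (cc_succ_le hα0 hα1)

lemma cc_le_one (hα0 : 0 < α) (hα1 : α < 1) (k : ℕ) : cc α k ≤ 1 := by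
  calc cc α k ≤ cc α 0 := cc_antitone hα0 hα1 (Nat.zero_le k)
  _ = 1 := cc_zero hα0

lemma cc_tendsto_zero (hα0 : 0 < α) (hα1 : α < 1) : Tendsto (cc α) atTop (𝓝 0) := by
  have hbound : ∀ n, cc α n ≤ Real.exp (-(1 - α) * ∑ i ∈ range n, (1 : ℝ) / (i + 1)) := by
    intro n
    induction n with
    | zero => simp [cc_zero hα0]
    | succ n ih =>
      rw [cc_succ hα0 n, Finset.sum_range_succ, mul_add, Real.exp_add]
      have hstep : ((n : ℝ) + α) / ((n : ℝ) + 1) ≤ Real.exp (-(1 - α) * (1 / ((n : ℝ) + 1))) := by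
        have h1 : (-(1 - α) * (1 / ((n : ℝ) + 1))) + 1 ≤ Real.exp (-(1 - α) * (1 / ((n : ℝ) + 1))) :=
          Real.add_one_le_exp _
        have h2 : ((n : ℝ) + α) / ((n : ℝ) + 1) = (-(1 - α) * (1 / ((n : ℝ) + 1))) + 1 := by
          field_simp
          ring
        rw [h2]; exact h1
      have hc := cc_pos hα0 n
      calc cc α n * (((n : ℝ) + α) / ((n : ℝ) + 1))
          ≤ Real.exp (-(1 - α) * ∑ i ∈ range n, (1 : ℝ) / (i + 1)) *
            Real.exp (-(1 - α) * (1 / ((n : ℝ) + 1))) := by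
            apply mul_le_mul ih hstep (by positivity) (by positivity)
      _ = _ := by push_cast; ring_nf
  have hto : Tendsto (fun n => Real.exp (-(1 - α) * ∑ i ∈ range n, (1 : ℝ) / (i + 1)))
      atTop (𝓝 0) := by
    apply Real.tendsto_exp_atBot.comp
    apply Filter.Tendsto.const_mul_atTop_of_neg (by linarith : -(1 - α) < 0)
    exact_mod_cast Real.tendsto_sum_range_one_div_nat_succ_atTop
  exact squeeze_zero (fun n => (cc_pos hα0 n).le) hbound hto

lemma cc_sum (hα0 : 0 < α) (n : ℕ) :
    ∑ j ∈ range n, cc α j = (n : ℝ) * cc α n / α := by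
  induction n with
  | zero => simp
  | succ n ih =>
    rw [Finset.sum_range_succ, ih]
    have h := cc_succ' hα0 n
    have hα : α ≠ 0 := hα0.ne'
    push_cast
    field_simp
    nlinarith [h]






lemma cc_mul_lower (hα0 : 0 < α) (hα1 : α < 1) :
    ∀ n : ℕ, 1 ≤ n → cc α 1 * (n : ℝ) ^ α ≤ (n : ℝ) * cc α n := by
  intro n hn
  induction n with
  | zero => omega
  | succ n ih =>
    rcases Nat.eq_or_lt_of_le hn with h1 | h1
    · have : n = 0 := by omega
      subst this
      simp
    · have hn1 : 1 ≤ n := by omega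
      have hnpos : (0 : ℝ) < n := by exact_mod_cast hn1
      have ih' := ih hn1
      have hbern : ((1 : ℝ) + 1 / n) ^ α ≤ 1 + α * (1 / n) :=
        rpow_one_add_le_one_add_mul_self (le_trans (by norm_num : (-1:ℝ) ≤ 0) (by positivity)) hα0.le hα1.le
      -- (n+1)^α ≤ n^α * (1 + α/n)  and  (n+1)*cc(n+1) = cc n * (n+α) = n*cc n*(n+α)/n
      have hkey : ((n : ℝ) + 1) ^ α ≤ (n : ℝ) ^ α * (((n : ℝ) + α) / n) := by
        have h1 : ((n : ℝ) + 1) = (n : ℝ) * (1 + 1 / n) := by field_simp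
        have h2 : ((n : ℝ) + 1) ^ α = (n : ℝ) ^ α * ((1 : ℝ) + 1 / n) ^ α := by
          rw [h1, Real.mul_rpow hnpos.le (by positivity)]
        rw [h2]
        have h3 : ((n : ℝ) + α) / n = 1 + α * (1 / n) := by field_simp
        rw [h3]
        exact mul_le_mul_of_nonneg_left hbern (by positivity)
      have hstep : ((n : ℝ) + 1) * cc α (n + 1) = ((n : ℝ) * cc α n) * (((n : ℝ) + α) / n) := by
        have := cc_succ' hα0 n
        field_simp
        nlinarith [this]
      push_cast
      rw [hstep]
      calc cc α 1 * ((n : ℝ) + 1) ^ α ≤ cc α 1 * ((n : ℝ) ^ α * (((n : ℝ) + α) / n)) := by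
            apply mul_le_mul_of_nonneg_left hkey (cc_pos hα0 1).le
      _ = (cc α 1 * (n : ℝ) ^ α) * (((n : ℝ) + α) / n) := by ring
      _ ≤ ((n : ℝ) * cc α n) * (((n : ℝ) + α) / n) := by
            apply mul_le_mul_of_nonneg_right ih'
            positivity
  
lemma cc_sum_atTop (hα0 : 0 < α) (hα1 : α < 1) :
    Tendsto (fun n => ∑ j ∈ range n, cc α j) atTop atTop := by
  have h1 : Tendsto (fun n : ℕ => cc α 1 * (n : ℝ) ^ α) atTop atTop := by
    apply Tendsto.const_mul_atTop (cc_pos hα0 1)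
    exact (tendsto_rpow_atTop hα0).comp tendsto_natCast_atTop_atTop
  have h2 : Tendsto (fun n : ℕ => (n : ℝ) * cc α n) atTop atTop := by
    apply tendsto_atTop_mono' atTop _ h1
    filter_upwards [eventually_ge_atTop 1] with n hn
    exact cc_mul_lower hα0 hα1 n hn
  have h3 := h2.atTop_div_const hα0
  apply h3.congr
  intro n
  exact (cc_sum hα0 n).symm

/-- partial alternating sums are in [0,1] -/
lemma cc_alt_bounds (hα0 : 0 < α) (hα1 : α < 1) (n : ℕ) :
    0 ≤ ∑ j ∈ range n, (-1 : ℝ) ^ j * cc α j ∧ ∑ j ∈ range n, (-1 : ℝ) ^ j * cc α j ≤ 1 := by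
  set P : ℕ → ℝ := fun n => ∑ j ∈ range n, (-1 : ℝ) ^ j * cc α j with hP
  have hsucc : ∀ m, P (m + 1) = P m + (-1) ^ m * cc α m := by
    intro m; simp [hP, Finset.sum_range_succ]
  have key : ∀ m, 0 ≤ P (2 * m) ∧ P (2 * m + 1) ≤ 1 := by
    intro m
    induction m with
    | zero =>
      constructor
      · simp [hP]
      · rw [show 2 * 0 + 1 = 1 by rfl, hsucc 0]
        simp [hP, cc_zero hα0]
    | succ m ih =>
      have e1 : P (2 * m + 2) = P (2 * m) + ((-1) ^ (2 * m) * cc α (2 * m)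
          + (-1) ^ (2 * m + 1) * cc α (2 * m + 1)) := by
        rw [show 2 * m + 2 = (2 * m + 1) + 1 by ring, hsucc, hsucc]; ring
      have e2 : ((-1 : ℝ)) ^ (2 * m) = 1 := by
        rw [pow_mul]; norm_num
      have e3 : ((-1 : ℝ)) ^ (2 * m + 1) = -1 := by
        rw [pow_succ, e2]; norm_num
      have h1 : 0 ≤ P (2 * (m + 1)) := by
        rw [show 2 * (m + 1) = 2 * m + 2 by ring, e1, e2, e3]
        have := cc_succ_le hα0 hα1 (2 * m)
        nlinarith [ih.1]
      have h2 : P (2 * (m + 1) + 1) ≤ 1 := by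
        have e4 : P (2 * (m + 1) + 1) = P (2 * m + 1) + ((-1) ^ (2 * m + 1) * cc α (2 * m + 1)
            + (-1) ^ (2 * m + 2) * cc α (2 * m + 2)) := by
          rw [show 2 * (m + 1) + 1 = (2 * m + 2) + 1 by ring, hsucc, hsucc]
          rw [show 2 * m + 2 = (2 * m + 1) + 1 by ring, hsucc]
          ring
        have e5 : ((-1 : ℝ)) ^ (2 * m + 2) = 1 := by
          rw [pow_add, pow_mul]; norm_num
        rw [e4, e3, e5]
        have := cc_succ_le hα0 hα1 (2 * m + 1)
        nlinarith [ih.2]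
      exact ⟨h1, h2⟩
  rcases Nat.even_or_odd n with ⟨m, hm⟩ | ⟨m, hm⟩
  · subst hm
    have h1 := (key m).1
    have h2 : P (m + m) ≤ 1 := by
      have := (key m).2
      have e : P (2 * m + 1) = P (2 * m) + (-1) ^ (2 * m) * cc α (2 * m) := hsucc _
      have e2 : ((-1 : ℝ)) ^ (2 * m) = 1 := by rw [pow_mul]; norm_num
      have : P (2 * m) + cc α (2 * m) ≤ 1 := by rw [e, e2] at this; linarith
      have hpos := cc_pos hα0 (2 * m)
      have : P (2 * m) ≤ 1 := by linarith
      simpa [two_mul] using this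
    exact ⟨by simpa [two_mul] using h1, h2⟩
  · subst hm
    have h2 := (key m).2
    have h1 : 0 ≤ P (2 * m + 1) := by
      have := (key m).1
      have e : P (2 * m + 1) = P (2 * m) + (-1) ^ (2 * m) * cc α (2 * m) := hsucc _
      have e2 : ((-1 : ℝ)) ^ (2 * m) = 1 := by rw [pow_mul]; norm_num
      have hpos := cc_pos hα0 (2 * m)
      rw [e, e2]; linarith
    exact ⟨h1, h2⟩

lemma cc_hasSum_diff (hα0 : 0 < α) (hα1 : α < 1) :
    HasSum (fun j => cc α j - cc α (j + 1)) 1 := by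
  rw [hasSum_iff_tendsto_nat_of_nonneg (fun j => by linarith [cc_succ_le hα0 hα1 j])]
  have : ∀ n : ℕ, ∑ i ∈ range n, (cc α i - cc α (i + 1)) = cc α 0 - cc α n :=
    fun n => Finset.sum_range_sub' (cc α) n
  simp_rw [this, cc_zero hα0]
  have := (cc_tendsto_zero hα0 hα1).const_sub 1
  simpa using this





section PowerSeries

lemma cc_summable (hα0 : 0 < α) (hα1 : α < 1) {y : ℝ} (hy : |y| < 1) :
    Summable (fun n => cc α n * y ^ n) := by
  apply Summable.of_norm_bounded (summable_geometric_of_lt_one (abs_nonneg y) hy)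
  intro n
  rw [norm_mul, norm_pow, Real.norm_eq_abs, Real.norm_eq_abs, abs_of_pos (cc_pos hα0 n)]
  have := cc_le_one hα0 hα1 n
  have h2 : |y| ^ n ≤ 1 ^ n := pow_le_pow_left₀ (abs_nonneg y) hy.le n
  nlinarith [pow_nonneg (abs_nonneg y) n, cc_pos hα0 n]

/-- summability of the derivative-dominating series -/
lemma deriv_dom_summable (hα0 : 0 < α) (hα1 : α < 1) {b : ℝ} (hb0 : 0 < b) (hb : b < 1) :
    Summable (fun n : ℕ => cc α n * ((n : ℝ) * b ^ (n - 1))) := by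
  have hs : Summable (fun n : ℕ => (n : ℝ) * b ^ (n - 1)) := by
    rw [← summable_nat_add_iff 1]
    have : ∀ n : ℕ, ((n + 1 : ℕ) : ℝ) * b ^ (n + 1 - 1) = (n : ℝ) * b ^ n + b ^ n := by
      intro n; push_cast; simp [add_mul]
    rw [summable_congr this]
    have hb' : ‖b‖ < 1 := by rwa [Real.norm_eq_abs, abs_of_pos hb0]
    have h1 := summable_pow_mul_geometric_of_norm_lt_one (R := ℝ) 1 hb'
    simp only [pow_one] at h1
    exact h1.add (summable_geometric_of_lt_one hb0.le hb)
  apply Summable.of_norm_bounded hs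
  intro n
  rw [Real.norm_eq_abs, abs_mul, abs_of_pos (cc_pos hα0 n), abs_mul, Nat.abs_cast,
    abs_pow, abs_of_pos hb0]
  have h1 := cc_le_one hα0 hα1 n
  have h2 : (0:ℝ) ≤ (n : ℝ) * b ^ (n-1) := by positivity
  nlinarith [cc_pos hα0 n]

lemma cc_pseries_eq (hα0 : 0 < α) (hα1 : α < 1) {s : ℝ} (hs0 : 0 ≤ s) (hs1 : s < 1) :
    ∑' n, cc α n * (-s) ^ n = (1 + s) ^ (-α) := by
  set b : ℝ := (1 + s) / 2 with hbdef
  have hb0 : 0 < b := by positivity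
  have hbs : s < b := by simp only [hbdef]; linarith
  have hb1 : b < 1 := by simp only [hbdef]; linarith
  set t : Set ℝ := Set.Ioo (-b) b with ht
  have htO : IsOpen t := isOpen_Ioo
  have htP : IsPreconnected t := (convex_Ioo _ _).isPreconnected
  have hmem0 : (0 : ℝ) ∈ t := by
    constructor
    · simp only [ht, neg_lt, neg_zero]; linarith
    · linarith
  set P : ℝ → ℝ := fun z => ∑' n, cc α n * z ^ n with hPdef
  set D : ℝ → ℝ := fun z => ∑' n, cc α n * ((n : ℝ) * z ^ (n - 1)) with hDdef
  have hu := deriv_dom_summable hα0 hα1 hb0 hb1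
  have habs : ∀ y ∈ t, |y| < b := by
    rintro y ⟨h1, h2⟩; rw [abs_lt]; exact ⟨h1, h2⟩
  -- derivative of the power series
  have hderiv : ∀ y ∈ t, HasDerivAt P (D y) y := by
    intro y hy
    apply hasDerivAt_tsum_of_isPreconnected hu htO htP
      (fun n z _ => (hasDerivAt_pow n z).const_mul (cc α n)) _ hmem0
      (cc_summable hα0 hα1 (by rw [abs_zero]; linarith)) hy
    intro n z hz
    rw [Real.norm_eq_abs, abs_mul, abs_of_pos (cc_pos hα0 n), abs_mul, Nat.abs_cast, abs_pow]
    apply mul_le_mul_of_nonneg_left _ (cc_pos hα0 n).le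
    apply mul_le_mul_of_nonneg_left _ (Nat.cast_nonneg n)
    exact pow_le_pow_left₀ (abs_nonneg z) (habs z hz).le _
  -- functional equation (1 - y) * D y = α * P y on t
  have hfeq : ∀ y ∈ t, (1 - y) * D y = α * P y := by
    intro y hy
    have hyb := habs y hy
    have hy1 : |y| < 1 := lt_trans hyb hb1
    set f : ℕ → ℝ := fun n => cc α n * ((n : ℝ) * y ^ (n - 1)) with hfdef
    have hfs : Summable f := by
      apply Summable.of_norm_bounded hu
      intro n
      rw [Real.norm_eq_abs, abs_mul, abs_of_pos (cc_pos hα0 n), abs_mul, Nat.abs_cast, abs_pow]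
      apply mul_le_mul_of_nonneg_left _ (cc_pos hα0 n).le
      apply mul_le_mul_of_nonneg_left _ (Nat.cast_nonneg n)
      exact pow_le_pow_left₀ (abs_nonneg y) hyb.le _
    have hfD : HasSum f (D y) := hfs.hasSum
    have hf0 : f 0 = 0 := by simp [hfdef]
    have hshift : HasSum (fun n => f (n + 1)) (D y) := by
      have h := (hasSum_nat_add_iff' 1).mpr hfD
      simpa [hf0] using h
    have hterm : ∀ n : ℕ, f (n + 1) = cc α n * (n : ℝ) * y ^ n + α * (cc α n * y ^ n) := by
      intro n
      have h := cc_succ' hα0 n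
      simp only [hfdef]
      have he : (n + 1 : ℕ) - 1 = n := rfl
      rw [he]
      push_cast
      linear_combination (y ^ n) * h
    have h1 : HasSum (fun n => cc α n * (n : ℝ) * y ^ n) (y * D y) := by
      apply (hfD.mul_left y).congr_fun
      intro n
      cases n with
      | zero => simp [hfdef]
      | succ m =>
        simp only [hfdef]
        have he : (m + 1 : ℕ) - 1 = m := rfl
        rw [he]
        push_cast
        ring
    have h2 : HasSum (fun n => α * (cc α n * y ^ n)) (α * P y) :=
      (cc_summable hα0 hα1 hy1).hasSum.mul_left α
    have h3 : HasSum (fun n => f (n + 1)) (y * D y + α * P y) := by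
      rw [show (fun n => f (n + 1)) = fun n => cc α n * (n : ℝ) * y ^ n + α * (cc α n * y ^ n)
        from funext hterm]
      exact h1.add h2
    have := hshift.unique h3
    linarith
  -- F := (1-y)^α * P y is constant on t
  set F : ℝ → ℝ := fun z => (1 - z) ^ α * P z with hFdef
  have hFderiv : ∀ y ∈ t, HasDerivAt F 0 y := by
    intro y hy
    have hyb := habs y hy
    have hy1 : y < 1 := lt_of_lt_of_le (lt_of_abs_lt hyb) hb1.le
    have hpos : 0 < 1 - y := by linarith
    have hout : HasDerivAt (fun z : ℝ => (1 - z) ^ α) (α * (1 - y) ^ (α - 1) * (-1)) y := by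
      have h1 : HasDerivAt (fun x : ℝ => x ^ α) (α * (1 - y) ^ (α - 1)) (1 - y) :=
        Real.hasDerivAt_rpow_const (Or.inl hpos.ne')
      have h2 : HasDerivAt (fun z : ℝ => 1 - z) (-1) y := by
        simpa using (hasDerivAt_id y).const_sub 1
      exact h1.comp y h2
    have hprod := hout.mul (hderiv y hy)
    have heq : α * (1 - y) ^ (α - 1) * (-1) * P y + (1 - y) ^ α * D y = 0 := by
      have hr : (1 - y) ^ α = (1 - y) ^ (α - 1) * (1 - y) := by
        rw [← Real.rpow_add_one hpos.ne' (α - 1)]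
        norm_num
      rw [hr]
      have := hfeq y hy
      linear_combination (1 - y) ^ (α - 1) * this
    rwa [heq] at hprod
  -- constancy on [-s, 0]
  have hsub : Set.Icc (-s) 0 ⊆ t := by
    intro z hz
    constructor
    · have h1 := hz.1
      show -b < z
      linarith
    · have h2 := hz.2
      show z < b
      linarith
  have hconst := constant_of_has_deriv_right_zero
    (f := F) (a := -s) (b := 0)
    (fun z hz => (hFderiv z (hsub hz)).continuousAt.continuousWithinAt)
    (fun z hz => (hFderiv z (hsub (Set.Ico_subset_Icc_self hz))).hasDerivWithinAt)
  have hF0 : F 0 = F (-s) := hconst 0 ⟨by linarith, le_refl 0⟩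
  have hP0 : P 0 = 1 := by
    simp only [hPdef]
    rw [tsum_eq_single 0 (fun n hn => by simp [zero_pow hn])]
    simp [cc_zero hα0]
  have hF0' : F 0 = 1 := by
    simp only [hFdef, hP0]
    norm_num
  have hFs : (1 + s) ^ α * P (-s) = 1 := by
    have : F (-s) = (1 + s) ^ α * P (-s) := by simp only [hFdef]; norm_num
    rw [← this, ← hF0, hF0']
  have hpos : (0:ℝ) < (1 + s) ^ α := Real.rpow_pos_of_pos (by linarith) α
  rw [Real.rpow_neg (by linarith : (0:ℝ) ≤ 1 + s)]
  rw [show (∑' n, cc α n * (-s) ^ n) = P (-s) from rfl]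
  field_simp at hFs ⊢
  linarith [hFs]

end PowerSeries




lemma cc_alt_tendsto (hα0 : 0 < α) (hα1 : α < 1) :
    Tendsto (fun n => ∑ j ∈ range n, (-1 : ℝ) ^ j * cc α j) atTop (𝓝 ((2:ℝ) ^ (-α))) := by
  obtain ⟨l, hl⟩ := (cc_antitone hα0 hα1).tendsto_alternating_series_of_tendsto_zero
    (cc_tendsto_zero hα0 hα1)
  have habel := Real.tendsto_tsum_powerSeries_nhdsWithin_lt hl
  have hcongr : ∀ᶠ s in 𝓝[<] (1:ℝ),
      (∑' n, ((-1:ℝ) ^ n * cc α n) * s ^ n) = (1 + s) ^ (-α) := by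
    filter_upwards [Ioo_mem_nhdsLT_of_mem (show (1:ℝ) ∈ Set.Ioc 0 1 by constructor <;> norm_num)]
      with s hs
    have h := cc_pseries_eq hα0 hα1 hs.1.le hs.2
    rw [← h]
    congr 1
    funext n
    rw [neg_pow]
    ring
  have h2 : Tendsto (fun s : ℝ => (1 + s) ^ (-α)) (𝓝[<] (1:ℝ)) (𝓝 ((2:ℝ) ^ (-α))) := by
    have hb : Tendsto (fun s : ℝ => 1 + s) (𝓝[<] (1:ℝ)) (𝓝 2) := by
      have hcont : Tendsto (fun s : ℝ => 1 + s) (𝓝 (1:ℝ)) (𝓝 (1 + 1)) :=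
        (continuous_const.add continuous_id).tendsto (1:ℝ)
      have := hcont.mono_left (nhdsWithin_le_nhds (s := Set.Iio (1:ℝ)))
      norm_num at this
      exact this
    exact (Real.continuousAt_rpow_const 2 (-α) (Or.inl two_ne_zero)).tendsto.comp hb
  have hEE : (fun s : ℝ => ∑' n, ((-1:ℝ) ^ n * cc α n) * s ^ n) =ᶠ[𝓝[<] (1:ℝ)]
      (fun s : ℝ => (1 + s) ^ (-α)) := hcongr
  have h3 : Tendsto (fun s : ℝ => ∑' n, ((-1:ℝ) ^ n * cc α n) * s ^ n)
      (𝓝[<] (1:ℝ)) (𝓝 ((2:ℝ) ^ (-α))) := h2.congr' hEE.symm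
  have : l = (2:ℝ) ^ (-α) := tendsto_nhds_unique habel h3
  rwa [this] at hl

lemma cc_hasSum_alt_diff (hα0 : 0 < α) (hα1 : α < 1) :
    HasSum (fun j => (-1:ℝ) ^ j * (cc α j - cc α (j + 1))) (2 * (2:ℝ) ^ (-α) - 1) := by
  have hsum : Summable (fun j => (-1:ℝ) ^ j * (cc α j - cc α (j + 1))) := by
    apply Summable.of_norm_bounded (cc_hasSum_diff hα0 hα1).summable
    intro j
    rw [Real.norm_eq_abs, abs_mul, abs_pow, abs_neg, abs_one, one_pow, one_mul,
      abs_of_nonneg (by linarith [cc_succ_le hα0 hα1 j])]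
  have hpart : ∀ n : ℕ, ∑ j ∈ range n, (-1:ℝ) ^ j * (cc α j - cc α (j + 1)) =
      (∑ j ∈ range n, (-1:ℝ) ^ j * cc α j) + (∑ j ∈ range (n+1), (-1:ℝ) ^ j * cc α j) - 1 := by
    intro n
    induction n with
    | zero => simp [cc_zero hα0]
    | succ n ih =>
      rw [Finset.sum_range_succ, ih, Finset.sum_range_succ (n := n + 1),
        Finset.sum_range_succ (n := n)]
      ring
  have htend := (hsum.hasSum).tendsto_sum_nat
  have halt := cc_alt_tendsto hα0 hα1
  have halt' : Tendsto (fun n => ∑ j ∈ range (n+1), (-1:ℝ) ^ j * cc α j) atTop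
      (𝓝 ((2:ℝ) ^ (-α))) := halt.comp (tendsto_add_atTop_nat 1)
  have h2 : Tendsto (fun n => ∑ j ∈ range n, (-1:ℝ) ^ j * (cc α j - cc α (j + 1))) atTop
      (𝓝 (2 * (2:ℝ) ^ (-α) - 1)) := by
    have := (halt.add halt').sub_const 1
    apply Tendsto.congr' _ (by convert this using 2; ring)
    filter_upwards with n
    rw [hpart n]
  have heq := tendsto_nhds_unique htend h2
  exact heq ▸ hsum.hasSum

lemma cc_hasSum_even (hα0 : 0 < α) (hα1 : α < 1) :
    HasSum (fun j => if Even j then cc α j - cc α (j + 1) else 0) ((2:ℝ) ^ (-α)) := by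
  have h1 := cc_hasSum_diff hα0 hα1
  have h2 := cc_hasSum_alt_diff hα0 hα1
  have h3 := (h1.add h2).div_const 2
  have he : (fun j => if Even j then cc α j - cc α (j + 1) else 0) =
      fun j => ((cc α j - cc α (j + 1)) + (-1:ℝ) ^ j * (cc α j - cc α (j + 1))) / 2 := by
    funext j
    rcases Nat.even_or_odd j with hj | hj
    · rw [if_pos hj, hj.neg_one_pow]; ring
    · rw [if_neg (Nat.not_even_iff_odd.mpr hj), hj.neg_one_pow]; ring
  rw [he]
  rw [show (2:ℝ) ^ (-α) = (1 + (2 * 2 ^ (-α) - 1)) / 2 by ring]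
  exact h3
 
lemma cc_hasSum_odd (hα0 : 0 < α) (hα1 : α < 1) :
    HasSum (fun j => if Even j then 0 else cc α j - cc α (j + 1)) (1 - (2:ℝ) ^ (-α)) := by
  have h1 := cc_hasSum_diff hα0 hα1
  have h2 := cc_hasSum_even hα0 hα1
  have h3 := h1.sub h2
  have he : (fun j => if Even j then 0 else cc α j - cc α (j + 1)) =
      fun j => (cc α j - cc α (j + 1)) - (if Even j then cc α j - cc α (j + 1) else 0) := by
    funext j
    by_cases hj : Even j <;> simp [hj]
  rw [he]
  exact h3





lemma tendsto_parity {u : ℕ → ℝ} {l : ℝ}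
    (h1 : Tendsto (fun N => u (2 * N + 1)) atTop (𝓝 l))
    (h2 : Tendsto (fun N => u (2 * N + 2)) atTop (𝓝 l)) :
    Tendsto u atTop (𝓝 l) := by
  rw [Metric.tendsto_atTop] at h1 h2 ⊢
  intro ε hε
  obtain ⟨N1, hN1⟩ := h1 ε hε
  obtain ⟨N2, hN2⟩ := h2 ε hε
  refine ⟨2 * (max N1 N2) + 2, fun k hk => ?_⟩
  rcases Nat.even_or_odd k with ⟨m, hm⟩ | ⟨m, hm⟩
  · have hm1 : 1 ≤ m := by omega
    have hk2 : k = 2 * (m - 1) + 2 := by omega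
    rw [hk2]
    exact hN2 (m - 1) (by omega)
  · have hk2 : k = 2 * m + 1 := by omega
    rw [hk2]
    exact hN1 m (by omega)

lemma bdd_of_tendsto {u : ℕ → ℝ} {l : ℝ} (h : Tendsto u atTop (𝓝 l)) :
    ∃ C, ∀ n, |u n| ≤ C := by
  have habs : Tendsto (fun n => |u n|) atTop (𝓝 |l|) := h.abs
  obtain ⟨C, hC⟩ := habs.bddAbove_range
  exact ⟨C, fun n => hC (Set.mem_range_self n)⟩

lemma bdd_of_parity {u : ℕ → ℝ} {l1 l2 : ℝ}
    (h1 : Tendsto (fun N => u (2 * N + 1)) atTop (𝓝 l1))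
    (h2 : Tendsto (fun N => u (2 * N + 2)) atTop (𝓝 l2)) :
    ∃ C, 0 ≤ C ∧ ∀ n, |u n| ≤ C := by
  obtain ⟨C1, hC1⟩ := bdd_of_tendsto h1
  obtain ⟨C2, hC2⟩ := bdd_of_tendsto h2
  refine ⟨max (max C1 C2) |u 0|, le_trans (abs_nonneg _) (le_max_right _ _), fun n => ?_⟩
  rcases Nat.even_or_odd n with ⟨m, hm⟩ | ⟨m, hm⟩
  · rcases Nat.eq_zero_or_pos m with hm0 | hm0
    · have : n = 0 := by omega
      rw [this]; exact le_max_right _ _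
    · have : n = 2 * (m - 1) + 2 := by omega
      rw [this]
      exact le_trans (hC2 (m - 1)) (le_trans (le_max_right C1 C2) (le_max_left _ _))
  · have : n = 2 * m + 1 := by omega
    rw [this]
    exact le_trans (hC1 m) (le_trans (le_max_left C1 C2) (le_max_left _ _))


lemma key {α h : ℝ} (hα0 : 0 < α) (hα1 : α < 1) (hh : 0 < h)
    (U : ℕ → ℝ) (hU1 : ∀ j : ℕ, U (j + 1) = Real.Gamma α * cc α j)
    (g z : ℕ → ℝ)
    (hz : ∀ n : ℕ, 1 ≤ n → z n = z 0 + (h ^ α / Real.Gamma α) *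
      ∑ k ∈ range n, g k * U (n - k))
    (p q z₁ z₂ : ℝ)
    (hgodd : Tendsto (fun N => g (2 * N + 1)) atTop (𝓝 p))
    (hgeven : Tendsto (fun N => g (2 * N + 2)) atTop (𝓝 q))
    (hzodd : Tendsto (fun N => z (2 * N + 1)) atTop (𝓝 z₁))
    (hzeven : Tendsto (fun N => z (2 * N + 2)) atTop (𝓝 z₂)) :
    z₂ - z₁ = (h / 2) ^ α * (p - q) ∧ p + q = 0 := by
  have hG : 0 < Real.Gamma α := Real.Gamma_pos_of_pos hα0
  set Γα := Real.Gamma α with hΓα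
  set cgh : ℝ := h ^ α / Γα with hcghdef
  have hcgh : 0 < cgh := div_pos (Real.rpow_pos_of_pos hh α) hG
  set A : ℕ → ℝ := fun n => ∑ k ∈ range n, g k * U (n - k) with hAdef
  -- reflected form of A
  have hArefl : ∀ n : ℕ, A n = Γα * ∑ j ∈ range n, g (n - 1 - j) * cc α j := by
    intro n
    have hr := Finset.sum_range_reflect (fun k => g k * U (n - k)) n
    rw [hAdef]
    simp only []
    rw [← hr, Finset.mul_sum]
    apply Finset.sum_congr rfl
    intro j hj
    have hjn : j < n := Finset.mem_range.mp hj
    have h1 : n - (n - 1 - j) = j + 1 := by omega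
    rw [h1, hU1 j]
    ring
  set dd : ℕ → ℝ := fun j => cc α j - cc α (j + 1) with hdddef
  have hdd0 : ∀ j, 0 ≤ dd j := fun j => by
    simp only [hdddef]; linarith [cc_succ_le hα0 hα1 j]
  have hdd1 : ∀ j, dd j ≤ 1 := fun j => by
    simp only [hdddef]
    have := cc_le_one hα0 hα1 j
    have := cc_pos hα0 (j + 1)
    linarith
  -- difference formula
  have hBdiff : ∀ n : ℕ, A (n + 1) - A n =
      Γα * g n - Γα * ∑ j ∈ range n, g (n - 1 - j) * dd j := by
    intro n
    have hs : A (n + 1) = (∑ k ∈ range n, g k * U (n + 1 - k)) + g n * U 1 := by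
      rw [hAdef]
      simp only []
      rw [Finset.sum_range_succ]
      have he : n + 1 - n = 1 := by omega
      rw [he]
    have hr := Finset.sum_range_reflect (fun k => g k * U (n + 1 - k)) n
    have hs2 : ∑ k ∈ range n, g k * U (n + 1 - k) =
        Γα * ∑ j ∈ range n, g (n - 1 - j) * cc α (j + 1) := by
      rw [← hr, Finset.mul_sum]
      apply Finset.sum_congr rfl
      intro j hj
      have hjn : j < n := Finset.mem_range.mp hj
      have h1 : n + 1 - (n - 1 - j) = j + 2 := by omega
      rw [h1, hU1 (j + 1)]
      ring
    have hU1' : U 1 = Γα := by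
      have := hU1 0
      rw [this, cc_zero hα0, mul_one]
    rw [hs, hs2, hU1', hArefl n]
    have hsum : (∑ j ∈ range n, g (n - 1 - j) * cc α (j + 1))
        - ∑ j ∈ range n, g (n - 1 - j) * cc α j
        = -(∑ j ∈ range n, g (n - 1 - j) * dd j) := by
      rw [← Finset.sum_sub_distrib, ← Finset.sum_neg_distrib]
      apply Finset.sum_congr rfl
      intro j hj
      simp only [hdddef]
      ring
    linear_combination Γα * hsum
  -- bounds
  obtain ⟨Cg, hCg0, hCg⟩ := bdd_of_parity hgodd hgeven
  obtain ⟨Cz, hCz0, hCz⟩ := bdd_of_parity hzodd hzeven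
  have hAbound : ∀ n : ℕ, 1 ≤ n → |A n| ≤ 2 * Cz / cgh := by
    intro n hn
    have h1 := hz n hn
    have h2 : A n = (z n - z 0) / cgh := by
      rw [hcghdef] at *
      field_simp at h1 ⊢
      linarith [h1]
    rw [h2, abs_div, abs_of_pos hcgh]
    have h3 : |z n - z 0| ≤ 2 * Cz := by
      calc |z n - z 0| = |z n + -(z 0)| := by rw [sub_eq_add_neg]
      _ ≤ |z n| + |-(z 0)| := abs_add_le _ _
      _ = |z n| + |z 0| := by rw [abs_neg]
      _ ≤ 2 * Cz := by have := hCz n; have := hCz 0; linarith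
    exact (div_le_div_iff_of_pos_right hcgh).mpr h3
  -- ==================== Part (iii) : p + q = 0 ====================
  set m : ℝ := p + q with hmdef
  set r : ℝ := (q - p) / 2 with hrdef
  set w : ℕ → ℝ := fun k => (-1 : ℝ) ^ k * (g k - m / 2) with hwdef
  have hw : Tendsto w atTop (𝓝 r) := by
    apply tendsto_parity
    · have h1 : Tendsto (fun N => -(g (2 * N + 1) - m / 2)) atTop (𝓝 (-(p - m / 2))) :=
        (hgodd.sub_const (m / 2)).neg
      have he : -(p - m / 2) = r := by rw [hrdef, hmdef]; ring
      rw [← he]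
      apply h1.congr
      intro N
      have hp1 : ((-1 : ℝ)) ^ (2 * N + 1) = -1 := by
        rw [pow_succ, pow_mul]; norm_num
      simp only [hwdef, hp1]; ring
    · have h1 : Tendsto (fun N => g (2 * N + 2) - m / 2) atTop (𝓝 (q - m / 2)) :=
        hgeven.sub_const (m / 2)
      have he : q - m / 2 = r := by rw [hrdef, hmdef]; ring
      rw [← he]
      apply h1.congr
      intro N
      have hp1 : ((-1 : ℝ)) ^ (2 * N + 2) = 1 := by
        rw [pow_add, pow_mul]; norm_num
      simp only [hwdef, hp1]; ring
  set εs : ℕ → ℝ := fun k => w k - r with hεdef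
  have hεto : Tendsto εs atTop (𝓝 0) := by
    have := hw.sub_const r
    simpa [hεdef] using this
  set Eb : ℝ := Cg + |m| / 2 + |r| with hEbdef
  have hεbdd : ∀ k, |εs k| ≤ Eb := by
    intro k
    have h1 : |w k| ≤ Cg + |m| / 2 := by
      simp only [hwdef]
      rw [abs_mul, abs_pow, abs_neg, abs_one, one_pow, one_mul]
      calc |g k - m / 2| = |g k + -(m / 2)| := by rw [sub_eq_add_neg]
      _ ≤ |g k| + |-(m / 2)| := abs_add_le _ _
      _ = |g k| + |m| / 2 := by rw [abs_neg, abs_div]; norm_num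
      _ ≤ Cg + |m| / 2 := by linarith [hCg k]
    calc |εs k| = |w k + -r| := by simp only [hεdef, sub_eq_add_neg]
    _ ≤ |w k| + |-r| := abs_add_le _ _
    _ ≤ Eb := by rw [abs_neg, hEbdef]; linarith
  have hgdecomp : ∀ k, g k = m / 2 + (-1 : ℝ) ^ k * (r + εs k) := by
    intro k
    have hsq : ((-1 : ℝ) ^ k) * ((-1 : ℝ) ^ k) = 1 := by
      rw [← mul_pow]; norm_num
    have h2 : r + εs k = w k := by simp only [hεdef]; ring
    have hsq2 : ((-1:ℝ)) ^ (k * 2) = 1 := by rw [mul_comm, pow_mul]; norm_num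
    rw [h2]
    simp only [hwdef]
    linear_combination (p / 2 + q / 2 - g k) * hsq2
  set SS : ℕ → ℝ := fun n => ∑ j ∈ range n, cc α j with hSSdef
  set PP : ℕ → ℝ := fun n => ∑ j ∈ range n, (-1:ℝ) ^ j * cc α j with hPPdef
  set E : ℕ → ℝ := fun n => ∑ j ∈ range n, (-1:ℝ) ^ j * εs (n - 1 - j) * cc α j with hEdef
  have hSS0 : ∀ n, 0 ≤ SS n :=
    fun n => Finset.sum_nonneg fun j _ => (cc_pos hα0 j).le
  have hSSmono : Monotone SS := by
    apply monotone_nat_of_le_succ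
    intro n
    simp only [hSSdef, Finset.sum_range_succ]
    linarith [cc_pos hα0 n]
  have hkey : ∀ n : ℕ, ∑ j ∈ range n, g (n - 1 - j) * cc α j
      = m / 2 * SS n + (-1:ℝ) ^ (n - 1) * (r * PP n + E n) := by
    intro n
    have hterm : ∀ j ∈ range n, g (n - 1 - j) * cc α j
        = m / 2 * cc α j + ((-1:ℝ)^(n-1) * (r * ((-1:ℝ)^j * cc α j))
          + (-1:ℝ)^(n-1) * ((-1:ℝ)^j * εs (n-1-j) * cc α j)) := by
      intro j hj
      have hjn : j < n := Finset.mem_range.mp hj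
      have hps : (-1:ℝ) ^ (n - 1 - j) = (-1:ℝ) ^ (n-1) * (-1:ℝ) ^ j := by
        have hsplit : (n - 1 - j) + j = n - 1 := by omega
        have h1 : (-1:ℝ) ^ ((n - 1 - j) + j) = (-1:ℝ)^(n-1-j) * (-1:ℝ)^j := pow_add _ _ _
        rw [hsplit] at h1
        have h2 : ((-1:ℝ)^j) * ((-1:ℝ)^j) = 1 := by rw [← mul_pow]; norm_num
        calc (-1:ℝ) ^ (n-1-j) = (-1:ℝ)^(n-1-j) * (((-1:ℝ)^j) * ((-1:ℝ)^j)) := by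
              rw [h2, mul_one]
        _ = ((-1:ℝ)^(n-1-j) * ((-1:ℝ)^j)) * ((-1:ℝ)^j) := by ring
        _ = (-1:ℝ)^(n-1) * (-1:ℝ)^j := by rw [← h1]
      rw [hgdecomp (n - 1 - j), hps]
      ring
    rw [Finset.sum_congr rfl hterm, Finset.sum_add_distrib, Finset.sum_add_distrib,
      ← Finset.mul_sum, ← Finset.mul_sum, ← Finset.mul_sum, ← Finset.mul_sum]
    simp only [hSSdef, hPPdef, hEdef]
    ring
  have hmain : ∀ n : ℕ, 1 ≤ n → |m| / 2 * SS n ≤ 2 * Cz / cgh / Γα + |r| + |E n| := by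
    intro n hn
    have h3 : m / 2 * SS n = A n / Γα - (-1:ℝ)^(n-1) * (r * PP n + E n) := by
      rw [hArefl n, hkey n]
      field_simp
      ring
    have hPPb : |PP n| ≤ 1 := by
      have hb := cc_alt_bounds hα0 hα1 n
      rw [abs_le]
      exact ⟨by linarith [hb.1], hb.2⟩
    have habs1 : |m / 2 * SS n| = |m| / 2 * SS n := by
      rw [abs_mul, abs_of_nonneg (hSS0 n), abs_div]
      norm_num
    rw [← habs1, h3]
    calc |A n / Γα - (-1:ℝ)^(n-1) * (r * PP n + E n)|
        = |A n / Γα + -((-1:ℝ)^(n-1) * (r * PP n + E n))| := by rw [sub_eq_add_neg]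
    _ ≤ |A n / Γα| + |-((-1:ℝ)^(n-1) * (r * PP n + E n))| := abs_add_le _ _
    _ = |A n| / Γα + |r * PP n + E n| := by
        rw [abs_neg, abs_div, abs_of_pos hG, abs_mul, abs_pow, abs_neg, abs_one,
          one_pow, one_mul]
    _ ≤ 2 * Cz / cgh / Γα + (|r| + |E n|) := by
        have ha : |A n| / Γα ≤ 2 * Cz / cgh / Γα :=
          (div_le_div_iff_of_pos_right hG).mpr (hAbound n hn)
        have hb : |r * PP n + E n| ≤ |r| + |E n| := by
          calc |r * PP n + E n| ≤ |r * PP n| + |E n| := abs_add_le _ _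
          _ ≤ |r| + |E n| := by
              rw [abs_mul]
              nlinarith [abs_nonneg r, abs_nonneg (PP n)]
        linarith
    _ = 2 * Cz / cgh / Γα + |r| + |E n| := by ring
  have hm0 : m = 0 := by
    by_contra hm
    have hδ : 0 < |m| / 4 := by positivity
    obtain ⟨M, hM⟩ : ∃ M, ∀ k, M ≤ k → |εs k| ≤ |m| / 4 := by
      obtain ⟨M, hM⟩ := (Metric.tendsto_atTop.mp hεto) (|m| / 4) hδ
      refine ⟨M, fun k hk => ?_⟩
      have := hM k hk
      rw [Real.dist_eq, sub_zero] at this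
      exact this.le
    set C1 : ℝ := 2 * Cz / cgh / Γα + |r| + Eb * M with hC1def
    have hfinal : ∀ n, M ≤ n → 1 ≤ n → |m| / 4 * SS n ≤ C1 := by
      intro n hMn h1n
      have hE : |E n| ≤ |m| / 4 * SS n + Eb * M := by
        simp only [hEdef]
        rw [Finset.range_eq_Ico,
          ← Finset.sum_Ico_consecutive _ (Nat.zero_le (n - M)) (Nat.sub_le n M)]
        have hs1 : |∑ j ∈ Finset.Ico 0 (n - M), (-1:ℝ)^j * εs (n-1-j) * cc α j|
            ≤ |m| / 4 * SS n := by
          calc |∑ j ∈ Finset.Ico 0 (n - M), (-1:ℝ)^j * εs (n-1-j) * cc α j|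
              ≤ ∑ j ∈ Finset.Ico 0 (n - M), |(-1:ℝ)^j * εs (n-1-j) * cc α j| :=
                Finset.abs_sum_le_sum_abs _ _
          _ ≤ ∑ j ∈ Finset.Ico 0 (n - M), |m| / 4 * cc α j := by
              apply Finset.sum_le_sum
              intro j hj
              have hjm : j < n - M := (Finset.mem_Ico.mp hj).2
              have hidx : M ≤ n - 1 - j := by omega
              rw [abs_mul, abs_mul, abs_pow, abs_neg, abs_one, one_pow, one_mul,
                abs_of_pos (cc_pos hα0 j)]
              exact mul_le_mul_of_nonneg_right (hM _ hidx) (cc_pos hα0 j).le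
          _ = |m| / 4 * ∑ j ∈ Finset.Ico 0 (n - M), cc α j := by rw [Finset.mul_sum]
          _ ≤ |m| / 4 * SS n := by
              apply mul_le_mul_of_nonneg_left _ (by positivity)
              rw [← Finset.range_eq_Ico]
              simp only [hSSdef]
              apply Finset.sum_le_sum_of_subset_of_nonneg
                (Finset.range_subset_range.mpr (Nat.sub_le n M))
              intro j _ _
              exact (cc_pos hα0 j).le
        have hs2 : |∑ j ∈ Finset.Ico (n - M) n, (-1:ℝ)^j * εs (n-1-j) * cc α j|
            ≤ Eb * M := by
          have hEb0 : 0 ≤ Eb := le_trans (abs_nonneg _) (hεbdd 0)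
          calc |∑ j ∈ Finset.Ico (n - M) n, (-1:ℝ)^j * εs (n-1-j) * cc α j|
              ≤ ∑ j ∈ Finset.Ico (n - M) n, |(-1:ℝ)^j * εs (n-1-j) * cc α j| :=
                Finset.abs_sum_le_sum_abs _ _
          _ ≤ ∑ j ∈ Finset.Ico (n - M) n, Eb := by
              apply Finset.sum_le_sum
              intro j hj
              rw [abs_mul, abs_mul, abs_pow, abs_neg, abs_one, one_pow, one_mul,
                abs_of_pos (cc_pos hα0 j)]
              calc |εs (n-1-j)| * cc α j ≤ Eb * 1 := by
                    apply mul_le_mul (hεbdd _) (cc_le_one hα0 hα1 j) (cc_pos hα0 j).le hEb0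
              _ = Eb := mul_one Eb
          _ = (Finset.Ico (n - M) n).card * Eb := by
              rw [Finset.sum_const, nsmul_eq_mul]
          _ ≤ Eb * M := by
              rw [Nat.card_Ico]
              have hcard : n - (n - M) ≤ M := by omega
              have : ((n - (n - M) : ℕ) : ℝ) ≤ (M : ℝ) := by exact_mod_cast hcard
              nlinarith [hEb0]
        calc |∑ j ∈ Finset.Ico 0 (n - M), (-1:ℝ)^j * εs (n-1-j) * cc α j
              + ∑ j ∈ Finset.Ico (n - M) n, (-1:ℝ)^j * εs (n-1-j) * cc α j|
            ≤ |∑ j ∈ Finset.Ico 0 (n - M), (-1:ℝ)^j * εs (n-1-j) * cc α j|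
              + |∑ j ∈ Finset.Ico (n - M) n, (-1:ℝ)^j * εs (n-1-j) * cc α j| := abs_add_le _ _
        _ ≤ |m| / 4 * SS n + Eb * M := add_le_add hs1 hs2
      have hmn := hmain n h1n
      rw [hC1def]
      linarith
    obtain ⟨n, hn1, hn2⟩ := ((cc_sum_atTop hα0 hα1 |>.eventually_ge_atTop
      ((4 * C1 + 4) / |m|)).and (eventually_ge_atTop (max M 1))).exists
    have hSn : (4 * C1 + 4) / |m| ≤ SS n := hn1
    have h1 := hfinal n (le_trans (le_max_left _ _) hn2) (le_trans (le_max_right _ _) hn2)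
    have habs : 0 < |m| := abs_pos.mpr hm
    have h2 : |m| / 4 * ((4 * C1 + 4) / |m|) ≤ |m| / 4 * SS n :=
      mul_le_mul_of_nonneg_left hSn (by positivity)
    have h3 : |m| / 4 * ((4 * C1 + 4) / |m|) = C1 + 1 := by
      field_simp
    linarith
  -- ==================== Part (i) : the difference equation ====================
  set L : ℝ := (2:ℝ) ^ (-α) with hLdef
  -- pointwise limits of g (2N - j)
  have hgptwise : ∀ j : ℕ, Tendsto (fun N => g (2 * N - j)) atTop
      (𝓝 (if Even j then q else p)) := by
    intro j
    rcases Nat.even_or_odd j with ⟨t, ht⟩ | ⟨t, ht⟩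
    · rw [if_pos ⟨t, ht⟩]
      have h1 : Tendsto (fun N => g (2 * (N - (t + 1)) + 2)) atTop (𝓝 q) :=
        hgeven.comp (tendsto_sub_atTop_nat (t + 1))
      apply h1.congr'
      filter_upwards [eventually_ge_atTop (t + 1)] with N hN
      congr 1
      omega
    · have hodd' : ¬ Even j := by
        rw [Nat.even_iff, Nat.odd_iff.mp ⟨t, ht⟩]
        norm_num
      rw [if_neg hodd']
      have h1 : Tendsto (fun N => g (2 * (N - (t + 1)) + 1)) atTop (𝓝 p) :=
        hgodd.comp (tendsto_sub_atTop_nat (t + 1))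
      apply h1.congr'
      filter_upwards [eventually_ge_atTop (t + 1)] with N hN
      congr 1
      omega
  -- dominated convergence
  set f : ℕ → ℕ → ℝ := fun N j => if j < 2 * N + 1 then g (2 * N - j) * dd j else 0
    with hfdef
  set glim : ℕ → ℝ := fun j => (if Even j then q else p) * dd j with hglimdef
  have hdct : Tendsto (fun N => ∑' j, f N j) atTop (𝓝 (∑' j, glim j)) := by
    apply tendsto_tsum_of_dominated_convergence (bound := fun j => Cg * dd j)
    · exact ((cc_hasSum_diff hα0 hα1).summable).mul_left Cg
    · intro j
      have h1 := (hgptwise j).mul_const (dd j)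
      apply h1.congr'
      filter_upwards [eventually_ge_atTop (j + 1)] with N hN
      have hj : j < 2 * N + 1 := by omega
      simp only [hfdef, if_pos hj]
    · filter_upwards with N
      intro j
      simp only [hfdef]
      by_cases hj : j < 2 * N + 1
      · rw [if_pos hj, Real.norm_eq_abs, abs_mul, abs_of_nonneg (hdd0 j)]
        exact mul_le_mul_of_nonneg_right (hCg _) (hdd0 j)
      · rw [if_neg hj]
        simp only [norm_zero]
        exact mul_nonneg hCg0 (hdd0 j)
  have htsum_fin : ∀ N, ∑' j, f N j = ∑ j ∈ range (2 * N + 1), g (2 * N - j) * dd j := by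
    intro N
    rw [tsum_eq_sum (s := range (2 * N + 1))
      (fun j hj => by
        have hj' : ¬ (j < 2 * N + 1) := by simpa using hj
        simp only [hfdef, if_neg hj'])]
    apply Finset.sum_congr rfl
    intro j hj
    simp only [hfdef, if_pos (Finset.mem_range.mp hj)]
  have hglimsum : HasSum glim (q * L + p * (1 - L)) := by
    have h1 := (cc_hasSum_even hα0 hα1).mul_left q
    have h2 := (cc_hasSum_odd hα0 hα1).mul_left p
    have h3 := h1.add h2
    have he : glim = fun j => q * (if Even j then cc α j - cc α (j + 1) else 0)
        + p * (if Even j then 0 else cc α j - cc α (j + 1)) := by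
      funext j
      simp only [hglimdef, hdddef]
      by_cases hj : Even j <;> simp [hj]
    rw [he, hLdef]
    exact h3
  have hdct2 : Tendsto (fun N => ∑ j ∈ range (2 * N + 1), g (2 * N - j) * dd j) atTop
      (𝓝 (q * L + p * (1 - L))) := by
    rw [← hglimsum.tsum_eq]
    apply hdct.congr
    intro N
    exact htsum_fin N
  -- limit of A (2N+2) - A (2N+1)
  have hBeq : ∀ N : ℕ, A (2 * N + 2) - A (2 * N + 1) =
      Γα * g (2 * N + 1) - Γα * ∑ j ∈ range (2 * N + 1), g (2 * N - j) * dd j := by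
    intro N
    have h1 := hBdiff (2 * N + 1)
    have h2 : ∑ j ∈ range (2 * N + 1), g (2 * N + 1 - 1 - j) * dd j
        = ∑ j ∈ range (2 * N + 1), g (2 * N - j) * dd j := by
      apply Finset.sum_congr rfl
      intro j hj
      congr 2
    rw [show 2 * N + 2 = (2 * N + 1) + 1 by ring, h1, h2]
  have hBlim : Tendsto (fun N => A (2 * N + 2) - A (2 * N + 1)) atTop
      (𝓝 (Γα * p - Γα * (q * L + p * (1 - L)))) := by
    have h1 := (hgodd.const_mul Γα).sub (hdct2.const_mul Γα)
    apply h1.congr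
    intro N
    rw [hBeq N]
  -- conclude
  have hzlim : Tendsto (fun N => z (2 * N + 2) - z (2 * N + 1)) atTop (𝓝 (z₂ - z₁)) :=
    hzeven.sub hzodd
  have hzeq : ∀ N : ℕ, z (2 * N + 2) - z (2 * N + 1)
      = cgh * (A (2 * N + 2) - A (2 * N + 1)) := by
    intro N
    rw [hz (2 * N + 2) (by omega), hz (2 * N + 1) (by omega)]
    ring
  have hzlim2 : Tendsto (fun N => z (2 * N + 2) - z (2 * N + 1)) atTop
      (𝓝 (cgh * (Γα * p - Γα * (q * L + p * (1 - L))))) := by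
    have h1 := hBlim.const_mul cgh
    apply h1.congr
    intro N
    rw [hzeq N]
  have hzval : z₂ - z₁ = cgh * (Γα * p - Γα * (q * L + p * (1 - L))) :=
    tendsto_nhds_unique hzlim hzlim2
  -- final algebra
  have hrw : cgh * (Γα * p - Γα * (q * L + p * (1 - L))) = (h ^ α * L) * (p - q) := by
    rw [hcghdef]
    field_simp
    ring
  have hhalf : (h / 2) ^ α = h ^ α * L := by
    rw [hLdef, Real.div_rpow hh.le (by norm_num : (0:ℝ) ≤ 2),
      Real.rpow_neg (by norm_num : (0:ℝ) ≤ 2)]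
    rw [div_eq_mul_inv]
  constructor
  · rw [hzval, hrw, hhalf]
  · exact hm0


end LoziAux

open LoziAux in
/-- The asymptotic period-2 points of the fractional difference Lozi map of order
`α` with time step `h` satisfy the period-2 system (i)–(iv). -/
theorem fractional_difference_lozi_period_two
    (α h a b : ℝ) (hα0 : 0 < α) (hα1 : α < 1) (hh : 0 < h)
    (U : ℕ → ℝ)
    (hU0 : U 0 = 0)
    (hU : ∀ n : ℕ, 1 ≤ n → U n = Real.Gamma (n + α - 1) / Real.Gamma n)
    (x y : ℕ → ℝ)
    (hrecx : ∀ n, 1 ≤ n → x n = x 0 -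
      ∑ k ∈ Finset.range n,
        (-(h ^ α / Real.Gamma α) * (1 - x k - a * |x k| + y k)) * U (n - k))
    (hrecy : ∀ n, 1 ≤ n → y n = y 0 -
      ∑ k ∈ Finset.range n,
        (-(h ^ α / Real.Gamma α) * (b * x k - y k)) * U (n - k))
    (x₁ y₁ x₂ y₂ : ℝ)
    (hodd : Tendsto (fun N => (x (2 * N + 1), y (2 * N + 1))) atTop (nhds (x₁, y₁)))
    (heven : Tendsto (fun N => (x (2 * N + 2), y (2 * N + 2))) atTop (nhds (x₂, y₂))) :
    (x₂ - x₁ = (h / 2) ^ α * ((x₂ - x₁) + a * (|x₂| - |x₁|) - (y₂ - y₁))) ∧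
    (y₂ - y₁ = (h / 2) ^ α * ((y₂ - y₁) - b * (x₂ - x₁))) ∧
    (2 - (x₂ + x₁) - a * (|x₂| + |x₁|) + (y₂ + y₁) = 0) ∧
    (b * (x₁ + x₂) - (y₁ + y₂) = 0) := by
  have hG : 0 < Real.Gamma α := Real.Gamma_pos_of_pos hα0
  -- the kernel in terms of the normalized coefficients
  have hU1 : ∀ j : ℕ, U (j + 1) = Real.Gamma α * cc α j := by
    intro j
    have h1 := hU (j + 1) (by omega)
    have hc1 : ((j + 1 : ℕ) : ℝ) + α - 1 = (j : ℝ) + α := by push_cast; ring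
    have hc2 : Real.Gamma ((j + 1 : ℕ) : ℝ) = (j.factorial : ℝ) := by
      have : ((j + 1 : ℕ) : ℝ) = (j : ℝ) + 1 := by push_cast; ring
      rw [this, Real.Gamma_nat_eq_factorial]
    rw [h1, hc1, hc2, cc]
    have hf : (j.factorial : ℝ) ≠ 0 := by positivity
    field_simp
  -- component convergence
  have hxodd : Tendsto (fun N => x (2 * N + 1)) atTop (𝓝 x₁) := by
    have := (Continuous.tendsto continuous_fst (x₁, y₁)).comp hodd
    exact this
  have hyodd : Tendsto (fun N => y (2 * N + 1)) atTop (𝓝 y₁) := by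
    have := (Continuous.tendsto continuous_snd (x₁, y₁)).comp hodd
    exact this
  have hxeven : Tendsto (fun N => x (2 * N + 2)) atTop (𝓝 x₂) := by
    have := (Continuous.tendsto continuous_fst (x₂, y₂)).comp heven
    exact this
  have hyeven : Tendsto (fun N => y (2 * N + 2)) atTop (𝓝 y₂) := by
    have := (Continuous.tendsto continuous_snd (x₂, y₂)).comp heven
    exact this
  -- rewrite the recurrences
  set gx : ℕ → ℝ := fun k => 1 - x k - a * |x k| + y k with hgxdef
  set gy : ℕ → ℝ := fun k => b * x k - y k with hgydef
  have hrecx' : ∀ n : ℕ, 1 ≤ n → x n = x 0 + (h ^ α / Real.Gamma α) *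
      ∑ k ∈ range n, gx k * U (n - k) := by
    intro n hn
    rw [hrecx n hn]
    have hs : ∑ k ∈ Finset.range n, (-(h ^ α / Real.Gamma α) * (1 - x k - a * |x k| + y k))
        * U (n - k) = -((h ^ α / Real.Gamma α) * ∑ k ∈ range n, gx k * U (n - k)) := by
      rw [Finset.mul_sum, ← Finset.sum_neg_distrib]
      apply Finset.sum_congr rfl
      intro k _
      simp only [hgxdef]
      ring
    rw [hs]
    ring
  have hrecy' : ∀ n : ℕ, 1 ≤ n → y n = y 0 + (h ^ α / Real.Gamma α) *
      ∑ k ∈ range n, gy k * U (n - k) := by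
    intro n hn
    rw [hrecy n hn]
    have hs : ∑ k ∈ Finset.range n, (-(h ^ α / Real.Gamma α) * (b * x k - y k))
        * U (n - k) = -((h ^ α / Real.Gamma α) * ∑ k ∈ range n, gy k * U (n - k)) := by
      rw [Finset.mul_sum, ← Finset.sum_neg_distrib]
      apply Finset.sum_congr rfl
      intro k _
      simp only [hgydef]
      ring
    rw [hs]
    ring
  -- limits of the nonlinearities
  have hgxodd : Tendsto (fun N => gx (2 * N + 1)) atTop (𝓝 (1 - x₁ - a * |x₁| + y₁)) := by
    simp only [hgxdef]
    exact ((tendsto_const_nhds.sub hxodd).sub (hxodd.abs.const_mul a)).add hyodd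
  have hgxeven : Tendsto (fun N => gx (2 * N + 2)) atTop (𝓝 (1 - x₂ - a * |x₂| + y₂)) := by
    simp only [hgxdef]
    exact ((tendsto_const_nhds.sub hxeven).sub (hxeven.abs.const_mul a)).add hyeven
  have hgyodd : Tendsto (fun N => gy (2 * N + 1)) atTop (𝓝 (b * x₁ - y₁)) := by
    simp only [hgydef]
    exact (hxodd.const_mul b).sub hyodd
  have hgyeven : Tendsto (fun N => gy (2 * N + 2)) atTop (𝓝 (b * x₂ - y₂)) := by
    simp only [hgydef]
    exact (hxeven.const_mul b).sub hyeven
  -- apply the key lemma to both coordinates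
  obtain ⟨hx1, hx2⟩ := key hα0 hα1 hh U hU1 gx x hrecx'
    (1 - x₁ - a * |x₁| + y₁) (1 - x₂ - a * |x₂| + y₂) x₁ x₂
    hgxodd hgxeven hxodd hxeven
  obtain ⟨hy1, hy2⟩ := key hα0 hα1 hh U hU1 gy y hrecy'
    (b * x₁ - y₁) (b * x₂ - y₂) y₁ y₂
    hgyodd hgyeven hyodd hyeven
  refine ⟨hx1.trans (by ring), hy1.trans (by ring), by linarith [hx2], by linarith [hy2]⟩
end

section
/- Let 0 < α < 1 and define the falling factorial kernel U_α(n) = Γ(n+α−1)/Γ(n) for n ≥ 1. Then: (i) U_α(n) > 0 for all n ≥ 1 and the sequence (U_α(n)) is strictly decreasing with lim_{n→∞} U_α(n) = 0; (ii) the partial sums ∑_{n=1}^N U_α(n) tend to +∞ as N → ∞; (iii) ∑_{n=1}^∞ |U_α(n+1) − U_α(n)| < ∞. In particular, U_α belongs to the kernel class 𝔻⁰(ℕ₁). -/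
open Filter Finset Real

/-- The falling factorial kernel `U_α(n) = Γ(n+α−1)/Γ(n)`, `0 < α < 1`, is positive
and strictly decreasing with limit `0`, has divergent partial sums, and has
absolutely summable first differences; hence it belongs to the class `𝔻⁰(ℕ₁)`. -/
theorem fallingFactorial_kernel_in_D0
    (α : ℝ) (hα0 : 0 < α) (hα1 : α < 1)
    (U : ℕ → ℝ)
    (hU : ∀ n : ℕ, 1 ≤ n → U n = Real.Gamma (n + α - 1) / Real.Gamma n) :
    (∀ n : ℕ, 1 ≤ n → 0 < U n) ∧
    (∀ n : ℕ, 1 ≤ n → U (n + 1) < U n) ∧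
    Tendsto U atTop (nhds 0) ∧
    Tendsto (fun N => ∑ n ∈ Finset.Icc 1 N, U n) atTop atTop ∧
    Summable (fun n : ℕ => |U (n + 2) - U (n + 1)|) := by
  -- Positivity
  have hpos : ∀ n : ℕ, 1 ≤ n → 0 < U n := by
    intro n hn
    have hn' : (1 : ℝ) ≤ (n : ℝ) := by exact_mod_cast hn
    rw [hU n hn]
    exact div_pos (Real.Gamma_pos_of_pos (by linarith)) (Real.Gamma_pos_of_pos (by linarith))
  -- The recurrence U (n+1) = U n * ((n + α - 1) / n)
  have hrec : ∀ n : ℕ, 1 ≤ n → U (n + 1) = U n * (((n : ℝ) + α - 1) / n) := by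
    intro n hn
    have hn' : (1 : ℝ) ≤ (n : ℝ) := by exact_mod_cast hn
    have hnne : (n : ℝ) ≠ 0 := by positivity
    have hxne : (n : ℝ) + α - 1 ≠ 0 := by nlinarith
    rw [hU (n + 1) (by omega), hU n hn]
    have h1 : ((n + 1 : ℕ) : ℝ) + α - 1 = ((n : ℝ) + α - 1) + 1 := by push_cast; ring
    have h2 : ((n + 1 : ℕ) : ℝ) = (n : ℝ) + 1 := by push_cast; ring
    rw [h1, h2, Real.Gamma_add_one hxne, Real.Gamma_add_one hnne]
    have hGn : Real.Gamma (n : ℝ) ≠ 0 :=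
      ne_of_gt (Real.Gamma_pos_of_pos (by linarith))
    field_simp
  -- Strict decrease
  have hdec : ∀ n : ℕ, 1 ≤ n → U (n + 1) < U n := by
    intro n hn
    have hn' : (1 : ℝ) ≤ (n : ℝ) := by exact_mod_cast hn
    have h1 : ((n : ℝ) + α - 1) / n < 1 := by
      rw [div_lt_one (by linarith)]
      linarith
    calc U (n + 1) = U n * (((n : ℝ) + α - 1) / n) := hrec n hn
      _ < U n * 1 := by
          exact mul_lt_mul_of_pos_left h1 (hpos n hn)
      _ = U n := mul_one _
  -- Difference formula
  have hdiffeq : ∀ n : ℕ, U (n + 1) - U (n + 2) = U (n + 1) * ((1 - α) / (n + 1)) := by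
    intro n
    have h := hrec (n + 1) (by omega)
    have h1 : ((n + 1 : ℕ) : ℝ) = (n : ℝ) + 1 := by push_cast; ring
    rw [h1] at h
    have hne : (n : ℝ) + 1 ≠ 0 := by positivity
    rw [h]
    field_simp
    ring
  have hanti : Antitone (fun n : ℕ => U (n + 1)) :=
    antitone_nat_of_succ_le fun n => (hdec (n + 1) (by omega)).le
  have hV0 : ∀ n : ℕ, 0 ≤ U (n + 1) := fun n => (hpos (n + 1) (by omega)).le
  -- Summability of differences (telescoping)
  have hSum : Summable (fun n : ℕ => U (n + 1) - U (n + 2)) := by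
    apply summable_of_sum_range_le (c := U 1)
    · intro n
      have := hdec (n + 1) (by omega)
      linarith
    · intro n
      have htel : ∑ i ∈ Finset.range n, (U (i + 1) - U (i + 2)) = U 1 - U (n + 1) := by
        have := Finset.sum_range_sub' (fun i => U (i + 1)) n
        simpa using this
      rw [htel]
      have := hV0 n
      linarith
  have hSumAbs : Summable (fun n : ℕ => |U (n + 2) - U (n + 1)|) := by
    apply hSum.congr
    intro n
    rw [abs_sub_comm, abs_of_nonneg (by have := hdec (n + 1) (by omega); linarith)]
  -- Summability of U(n+1)/(n+1)
  have hSumDiv : Summable (fun n : ℕ => U (n + 1) / ((n : ℝ) + 1)) := by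
    have h := hSum.mul_right (1 / (1 - α))
    apply h.congr
    intro n
    rw [hdiffeq n]
    have h1 : (1 : ℝ) - α ≠ 0 := by linarith
    field_simp
  -- The limit of U is 0
  have hbdd : BddBelow (Set.range fun n : ℕ => U (n + 1)) :=
    ⟨0, by rintro x ⟨n, rfl⟩; exact hV0 n⟩
  have htend : Tendsto (fun n : ℕ => U (n + 1)) atTop (nhds (⨅ n : ℕ, U (n + 1))) :=
    tendsto_atTop_ciInf hanti hbdd
  have hInf0 : (⨅ n : ℕ, U (n + 1)) = 0 := by
    have hge : 0 ≤ ⨅ n : ℕ, U (n + 1) := le_ciInf hV0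
    rcases lt_or_eq_of_le hge with hL | hL
    · exfalso
      set L := ⨅ n : ℕ, U (n + 1) with hLdef
      have hle : ∀ n : ℕ, L ≤ U (n + 1) := fun n => ciInf_le hbdd n
      have hs1 : Summable (fun n : ℕ => L / ((n : ℝ) + 1)) := by
        apply Summable.of_nonneg_of_le (fun n => by positivity) _ hSumDiv
        intro n
        have hpos' : (0 : ℝ) < (n : ℝ) + 1 := by positivity
        exact div_le_div_of_nonneg_right (hle n) hpos'.le
      have hs2 : Summable (fun n : ℕ => 1 / ((n : ℝ) + 1)) := by
        have := hs1.mul_left L⁻¹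
        apply this.congr
        intro n
        field_simp
      have hs3 : Summable (fun n : ℕ => 1 / (n : ℝ)) := by
        rw [← summable_nat_add_iff 1]
        apply hs2.congr
        intro n
        push_cast
        ring
      exact Real.not_summable_one_div_natCast hs3
    · exact hL.symm
  have hlim : Tendsto U atTop (nhds 0) := by
    rw [← Filter.tendsto_add_atTop_iff_nat 1]
    rw [← hInf0]
    exact htend
  -- Divergence of the partial sums
  -- Eventual monotonicity of n * U n
  set n0 : ℕ := max 1 ⌈1 / α⌉₊ with hn0def
  have hn0_1 : 1 ≤ n0 := le_max_left _ _
  have hn0α : 1 ≤ α * n0 := by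
    have h1 : (1 : ℝ) / α ≤ (⌈1 / α⌉₊ : ℕ) := Nat.le_ceil _
    have h2 : ((⌈1 / α⌉₊ : ℕ) : ℝ) ≤ (n0 : ℝ) := by
      exact_mod_cast le_max_right 1 ⌈1 / α⌉₊
    have : 1 / α ≤ (n0 : ℝ) := le_trans h1 h2
    rw [div_le_iff₀ hα0] at this
    linarith [this]
  have hstep : ∀ n : ℕ, n0 ≤ n → (n : ℝ) * U n ≤ ((n : ℝ) + 1) * U (n + 1) := by
    intro n hn
    have hn1 : 1 ≤ n := le_trans hn0_1 hn
    have hn' : (1 : ℝ) ≤ (n : ℝ) := by exact_mod_cast hn1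
    have hnn0 : ((n0 : ℕ) : ℝ) ≤ (n : ℝ) := by exact_mod_cast hn
    have hαn : 1 ≤ α * n := by nlinarith [hn0α]
    rw [hrec n hn1]
    rw [div_eq_mul_inv]
    have hUpos := hpos n hn1
    have hninv : (0 : ℝ) < ((n : ℝ))⁻¹ := by positivity
    -- goal: n * U n ≤ (n+1) * (U n * ((n + α - 1) * n⁻¹))
    have key : (n : ℝ) * n ≤ ((n : ℝ) + 1) * ((n : ℝ) + α - 1) := by nlinarith
    have hne : (n : ℝ) ≠ 0 := by linarith
    rw [show ((n : ℝ) + 1) * (U n * (((n : ℝ) + α - 1) * ((n : ℝ))⁻¹)) =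
        U n * (((n : ℝ) + 1) * (((n : ℝ) + α - 1)) * ((n : ℝ))⁻¹) by ring]
    rw [show (n : ℝ) * U n = U n * ((n : ℝ) * (n : ℝ) * ((n : ℝ))⁻¹) by
      field_simp]
    apply mul_le_mul_of_nonneg_left _ hUpos.le
    apply mul_le_mul_of_nonneg_right key hninv.le
  have hlb : ∀ n : ℕ, n0 ≤ n → ((n0 : ℕ) : ℝ) * U n0 ≤ (n : ℝ) * U n := by
    intro n hn
    induction n, hn using Nat.le_induction with
    | base => exact le_refl _
    | succ m hm ih =>
      calc ((n0 : ℕ) : ℝ) * U n0 ≤ (m : ℝ) * U m := ih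
        _ ≤ ((m : ℝ) + 1) * U (m + 1) := hstep m hm
        _ = ((m + 1 : ℕ) : ℝ) * U (m + 1) := by push_cast; ring
  have hc : (0 : ℝ) < ((n0 : ℕ) : ℝ) * U n0 := by
    have hu := hpos n0 hn0_1
    have hn' : (0 : ℝ) < ((n0 : ℕ) : ℝ) := by exact_mod_cast hn0_1
    positivity
  set c : ℝ := ((n0 : ℕ) : ℝ) * U n0 with hcdef
  -- Not summable
  have hNS : ¬ Summable (fun n : ℕ => U (n + 1)) := by
    intro hs
    have hs' : Summable (fun n : ℕ => U (n + n0 + 1)) := by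
      have := (summable_nat_add_iff (f := fun n => U (n + 1)) n0).mpr hs
      apply this.congr
      intro n
      ring_nf
    have hs1 : Summable (fun n : ℕ => c / ((n : ℝ) + n0 + 1)) := by
      apply Summable.of_nonneg_of_le (fun n => by positivity) _ hs'
      intro n
      have hge : n0 ≤ n + n0 + 1 := by omega
      have := hlb (n + n0 + 1) hge
      have hcast : ((n + n0 + 1 : ℕ) : ℝ) = (n : ℝ) + n0 + 1 := by push_cast; ring
      rw [hcast] at this
      have hpos' : (0 : ℝ) < (n : ℝ) + n0 + 1 := by positivity
      rw [div_le_iff₀ hpos']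
      calc c ≤ ((n : ℝ) + n0 + 1) * U (n + n0 + 1) := this
        _ = U (n + n0 + 1) * ((n : ℝ) + n0 + 1) := by ring
    have hs2 : Summable (fun n : ℕ => 1 / ((n : ℝ) + n0 + 1)) := by
      have := hs1.mul_left c⁻¹
      apply this.congr
      intro n
      field_simp
    have hs3 : Summable (fun n : ℕ => 1 / (n : ℝ)) := by
      rw [← summable_nat_add_iff (n0 + 1)]
      apply hs2.congr
      intro n
      push_cast
      ring
    exact Real.not_summable_one_div_natCast hs3
  have hdiv0 : Tendsto (fun N => ∑ i ∈ Finset.range N, U (i + 1)) atTop atTop :=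
    (not_summable_iff_tendsto_nat_atTop_of_nonneg hV0).mp hNS
  have hdiv : Tendsto (fun N => ∑ n ∈ Finset.Icc 1 N, U n) atTop atTop := by
    have heq : ∀ N : ℕ, ∑ n ∈ Finset.Icc 1 N, U n = ∑ i ∈ Finset.range N, U (i + 1) := by
      intro N
      rw [← Finset.Ico_add_one_right_eq_Icc, Finset.sum_Ico_eq_sum_range]
      simp [add_comm]
    simpa only [heq] using hdiv0
  exact ⟨hpos, hdec, hlim, hdiv, hSumAbs⟩
end
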